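/- arXiv:1809.06113 — 4 statements merged into one kernel-verified Lean document; each statement's English description precedes it below -/
import Mathlib

section
/- If a connected convex bipartite graph G has a Hamiltonian cycle, then G satisfies Property A. -/
open Finset SimpleGraph

/-- A convex bipartite graph with parts `X = Fin n` (with its natural order giving the
convex ordering) and `Y`: each `y : Y` has a consecutive neighborhood in `Fin n`. -/
structure ConvexBip (n : ℕ) (Y : Type*) where
  adj : Fin n → Y → Prop
  convex : ∀ (y : Y) (i₁ i₂ i₃ : Fin n),
    i₁ ≤ i₂ → i₂ ≤ i₃ → adj i₁ y → adj i₃ y → adj i₂ y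

namespace ConvexBip

variable {n : ℕ} {Y : Type*}

/-- The underlying bipartite simple graph on `Fin n ⊕ Y`. -/
def toGraph (G : ConvexBip n Y) : SimpleGraph (Fin n ⊕ Y) where
  Adj u v := (∃ i y, u = Sum.inl i ∧ v = Sum.inr y ∧ G.adj i y) ∨
             (∃ i y, u = Sum.inr y ∧ v = Sum.inl i ∧ G.adj i y)
  symm := by constructor; rintro u v (⟨i, y, rfl, rfl, h⟩ | ⟨i, y, rfl, rfl, h⟩)
             · exact Or.inr ⟨i, y, rfl, rfl, h⟩
             · exact Or.inl ⟨i, y, rfl, rfl, h⟩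
  loopless := by constructor; rintro u (⟨i, y, rfl, h, _⟩ | ⟨i, y, rfl, h, _⟩) <;> simp_all

/-- `N_G[X_{p..q}]`: the set of `y ∈ Y` whose whole neighborhood lies in `{x_p, …, x_q}`. -/
def NIn (G : ConvexBip n Y) (p q : Fin n) : Set Y :=
  {y | ∀ i, G.adj i y → p ≤ i ∧ i ≤ q}

/-- `N'_G[X_{p..q}]`: the set of `y ∈ Y` having at least two neighbors in `{x_p, …, x_q}`. -/
noncomputable def NIn' (G : ConvexBip n Y) (p q : Fin n) : Set Y :=
  {y | 2 ≤ {i : Fin n | G.adj i y ∧ p ≤ i ∧ i ≤ q}.ncard}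

/-- Degree of a vertex `y ∈ Y`. -/
noncomputable def degY (G : ConvexBip n Y) (y : Y) : ℕ := {i : Fin n | G.adj i y}.ncard

/-- Property A. -/
def PropertyA (G : ConvexBip n Y) : Prop :=
  (∀ p q : Fin n, p < q →
      ((p.val = 0 ∧ q.val < n - 1) ∨ (0 < p.val ∧ q.val = n - 1) ∨
        (0 < p.val ∧ q.val < n - 1)) →
      (G.NIn p q).ncard ≤ q.val - p.val) ∧
  (∀ (k : ℕ) (p q : Fin k → Fin n), 1 ≤ k → k ≤ n - 1 →
      (∀ i, p i < q i) → (∀ i i' : Fin k, i < i' → q i ≤ p i') →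
      (∑ i, ((q i).val - (p i).val)) ≤ (⋃ i, G.NIn' (p i) (q i)).ncard) ∧
  (∀ hn : 0 < n,
      (G.NIn ⟨0, hn⟩ ⟨n - 1, by omega⟩).ncard = n ∧
      (G.NIn' ⟨0, hn⟩ ⟨n - 1, by omega⟩).ncard = n)

/-- Property B. -/
def PropertyB (G : ConvexBip n Y) : Prop :=
  (∀ p q : Fin n, p < q →
      ((p.val = 0 ∧ q.val < n - 1) ∨ (0 < p.val ∧ q.val = n - 1) ∨
        (0 < p.val ∧ q.val < n - 1)) →
      (G.NIn p q).ncard ≤ q.val - p.val + 1) ∧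
  (∀ hn : 0 < n, (G.NIn ⟨0, hn⟩ ⟨n - 1, by omega⟩).ncard ≤ n + 1) ∧
  (∀ (k : ℕ) (p q : Fin k → Fin n), 1 ≤ k → k ≤ n - 1 →
      (∀ i, p i < q i) → (∀ i i' : Fin k, i < i' → q i ≤ p i') →
      (∑ i, ((q i).val - (p i).val)) ≤ (⋃ i, G.NIn' (p i) (q i)).ncard) ∧
  ({y : Y | G.degY y = 1}.ncard ≤ 2 ∧
    (2 ≤ n → ∀ (i : Fin n) (y y' : Y), y ≠ y' → G.degY y = 1 → G.degY y' = 1 →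
      G.adj i y → G.adj i y' → False))

/-- The interval `X_{p..q}` is maximal: `|N_G[X_{p..q}]| = q - p + 1` and no strictly
larger interval (within indices 2..n-1) has the analogous property. -/
def IsMaximalInt (G : ConvexBip n Y) (p q : Fin n) : Prop :=
  (G.NIn p q).ncard = q.val - p.val + 1 ∧
  ¬ ∃ p' q' : Fin n, 0 < p'.val ∧ q'.val < n - 1 ∧ p' ≤ p ∧ q ≤ q' ∧
      (p' < p ∨ q < q') ∧ (G.NIn p' q').ncard = q'.val - p'.val + 1

/-- Monotone convex bipartite graph. -/
def IsMonotone (G : ConvexBip n Y) : Prop :=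
  G.PropertyB ∧
  (¬ ∃ (y : Y) (k : Fin n), G.degY y = 1 ∧ G.adj k y ∧ 0 < k.val ∧ k.val < n - 1) ∧
  (¬ ∃ p q : Fin n, 0 < p.val ∧ p < q ∧ q.val < n - 1 ∧ G.IsMaximalInt p q)

/-- Non-monotone convex bipartite graph (satisfying Property B). -/
def IsNonMonotone (G : ConvexBip n Y) : Prop :=
  G.PropertyB ∧
  ((∃ (y : Y) (k : Fin n), G.degY y = 1 ∧ G.adj k y ∧ 0 < k.val ∧ k.val < n - 1) ∨
   (∃ p q : Fin n, 0 < p.val ∧ p < q ∧ q.val < n - 1 ∧ G.IsMaximalInt p q))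

/-- The interval graph obtained from `G`: keep all edges of `G` and make two distinct
`Y`-vertices adjacent whenever their neighborhoods in `X` intersect. -/
def intervalGraph (G : ConvexBip n Y) : SimpleGraph (Fin n ⊕ Y) where
  Adj u v := G.toGraph.Adj u v ∨
    (∃ y y', u = Sum.inr y ∧ v = Sum.inr y' ∧ y ≠ y' ∧ ∃ i, G.adj i y ∧ G.adj i y')
  symm := by
    constructor
    rintro u v (h | ⟨y, y', rfl, rfl, hne, i, h1, h2⟩)
    · exact Or.inl h.symm
    · exact Or.inr ⟨y', y, rfl, rfl, hne.symm, i, h2, h1⟩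
  loopless := by
    constructor
    rintro u (h | ⟨y, y', rfl, h, hne, _⟩)
    · exact G.toGraph.loopless.irrefl u h
    · exact hne (Sum.inr.inj h)

/-- `G` has a Hamiltonian cycle. -/
def HasHamCycle {V : Type*} [DecidableEq V] (H : SimpleGraph V) : Prop :=
  ∃ (v : V) (c : H.Walk v v), c.IsHamiltonianCycle

/-- `G` has a Hamiltonian path. -/
def HasHamPath {V : Type*} [DecidableEq V] (H : SimpleGraph V) : Prop :=
  ∃ (u v : V) (p : H.Walk u v), p.IsHamiltonian

/-- A maximal clique of a simple graph. -/
def IsMaxClique {V : Type*} (H : SimpleGraph V) (s : Set V) : Prop :=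
  H.IsClique s ∧ ∀ t : Set V, H.IsClique t → s ⊆ t → s = t

end ConvexBip



set_option linter.unusedSectionVars false

namespace HamAux


variable {V : Type*} [DecidableEq V] {H : SimpleGraph V}

/-- walking a predicate forward along darts -/
lemma walk_pred_support {u w : V} (p : H.Walk u w) (P : V → Prop)
    (h : ∀ d ∈ p.darts, P d.fst → P d.snd) (hu : P u) : ∀ x ∈ p.support, P x := by
  induction p with
  | nil => intro x hx; simp only [Walk.support_nil, List.mem_singleton] at hx; rwa [hx]
  | cons hadj q ih =>
      intro x hx
      simp only [Walk.support_cons, List.mem_cons] at hx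
      rcases hx with rfl | hx
      · exact hu
      · rw [Walk.darts_cons] at h
        refine ih (fun d hd => h d (List.mem_cons_of_mem _ hd)) ?_ x hx
        exact h _ List.mem_cons_self hu

/-- existence of a transition dart in a closed walk -/
lemma exists_transition_dart {v : V} (c : H.Walk v v) (P : V → Prop)
    {x₁ x₂ : V} (h₁ : x₁ ∈ c.support) (h₂ : x₂ ∈ c.support)
    (hP₁ : P x₁) (hP₂ : ¬ P x₂) :
    ∃ d ∈ c.darts, P d.fst ∧ ¬ P d.snd := by
  by_contra hcon
  push_neg at hcon
  have hfwd : ∀ d ∈ c.darts, P d.fst → P d.snd := fun d hd hf => hcon d hd hf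
  by_cases hv : P v
  · exact hP₂ (walk_pred_support c P hfwd hv x₂ h₂)
  · have hrev : ∀ d ∈ c.reverse.darts, ¬ P d.fst → ¬ P d.snd := by
      intro d hd
      rw [Walk.darts_reverse] at hd
      simp only [List.mem_reverse, List.mem_map] at hd
      obtain ⟨d', hd', rfl⟩ := hd
      exact fun hnf hs => hnf (hfwd d' hd' hs)
    have := walk_pred_support c.reverse (fun x => ¬ P x) hrev hv x₁
      (by rwa [Walk.support_reverse, List.mem_reverse])
    exact this hP₁

lemma unique_of_count_map_eq_one {α β : Type*} [DecidableEq β] {l : List α} {f : α → β} {v : β}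
    (h : (l.map f).count v = 1) :
    ∃ d, d ∈ l ∧ f d = v ∧ ∀ d' ∈ l, f d' = v → d' = d := by
  induction l with
  | nil => simp at h
  | cons a l ih =>
      by_cases ha : f a = v
      · refine ⟨a, by simp, ha, ?_⟩
        intro d' hd' hfd'
        rcases List.mem_cons.1 hd' with rfl | hd'
        · rfl
        · exfalso
          simp only [List.map_cons, List.count_cons, beq_iff_eq, ha, if_pos] at h
          have h0 : (l.map f).count v = 0 := by omega
          have hv : v ∈ l.map f := List.mem_map.2 ⟨d', hd', hfd'⟩
          rw [List.count_eq_zero] at h0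
          exact h0 hv
      · simp only [List.map_cons, List.count_cons, beq_iff_eq, if_neg ha, add_zero] at h
        obtain ⟨d, hd, hfd, huniq⟩ := ih h
        exact ⟨d, List.mem_cons_of_mem _ hd, hfd, fun d' hd' hfd' => by
          rcases List.mem_cons.1 hd' with rfl | hd''
          · exact absurd hfd' ha
          · exact huniq d' hd'' hfd'⟩

variable {v : V} {c : H.Walk v v}

lemma count_darts_snd (hc : c.IsHamiltonianCycle) (w : V) :
    (c.darts.map (·.snd)).count w = 1 := by
  rw [Walk.map_snd_darts, ← Walk.support_tail_of_not_nil c hc.1.not_nil]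
  exact hc.isHamiltonian_tail w

lemma count_darts_fst (hc : c.IsHamiltonianCycle) (w : V) :
    (c.darts.map (·.fst)).count w = 1 := by
  rw [Walk.map_fst_darts]
  have hs : c.support = c.support.dropLast ++ [v] := by
    conv_lhs => rw [← List.dropLast_append_getLast (l := c.support) (by simp)]
    rw [Walk.getLast_support]
  have hcount : c.support.count w = c.support.dropLast.count w + List.count w [v] := by
    conv_lhs => rw [hs]
    rw [List.count_append]
  by_cases hw : w = v
  · subst hw
    rw [hc.count_support_self] at hcount
    have h1 : List.count w [w] = 1 := by simp
    omega
  · rw [hc.support_count_of_ne (fun h => hw h.symm)] at hcount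
    have h1 : List.count w [v] = 0 := by
      simp [List.count_eq_zero, hw]
    omega


variable {v : V} {c : H.Walk v v}

lemma exists_dFrom (hc : c.IsHamiltonianCycle) (w : V) :
    ∃ d, d ∈ c.darts ∧ d.fst = w ∧ ∀ d' ∈ c.darts, d'.fst = w → d' = d :=
  unique_of_count_map_eq_one (count_darts_fst hc w)

lemma exists_dTo (hc : c.IsHamiltonianCycle) (w : V) :
    ∃ d, d ∈ c.darts ∧ d.snd = w ∧ ∀ d' ∈ c.darts, d'.snd = w → d' = d :=
  unique_of_count_map_eq_one (count_darts_snd hc w)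

noncomputable def dFrom (hc : c.IsHamiltonianCycle) (w : V) : H.Dart :=
  (exists_dFrom hc w).choose

noncomputable def dTo (hc : c.IsHamiltonianCycle) (w : V) : H.Dart :=
  (exists_dTo hc w).choose

lemma dFrom_mem (hc : c.IsHamiltonianCycle) (w : V) : dFrom hc w ∈ c.darts :=
  (exists_dFrom hc w).choose_spec.1

lemma dFrom_fst (hc : c.IsHamiltonianCycle) (w : V) : (dFrom hc w).fst = w :=
  (exists_dFrom hc w).choose_spec.2.1

lemma dFrom_unique (hc : c.IsHamiltonianCycle) {w : V} {d : H.Dart}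
    (hd : d ∈ c.darts) (hfst : d.fst = w) : d = dFrom hc w :=
  (exists_dFrom hc w).choose_spec.2.2 d hd hfst

lemma dTo_mem (hc : c.IsHamiltonianCycle) (w : V) : dTo hc w ∈ c.darts :=
  (exists_dTo hc w).choose_spec.1

lemma dTo_snd (hc : c.IsHamiltonianCycle) (w : V) : (dTo hc w).snd = w :=
  (exists_dTo hc w).choose_spec.2.1

lemma dTo_unique (hc : c.IsHamiltonianCycle) {w : V} {d : H.Dart}
    (hd : d ∈ c.darts) (hsnd : d.snd = w) : d = dTo hc w :=
  (exists_dTo hc w).choose_spec.2.2 d hd hsnd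

lemma dFrom_adj (hc : c.IsHamiltonianCycle) (w : V) : H.Adj w (dFrom hc w).snd := by
  have := (dFrom hc w).adj
  rwa [dFrom_fst hc w] at this

lemma dTo_adj (hc : c.IsHamiltonianCycle) (w : V) : H.Adj (dTo hc w).fst w := by
  have := (dTo hc w).adj
  rwa [dTo_snd hc w] at this

/-- the reversal of a dart of the cycle is not a dart of the cycle -/
lemma symm_not_mem_darts (hc : c.IsHamiltonianCycle) {d : H.Dart} (hd : d ∈ c.darts) :
    d.symm ∉ c.darts := by
  intro hds
  have hnodup : c.edges.Nodup := hc.isCycle.isTrail.edges_nodup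
  have hinj := List.inj_on_of_nodup_map (f := SimpleGraph.Dart.edge) (l := c.darts)
    (by exact hnodup)
  have heq : d.edge = d.symm.edge := (Dart.edge_symm d).symm
  have : d = d.symm := hinj hd hds heq
  exact d.adj.ne (by
    conv_lhs => rw [this]
    simp [Dart.symm_toProd])

/-- the previous and next neighbors along the cycle are distinct -/
lemma dTo_fst_ne_dFrom_snd (hc : c.IsHamiltonianCycle) (w : V) :
    (dTo hc w).fst ≠ (dFrom hc w).snd := by
  intro heq
  have h1 : dTo hc w = (dFrom hc w).symm := by
    apply Dart.ext
    rw [Dart.symm_toProd]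
    apply Prod.ext
    · simp [heq]
    · simp [dTo_snd hc w, dFrom_fst hc w]
  exact symm_not_mem_darts hc (dFrom_mem hc w) (h1 ▸ dTo_mem hc w)


end HamAux

namespace ConvexBip
variable {n : ℕ} {Y : Type*}
open HamAux Sum

variable [DecidableEq Y] {G : ConvexBip n Y} {v : Fin n ⊕ Y} {c : G.toGraph.Walk v v}

lemma adj_elim {u w : Fin n ⊕ Y} (h : G.toGraph.Adj u w) :
    (∃ i y, u = inl i ∧ w = inr y ∧ G.adj i y) ∨
    (∃ i y, u = inr y ∧ w = inl i ∧ G.adj i y) := h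

lemma exists_aY (hc : c.IsHamiltonianCycle) (y : Y) :
    ∃ x : Fin n, (dTo hc (inr y)).fst = inl x ∧ G.adj x y := by
  rcases adj_elim (dTo_adj hc (inr y)) with ⟨i, y', h1, h2, h3⟩ | ⟨i, y', h1, h2, h3⟩
  · refine ⟨i, h1, ?_⟩
    have : y = y' := by simpa using h2
    rwa [this]
  · exact absurd h2 (by simp)

lemma exists_bY (hc : c.IsHamiltonianCycle) (y : Y) :
    ∃ x : Fin n, (dFrom hc (inr y)).snd = inl x ∧ G.adj x y := by
  rcases adj_elim (dFrom_adj hc (inr y)) with ⟨i, y', h1, h2, h3⟩ | ⟨i, y', h1, h2, h3⟩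
  · exact absurd h1 (by simp)
  · refine ⟨i, h2, ?_⟩
    have : y = y' := by simpa using h1
    rwa [this]

lemma exists_nX (hc : c.IsHamiltonianCycle) (x : Fin n) :
    ∃ y : Y, (dFrom hc (inl x)).snd = inr y ∧ G.adj x y := by
  rcases adj_elim (dFrom_adj hc (inl x)) with ⟨i, y', h1, h2, h3⟩ | ⟨i, y', h1, h2, h3⟩
  · refine ⟨y', h2, ?_⟩
    have : x = i := by simpa using h1
    rwa [this]
  · exact absurd h1 (by simp)

lemma exists_pX (hc : c.IsHamiltonianCycle) (x : Fin n) :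
    ∃ y : Y, (dTo hc (inl x)).fst = inr y ∧ G.adj x y := by
  rcases adj_elim (dTo_adj hc (inl x)) with ⟨i, y', h1, h2, h3⟩ | ⟨i, y', h1, h2, h3⟩
  · exact absurd h2 (by simp)
  · refine ⟨y', h1, ?_⟩
    have : x = i := by simpa using h2
    rwa [this]

noncomputable def aY (hc : c.IsHamiltonianCycle) (y : Y) : Fin n := (exists_aY hc y).choose
noncomputable def bY (hc : c.IsHamiltonianCycle) (y : Y) : Fin n := (exists_bY hc y).choose
noncomputable def nX (hc : c.IsHamiltonianCycle) (x : Fin n) : Y := (exists_nX hc x).choose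
noncomputable def pX (hc : c.IsHamiltonianCycle) (x : Fin n) : Y := (exists_pX hc x).choose

lemma aY_eq (hc : c.IsHamiltonianCycle) (y : Y) : (dTo hc (inr y)).fst = inl (aY hc y) :=
  (exists_aY hc y).choose_spec.1
lemma aY_adj (hc : c.IsHamiltonianCycle) (y : Y) : G.adj (aY hc y) y :=
  (exists_aY hc y).choose_spec.2
lemma bY_eq (hc : c.IsHamiltonianCycle) (y : Y) : (dFrom hc (inr y)).snd = inl (bY hc y) :=
  (exists_bY hc y).choose_spec.1
lemma bY_adj (hc : c.IsHamiltonianCycle) (y : Y) : G.adj (bY hc y) y :=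
  (exists_bY hc y).choose_spec.2
lemma nX_eq (hc : c.IsHamiltonianCycle) (x : Fin n) : (dFrom hc (inl x)).snd = inr (nX hc x) :=
  (exists_nX hc x).choose_spec.1
lemma nX_adj (hc : c.IsHamiltonianCycle) (x : Fin n) : G.adj x (nX hc x) :=
  (exists_nX hc x).choose_spec.2
lemma pX_eq (hc : c.IsHamiltonianCycle) (x : Fin n) : (dTo hc (inl x)).fst = inr (pX hc x) :=
  (exists_pX hc x).choose_spec.1
lemma pX_adj (hc : c.IsHamiltonianCycle) (x : Fin n) : G.adj x (pX hc x) :=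
  (exists_pX hc x).choose_spec.2

lemma aY_ne_bY (hc : c.IsHamiltonianCycle) (y : Y) : aY hc y ≠ bY hc y := by
  intro h
  apply dTo_fst_ne_dFrom_snd hc (inr y)
  rw [aY_eq hc y, bY_eq hc y, h]

lemma pX_ne_nX (hc : c.IsHamiltonianCycle) (x : Fin n) : pX hc x ≠ nX hc x := by
  intro h
  apply dTo_fst_ne_dFrom_snd hc (inl x)
  rw [pX_eq hc x, nX_eq hc x, h]

/-- `dTo (inr y) = dFrom (inl (aY y))`, hence `nX (aY y) = y` -/
lemma nX_aY (hc : c.IsHamiltonianCycle) (y : Y) : nX hc (aY hc y) = y := by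
  have h1 : dTo hc (inr y) = dFrom hc (inl (aY hc y)) :=
    dFrom_unique hc (dTo_mem hc (inr y)) (aY_eq hc y)
  have h2 : (dFrom hc (inl (aY hc y))).snd = inr y := by rw [← h1, dTo_snd]
  have h3 := nX_eq hc (aY hc y)
  rw [h2] at h3
  exact ((inr.injEq _ _).mp h3).symm

lemma pX_bY (hc : c.IsHamiltonianCycle) (y : Y) : pX hc (bY hc y) = y := by
  have h1 : dFrom hc (inr y) = dTo hc (inl (bY hc y)) :=
    dTo_unique hc (dFrom_mem hc (inr y)) (bY_eq hc y)
  have h2 : (dTo hc (inl (bY hc y))).fst = inr y := by rw [← h1, dFrom_fst]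
  have h3 := pX_eq hc (bY hc y)
  rw [h2] at h3
  exact ((inr.injEq _ _).mp h3).symm

lemma aY_nX (hc : c.IsHamiltonianCycle) (x : Fin n) : aY hc (nX hc x) = x := by
  have h1 : dFrom hc (inl x) = dTo hc (inr (nX hc x)) :=
    dTo_unique hc (dFrom_mem hc (inl x)) (nX_eq hc x)
  have h2 : (dTo hc (inr (nX hc x))).fst = inl x := by rw [← h1, dFrom_fst]
  have h3 := aY_eq hc (nX hc x)
  rw [h2] at h3
  exact ((inl.injEq _ _).mp h3).symm

lemma bY_pX (hc : c.IsHamiltonianCycle) (x : Fin n) : bY hc (pX hc x) = x := by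
  have h1 : dTo hc (inl x) = dFrom hc (inr (pX hc x)) :=
    dFrom_unique hc (dTo_mem hc (inl x)) (pX_eq hc x)
  have h2 : (dFrom hc (inr (pX hc x))).snd = inl x := by rw [← h1, dTo_snd]
  have h3 := bY_eq hc (pX hc x)
  rw [h2] at h3
  exact ((inl.injEq _ _).mp h3).symm

lemma card_Y_eq (hc : c.IsHamiltonianCycle) [Fintype Y] : Fintype.card Y = n := by
  have h1 : Function.Injective (nX hc) := Function.LeftInverse.injective (aY_nX hc)
  have h2 : Function.Injective (aY hc) := Function.LeftInverse.injective (nX_aY hc)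
  have := Fintype.card_le_of_injective _ h1
  have := Fintype.card_le_of_injective _ h2
  simp only [Fintype.card_fin] at *
  omega

/-- darts out of `inr y` / into `inr y` are the canonical ones, same for `inl x` -/
lemma dart_eq_of_fst_inr (hc : c.IsHamiltonianCycle) {d : G.toGraph.Dart} (hd : d ∈ c.darts)
    {y : Y} (h : d.fst = inr y) : d.snd = inl (bY hc y) := by
  rw [dFrom_unique hc hd h]; exact bY_eq hc y

lemma dart_eq_of_snd_inr (hc : c.IsHamiltonianCycle) {d : G.toGraph.Dart} (hd : d ∈ c.darts)
    {y : Y} (h : d.snd = inr y) : d.fst = inl (aY hc y) := by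
  rw [dTo_unique hc hd h]; exact aY_eq hc y

lemma dart_eq_of_fst_inl (hc : c.IsHamiltonianCycle) {d : G.toGraph.Dart} (hd : d ∈ c.darts)
    {x : Fin n} (h : d.fst = inl x) : d.snd = inr (nX hc x) := by
  rw [dFrom_unique hc hd h]; exact nX_eq hc x

lemma dart_eq_of_snd_inl (hc : c.IsHamiltonianCycle) {d : G.toGraph.Dart} (hd : d ∈ c.darts)
    {x : Fin n} (h : d.snd = inl x) : d.fst = inr (pX hc x) := by
  rw [dTo_unique hc hd h]; exact pX_eq hc x



lemma part3 [Fintype Y] (hc : c.IsHamiltonianCycle) (hn : 0 < n) :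
    (G.NIn ⟨0, hn⟩ ⟨n - 1, by omega⟩).ncard = n ∧
    (G.NIn' ⟨0, hn⟩ ⟨n - 1, by omega⟩).ncard = n := by
  have hY := card_Y_eq hc
  constructor
  · have h1 : G.NIn ⟨0, hn⟩ ⟨n - 1, by omega⟩ = Set.univ := by
      ext y
      simp only [NIn, Set.mem_setOf_eq, Set.mem_univ, iff_true]
      intro i _
      refine ⟨?_, ?_⟩ <;> rw [Fin.le_def] <;> simp <;> omega
    rw [h1, Set.ncard_univ, Nat.card_eq_fintype_card, hY]
  · have h1 : G.NIn' ⟨0, hn⟩ ⟨n - 1, by omega⟩ = Set.univ := by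
      ext y
      simp only [NIn', Set.mem_setOf_eq, Set.mem_univ, iff_true]
      have hsub : {aY hc y, bY hc y} ⊆ {i : Fin n | G.adj i y ∧ ⟨0, hn⟩ ≤ i ∧ i ≤ ⟨n - 1, by omega⟩} := by
        intro i hi
        have hadj : G.adj i y := by
          rcases hi with rfl | hi
          · exact aY_adj hc y
          · rw [Set.mem_singleton_iff] at hi; subst hi; exact bY_adj hc y
        refine ⟨hadj, ?_, ?_⟩ <;> rw [Fin.le_def] <;> simp <;> omega
      calc 2 = ({aY hc y, bY hc y} : Set (Fin n)).ncard := by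
                rw [Set.ncard_pair (aY_ne_bY hc y)]
           _ ≤ _ := Set.ncard_le_ncard hsub (Set.toFinite _)
    rw [h1, Set.ncard_univ, Nat.card_eq_fintype_card, hY]

lemma part1 [Fintype Y] (hc : c.IsHamiltonianCycle) (p q : Fin n) (hpq : p < q)
    (hcond : (p.val = 0 ∧ q.val < n - 1) ∨ (0 < p.val ∧ q.val = n - 1) ∨
        (0 < p.val ∧ q.val < n - 1)) :
    (G.NIn p q).ncard ≤ q.val - p.val := by
  classical
  set NInF : Finset Y := univ.filter (fun y => y ∈ G.NIn p q) with hNInF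
  have hset : G.NIn p q = ↑NInF := by ext y; simp [hNInF]
  rw [hset, Set.ncard_coe_finset]
  -- the injection Ψ
  set Ψ : Y × Bool → Fin n × Bool :=
    fun z => if z.2 then (bY hc z.1, true) else (aY hc z.1, false) with hΨ
  have hmaps : ∀ z ∈ NInF ×ˢ (univ : Finset Bool), Ψ z ∈ (Finset.Icc p q) ×ˢ (univ : Finset Bool) := by
    rintro ⟨y, b⟩ hz
    simp only [mem_product, mem_filter, hNInF] at hz
    have hy : y ∈ G.NIn p q := hz.1.2
    rcases b with _ | _ <;>
      simp only [hΨ, if_true, if_false, Bool.false_eq_true, mem_product, mem_univ, and_true,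
        mem_Icc] <;>
      [exact (hy _ (aY_adj hc y)); exact (hy _ (bY_adj hc y))]
  have hinj : Set.InjOn Ψ (↑(NInF ×ˢ (univ : Finset Bool))) := by
    rintro ⟨y, b⟩ _ ⟨y', b'⟩ _ heq
    rcases b with _ | _ <;> rcases b' with _ | _ <;>
      simp only [hΨ, if_true, if_false, Bool.false_eq_true, Prod.mk.injEq] at heq
    · have : nX hc (aY hc y) = nX hc (aY hc y') := by rw [heq.1]
      rw [nX_aY hc, nX_aY hc] at this
      rw [this]
    · exact absurd heq.2 (by simp)
    · exact absurd heq.2 (by simp)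
    · have : pX hc (bY hc y) = pX hc (bY hc y') := by rw [heq.1]
      rw [pX_bY hc, pX_bY hc] at this
      rw [this]
  have hcard := Finset.card_le_card_of_injOn Ψ hmaps hinj
  rw [Finset.card_product, Finset.card_product, Fin.card_Icc, Finset.card_univ,
    Fintype.card_bool] at hcard
  have hple : p.val ≤ q.val := le_of_lt hpq
  -- so NInF.card ≤ q - p + 1
  have hle : NInF.card ≤ q.val - p.val + 1 := by omega
  by_contra hgt
  push_neg at hgt
  have heqcard : NInF.card = q.val - p.val + 1 := by omega
  -- surjectivity
  have hcards : ((Finset.Icc p q) ×ˢ (univ : Finset Bool)).card ≤ (NInF ×ˢ (univ : Finset Bool)).card := by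
    rw [Finset.card_product, Finset.card_product, Fin.card_Icc, Finset.card_univ,
      Fintype.card_bool, heqcard]
    omega
  have hsurj := Finset.surj_on_of_inj_on_of_card_le (s := NInF ×ˢ (univ : Finset Bool))
    (t := (Finset.Icc p q) ×ˢ (univ : Finset Bool)) (fun z _ => Ψ z)
    (fun z hz => hmaps z hz) (fun z₁ z₂ h₁ h₂ h => hinj (by exact_mod_cast h₁) (by exact_mod_cast h₂) h) hcards
  have hclos1 : ∀ x ∈ Finset.Icc p q, nX hc x ∈ NInF := by
    intro x hx
    obtain ⟨⟨y, b⟩, hmem, heq⟩ := hsurj (x, false) (by simp [hx])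
    rcases b with _ | _
    · simp only [hΨ, Bool.false_eq_true, if_false, Prod.mk.injEq] at heq
      have hxy : x = aY hc y := heq.1
      have : nX hc x = y := by rw [hxy, nX_aY]
      rw [this]
      exact (Finset.mem_product.1 hmem).1
    · simp only [hΨ, if_true, Prod.mk.injEq] at heq
      exact absurd heq.2 (by simp)
  -- transition argument
  set S : (Fin n ⊕ Y) → Prop := Sum.elim (fun x => x ∈ Finset.Icc p q) (fun y => y ∈ NInF) with hS
  have hx1 : S (Sum.inl p) := by simp [hS, Fin.le_of_lt hpq]
  obtain ⟨j, hjS⟩ : ∃ j : Fin n, ¬ S (Sum.inl j) := by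
    rcases hcond with ⟨hp0, hq⟩ | ⟨hp, _⟩ | ⟨hp, hq⟩
    · refine ⟨⟨n-1, by omega⟩, ?_⟩
      simp only [hS, Sum.elim_inl, mem_Icc, not_and_or]
      right
      rw [Fin.le_def]
      simp
      omega
    · refine ⟨⟨0, by omega⟩, ?_⟩
      simp only [hS, Sum.elim_inl, mem_Icc, not_and_or]
      left
      rw [Fin.le_def]
      simp
      omega
    · refine ⟨⟨0, by omega⟩, ?_⟩
      simp only [hS, Sum.elim_inl, mem_Icc, not_and_or]
      left
      rw [Fin.le_def]
      simp
      omega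
  obtain ⟨d, hd, hdf, hds⟩ := exists_transition_dart c S (hc.mem_support _) (hc.mem_support _) hx1 hjS
  rcases hdfst : d.fst with x | y
  · have hxI : x ∈ Finset.Icc p q := by rw [hdfst] at hdf; simpa [hS] using hdf
    have := dart_eq_of_fst_inl hc hd hdfst
    rw [this] at hds
    exact hds (by simp only [hS, Sum.elim_inr]; exact hclos1 x hxI)
  · have hyN : y ∈ NInF := by rw [hdfst] at hdf; simpa [hS] using hdf
    have := dart_eq_of_fst_inr hc hd hdfst
    rw [this] at hds
    apply hds
    simp only [hS, Sum.elim_inl, mem_Icc]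
    have hy : y ∈ G.NIn p q := by simpa [hNInF] using hyN
    exact hy _ (bY_adj hc y)


lemma adj_of_between (hc : c.IsHamiltonianCycle) (y : Y) (t : Fin n)
    (h1 : min (aY hc y).val (bY hc y).val ≤ t.val)
    (h2 : t.val ≤ max (aY hc y).val (bY hc y).val) :
    G.adj t y := by
  rcases le_total (aY hc y).val (bY hc y).val with h | h
  · exact G.convex y (aY hc y) t (bY hc y) (by rw [Fin.le_def]; omega)
      (by rw [Fin.le_def]; omega) (aY_adj hc y) (bY_adj hc y)
  · exact G.convex y (bY hc y) t (aY hc y) (by rw [Fin.le_def]; omega)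
      (by rw [Fin.le_def]; omega) (bY_adj hc y) (aY_adj hc y)

lemma part2 [Fintype Y] (hc : c.IsHamiltonianCycle) (k : ℕ) (p q : Fin k → Fin n)
    (hk : 1 ≤ k) (hlt : ∀ i, p i < q i) (hsep : ∀ i i' : Fin k, i < i' → q i ≤ p i') :
    (∑ i, ((q i).val - (p i).val)) ≤ (⋃ i, G.NIn' (p i) (q i)).ncard := by
  classical
  have hn : 0 < n := (p ⟨0, hk⟩).pos
  have hYne : Nonempty Y := by
    rw [← Fintype.card_pos_iff, card_Y_eq hc]; exact hn
  obtain ⟨y₀⟩ := hYne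
  set T : Finset ℕ := univ.biUnion (fun i => Finset.Ico (p i).val (q i).val) with hT
  have hdisj : ∀ i ∈ (univ : Finset (Fin k)), ∀ i' ∈ (univ : Finset (Fin k)), i ≠ i' →
      Disjoint (Finset.Ico (p i).val (q i).val) (Finset.Ico (p i').val (q i').val) := by
    intro i _ i' _ hne
    rw [Finset.disjoint_left]
    intro a ha ha'
    rw [Finset.mem_Ico] at ha ha'
    rcases lt_or_gt_of_ne hne with h | h
    · have := hsep i i' h; rw [Fin.le_def] at this; omega
    · have := hsep i' i h; rw [Fin.le_def] at this; omega
  have hTcard : T.card = ∑ i, ((q i).val - (p i).val) := by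
    rw [hT, Finset.card_biUnion hdisj]
    simp [Nat.card_Ico]
  set C : ℕ → Finset Y := fun t => univ.filter
    (fun y => min (aY hc y).val (bY hc y).val ≤ t ∧ t < max (aY hc y).val (bY hc y).val) with hC
  have hhall : ∀ s : Finset {x // x ∈ T}, s.card ≤ (s.biUnion (fun t => C t.val)).card := by
    intro s
    rcases Finset.eq_empty_or_nonempty s with rfl | hsne
    · simp
    set m := s.card with hm
    have hm1 : 1 ≤ m := Finset.card_pos.2 hsne
    set s' : Finset ℕ := s.image Subtype.val with hs'
    have hs'card : s'.card = m := Finset.card_image_of_injective _ Subtype.val_injective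
    have hs'T : ∀ t ∈ s', t ∈ T := by
      intro t ht
      obtain ⟨x, _, rfl⟩ := Finset.mem_image.1 ht
      exact x.2
    have hs'lt : ∀ t ∈ s', t < n - 1 := by
      intro t ht
      obtain ⟨i, _, hti⟩ := Finset.mem_biUnion.1 (hs'T t ht)
      rw [Finset.mem_Ico] at hti
      have := (q i).isLt
      have hq1 : (q i).val ≤ n - 1 := by omega
      have hple := hlt i
      rw [Fin.lt_def] at hple
      -- t < q i ≤ n - 1 needs q i < n and p i < q i so q i ≥ 1... just q i ≤ n - 1 not enough if q i = n-1 gives t < n-1 ok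
      omega
    set β : ℕ → ℕ := fun x => (s'.filter (fun t => t < x)).card with hβ
    have hmono : Monotone β := by
      intro x x' hxx
      apply Finset.card_le_card
      intro t ht
      rw [Finset.mem_filter] at ht ⊢
      exact ⟨ht.1, lt_of_lt_of_le ht.2 hxx⟩
    have hstep : ∀ x, β (x+1) ≤ β x + 1 := by
      intro x
      have hsub : s'.filter (fun t => t < x + 1) ⊆ insert x (s'.filter (fun t => t < x)) := by
        intro t ht
        rw [Finset.mem_filter] at ht
        rcases Nat.lt_succ_iff_lt_or_eq.1 ht.2 with h | rfl
        · exact Finset.mem_insert_of_mem (Finset.mem_filter.2 ⟨ht.1, h⟩)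
        · exact Finset.mem_insert_self _ _
      calc β (x+1) ≤ (insert x (s'.filter (fun t => t < x))).card := Finset.card_le_card hsub
        _ ≤ β x + 1 := Finset.card_insert_le _ _
    have hβ0 : β 0 = 0 := by
      have : s'.filter (fun t => t < 0) = ∅ :=
        Finset.filter_false_of_mem (fun t _ => Nat.not_lt_zero t)
      simp only [hβ]
      rw [this, Finset.card_empty]
    have hβtop : β (n-1) = m := by
      have : s'.filter (fun t => t < n - 1) = s' :=
        Finset.filter_true_of_mem (fun t ht => hs'lt t ht)
      simp only [hβ]
      rw [this, hs'card]
    have hIVT : ∀ j, j ≤ m → ∃ x, x < n ∧ β x = j := by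
      have key : ∀ X, ∀ j ≤ β X, ∃ x ≤ X, β x = j := by
        intro X
        induction X with
        | zero => intro j hj; rw [hβ0] at hj; exact ⟨0, le_rfl, by rw [hβ0]; omega⟩
        | succ X ih =>
            intro j hj
            by_cases hjX : j ≤ β X
            · obtain ⟨x, hx, hb⟩ := ih j hjX
              exact ⟨x, by omega, hb⟩
            · have h1 := hstep X
              push_neg at hjX
              exact ⟨X + 1, le_rfl, by omega⟩
      intro j hj
      obtain ⟨x, hx, hb⟩ := key (n-1) j (by rw [hβtop]; exact hj)
      exact ⟨x, by omega, hb⟩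
    set γ : (Fin n ⊕ Y) → ℕ := Sum.elim (fun x => β x.val) (fun y => β (aY hc y).val) with hγ
    have hexD : ∀ j, j ≤ m → ∃ y : Y, β (aY hc y).val = j ∧
        β (aY hc y).val ≠ β (bY hc y).val := by
      intro j hj
      obtain ⟨x, hxn, hbx⟩ := hIVT j hj
      obtain ⟨x', hx'n, hbx'⟩ := hIVT (if j = 0 then m else 0) (by split <;> omega)
      have hne : β x' ≠ j := by
        by_cases hj0 : j = 0
        · rw [if_pos hj0] at hbx'; omega
        · rw [if_neg hj0] at hbx'; omega
      obtain ⟨d, hd, hdf, hds⟩ := HamAux.exists_transition_dart c (fun w => γ w = j)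
        (hc.mem_support (Sum.inl ⟨x, hxn⟩)) (hc.mem_support (Sum.inl ⟨x', hx'n⟩))
        (by simp [hγ, hbx]) (by simp [hγ, hne])
      rcases hdfst : d.fst with xx | y
      · exfalso
        have h2 := dart_eq_of_fst_inl hc hd hdfst
        rw [hdfst] at hdf
        rw [h2] at hds
        apply hds
        simp only [hγ, Sum.elim_inr, Sum.elim_inl] at hdf ⊢
        rw [aY_nX hc]
        exact hdf
      · have h2 := dart_eq_of_fst_inr hc hd hdfst
        rw [hdfst] at hdf
        rw [h2] at hds
        simp only [hγ, Sum.elim_inr, Sum.elim_inl] at hdf hds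
        exact ⟨y, hdf, fun hEq => hds (by rw [← hEq]; exact hdf)⟩
    set D : Finset Y := univ.filter (fun y => β (aY hc y).val ≠ β (bY hc y).val) with hD
    have hDcard : m + 1 ≤ D.card := by
      set g : ℕ → Y := fun j => if h : j ≤ m then (hexD j h).choose else y₀ with hg
      have hgD : ∀ j ∈ Finset.range (m+1), g j ∈ D := by
        intro j hj
        rw [Finset.mem_range] at hj
        have hjm : j ≤ m := by omega
        rw [hg]
        simp only [dif_pos hjm]
        exact Finset.mem_filter.2 ⟨Finset.mem_univ _, ((hexD j hjm).choose_spec).2⟩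
      have hginj : Set.InjOn g ↑(Finset.range (m+1)) := by
        intro j hj j' hj' heq
        rw [Finset.coe_range, Set.mem_Iio] at hj hj'
        have hjm : j ≤ m := by omega
        have hj'm : j' ≤ m := by omega
        rw [hg] at heq
        simp only [dif_pos hjm, dif_pos hj'm] at heq
        have e1 := ((hexD j hjm).choose_spec).1
        have e2 := ((hexD j' hj'm).choose_spec).1
        rw [heq] at e1
        rw [e1] at e2
        omega
      calc m + 1 = (Finset.range (m+1)).card := (Finset.card_range _).symm
        _ ≤ D.card := Finset.card_le_card_of_injOn g hgD hginj
    have hDsub : D ⊆ s.biUnion (fun t => C t.val) := by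
      intro y hy
      rw [hD, Finset.mem_filter] at hy
      obtain ⟨-, hne⟩ := hy
      have huw : min (aY hc y).val (bY hc y).val ≤ max (aY hc y).val (bY hc y).val :=
        min_le_max
      have hβne : β (min (aY hc y).val (bY hc y).val) ≠ β (max (aY hc y).val (bY hc y).val) := by
        rcases le_total (aY hc y).val (bY hc y).val with h | h
        · rw [min_eq_left h, max_eq_right h]; exact hne
        · rw [min_eq_right h, max_eq_left h]; exact fun hh => hne hh.symm
      have hβlt : β (min (aY hc y).val (bY hc y).val) < β (max (aY hc y).val (bY hc y).val) :=
        lt_of_le_of_ne (hmono huw) hβne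
      have hex : ∃ t ∈ s'.filter (fun t => t < max (aY hc y).val (bY hc y).val),
          t ∉ s'.filter (fun t => t < min (aY hc y).val (bY hc y).val) := by
        by_contra hcon
        push_neg at hcon
        have hcc := Finset.card_le_card (fun t ht => hcon t ht)
        simp only [hβ] at hβlt
        omega
      obtain ⟨t, htw, htu⟩ := hex
      rw [Finset.mem_filter] at htw
      have htu' : ¬ (t < min (aY hc y).val (bY hc y).val) := by
        intro hlt'
        exact htu (Finset.mem_filter.2 ⟨htw.1, hlt'⟩)
      obtain ⟨x, hx, rfl⟩ := Finset.mem_image.1 htw.1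
      apply Finset.mem_biUnion.2
      refine ⟨x, hx, ?_⟩
      rw [hC]
      exact Finset.mem_filter.2 ⟨Finset.mem_univ _, by omega, htw.2⟩
    calc s.card = m := rfl
      _ ≤ D.card := by omega
      _ ≤ (s.biUnion (fun t => C t.val)).card := Finset.card_le_card hDsub
  obtain ⟨f, hfinj, hfmem⟩ :=
    (Finset.all_card_le_biUnion_card_iff_exists_injective (fun (x : {x // x ∈ T}) => C x.val)).1
      hhall
  set imF : Finset Y := (univ : Finset {x // x ∈ T}).image f with himF
  have himcard : imF.card = T.card := by
    rw [himF, Finset.card_image_of_injective _ hfinj, Finset.card_univ, Fintype.card_coe]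
  have himsub : (↑imF : Set Y) ⊆ ⋃ i, G.NIn' (p i) (q i) := by
    intro y hy
    rw [himF] at hy
    simp only [Finset.coe_image, Set.mem_image, Finset.mem_coe] at hy
    obtain ⟨x, -, rfl⟩ := hy
    have hxT := x.2
    obtain ⟨i, -, hti⟩ := Finset.mem_biUnion.1 hxT
    rw [Finset.mem_Ico] at hti
    have hyC := hfmem x
    rw [hC, Finset.mem_filter] at hyC
    obtain ⟨-, hu, hw⟩ := hyC
    have hqn := (q i).isLt
    have ht1n : (x : ℕ) < n := by omega
    have ht2n : (x : ℕ) + 1 < n := by omega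
    apply Set.mem_iUnion.2
    refine ⟨i, ?_⟩
    show 2 ≤ {i' : Fin n | G.adj i' (f x) ∧ p i ≤ i' ∧ i' ≤ q i}.ncard
    have hmem1 : (⟨(x : ℕ), ht1n⟩ : Fin n) ∈
        {i' : Fin n | G.adj i' (f x) ∧ p i ≤ i' ∧ i' ≤ q i} := by
      refine ⟨adj_of_between hc _ _ (by simp only [Fin.val_mk]; omega)
        (by simp only [Fin.val_mk]; omega), ?_, ?_⟩ <;> rw [Fin.le_def] <;>
        simp <;> omega
    have hmem2 : (⟨(x : ℕ) + 1, ht2n⟩ : Fin n) ∈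
        {i' : Fin n | G.adj i' (f x) ∧ p i ≤ i' ∧ i' ≤ q i} := by
      refine ⟨adj_of_between hc _ _ (by simp only [Fin.val_mk]; omega)
        (by simp only [Fin.val_mk]; omega), ?_, ?_⟩ <;> rw [Fin.le_def] <;>
        simp <;> omega
    have h2 : 1 < {i' : Fin n | G.adj i' (f x) ∧ p i ≤ i' ∧ i' ≤ q i}.ncard := by
      rw [Set.one_lt_ncard_iff (Set.toFinite _)]
      exact ⟨_, _, hmem1, hmem2, by intro hcon; rw [Fin.mk.injEq] at hcon; omega⟩
    omega
  calc (∑ i, ((q i).val - (p i).val)) = T.card := hTcard.symm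
    _ = imF.card := himcard.symm
    _ = (↑imF : Set Y).ncard := (Set.ncard_coe_finset _).symm
    _ ≤ _ := Set.ncard_le_ncard himsub (Set.toFinite _)


end ConvexBip

/-- if a connected convex bipartite graph has a Hamiltonian cycle then it
satisfies Property A. -/
theorem stmt_3 {n : ℕ} {Y : Type*} [Fintype Y] [DecidableEq Y]
    (G : ConvexBip n Y) (hconn : G.toGraph.Connected)
    (hham : ConvexBip.HasHamCycle G.toGraph) :
    G.PropertyA := by
  obtain ⟨v, c, hc⟩ := hham
  refine ⟨?_, ?_, ?_⟩
  · intro p q hpq hcond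
    exact ConvexBip.part1 hc p q hpq hcond
  · intro k p q hk hkn hlt hsep
    exact ConvexBip.part2 hc k p q hk hlt hsep
  · intro hn
    exact ConvexBip.part3 hc hn
end

section
/- If a connected convex bipartite graph G has a Hamiltonian path, then G satisfies Property B. -/
open Finset SimpleGraph

section Aux
set_option linter.unusedSectionVars false

namespace ConvexBip
variable {n : ℕ} {Y : Type*}

lemma adj_of_inl {G : ConvexBip n Y} {i : Fin n} {v} (h : G.toGraph.Adj (Sum.inl i) v) :
    ∃ y, v = Sum.inr y ∧ G.adj i y := by
  rcases h with ⟨i', y, hi, hv, ha⟩ | ⟨i', y, hy, hv, ha⟩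
  · exact ⟨y, hv, by cases hi; exact ha⟩
  · simp at hy

lemma adj_of_inr {G : ConvexBip n Y} {y : Y} {v} (h : G.toGraph.Adj (Sum.inr y) v) :
    ∃ i, v = Sum.inl i ∧ G.adj i y := by
  rcases h with ⟨i', y', hi, hv, ha⟩ | ⟨i', y', hy, hv, ha⟩
  · simp at hi
  · exact ⟨i', hv, by cases hy; exact ha⟩

section Q
variable (G : ConvexBip n Y) (S : Finset Y) [DecidableEq Y] (X' : Finset (Fin n))

def fS (S : Finset Y) : (Fin n ⊕ Y) → Option Y := fun v => match v with
  | Sum.inr y => if y ∈ S then some y else none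
  | Sum.inl _ => none

def fX (X' : Finset (Fin n)) : (Fin n ⊕ Y) → Option (Fin n) := fun v => match v with
  | Sum.inl i => if i ∈ X' then some i else none
  | Sum.inr _ => none

def ind : List (Fin n ⊕ Y) → ℕ := fun L => match L with
  | Sum.inl _ :: _ => 0
  | _ => 1

@[simp] lemma fS_inl (S : Finset Y) (i : Fin n) : fS (n := n) S (Sum.inl i) = none := rfl
@[simp] lemma fS_inr (S : Finset Y) (y : Y) :
    fS (n := n) S (Sum.inr y) = if y ∈ S then some y else none := rfl
@[simp] lemma fX_inr (X' : Finset (Fin n)) (y : Y) :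
    fX (Y := Y) X' (Sum.inr y) = none := rfl
@[simp] lemma fX_inl (X' : Finset (Fin n)) (i : Fin n) :
    fX (Y := Y) X' (Sum.inl i) = if i ∈ X' then some i else none := rfl
@[simp] lemma ind_nil : ind ([] : List (Fin n ⊕ Y)) = 1 := rfl
@[simp] lemma ind_inl (a : Fin n) (L : List (Fin n ⊕ Y)) : ind (Sum.inl a :: L) = 0 := rfl
@[simp] lemma ind_inr (y : Y) (L : List (Fin n ⊕ Y)) : ind (Sum.inr y :: L) = 1 := rfl

lemma mem_of_fS {S : Finset Y} {v : Fin n ⊕ Y} {y : Y} (h : fS S v = some y) :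
    v = Sum.inr y ∧ y ∈ S := by
  match v with
  | Sum.inl i => simp at h
  | Sum.inr y' =>
    simp only [fS_inr] at h
    split at h
    · cases h; exact ⟨rfl, by assumption⟩
    · simp at h

lemma mem_of_fX {X' : Finset (Fin n)} {v : Fin n ⊕ Y} {i : Fin n}
    (h : fX (Y := Y) X' v = some i) : v = Sum.inl i ∧ i ∈ X' := by
  match v with
  | Sum.inr y => simp at h
  | Sum.inl i' =>
    simp only [fX_inl] at h
    split at h
    · cases h; exact ⟨rfl, by assumption⟩
    · simp at h

lemma lemQ (hS : ∀ y ∈ S, ∀ i, G.adj i y → i ∈ X') :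
    ∀ (L : List (Fin n ⊕ Y)), L.Chain' G.toGraph.Adj →
      (L.filterMap (fS S)).length ≤ (L.filterMap (fX X')).length + ind L := by
  suffices H : ∀ (N : ℕ) (L : List (Fin n ⊕ Y)), L.length ≤ N → L.Chain' G.toGraph.Adj →
      (L.filterMap (fS S)).length ≤ (L.filterMap (fX X')).length + ind L from
    fun L => H L.length L le_rfl
  intro N
  induction N with
  | zero =>
    intro L hL _
    rw [List.length_eq_zero_iff.1 (Nat.le_zero.1 hL)]
    simp [ind]
  | succ N IHN =>
    intro L hL hch
    match L with
    | [] => simp [ind]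
    | [Sum.inl a] => simp [List.filterMap_cons]
    | [Sum.inr y] => by_cases hyS : y ∈ S <;> simp [hyS]
    | Sum.inl a :: Sum.inl a' :: L'' =>
        exact absurd (List.isChain_cons_cons.1 hch).1
          (by intro h; rcases adj_of_inl h with ⟨y, hy, _⟩; simp at hy)
    | Sum.inl a :: Sum.inr y :: L'' =>
        have hadj : G.adj a y := by
          rcases adj_of_inl (List.isChain_cons_cons.1 hch).1 with ⟨y', hy', ha⟩
          cases hy'; exact ha
        have hch' : (Sum.inr y :: L'').Chain' G.toGraph.Adj := (List.isChain_cons_cons.1 hch).2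
        have IH'' := IHN L'' (by simp at hL ⊢; omega) hch'.tail
        have hind : (L''.filterMap (fS S)).length ≤ (L''.filterMap (fX X')).length := by
          match L'' with
          | [] => simp
          | v :: L₃ =>
            rcases adj_of_inr (List.isChain_cons_cons.1 hch').1 with ⟨i, hv, _⟩
            subst hv
            simpa [ind] using IH''
        by_cases hyS : y ∈ S
        · have haX : a ∈ X' := hS y hyS a hadj
          simp [List.filterMap_cons, hyS, haX]
          omega
        · by_cases haX : a ∈ X' <;> simp [List.filterMap_cons, hyS, haX] <;> omega
    | Sum.inr y :: L' =>
        have hind : (L'.filterMap (fS S)).length ≤ (L'.filterMap (fX X')).length := by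
          match L' with
          | [] => simp
          | v :: L₃ =>
            rcases adj_of_inr (List.isChain_cons_cons.1 hch).1 with ⟨i, hv, _⟩
            subst hv
            simpa [ind] using IHN (Sum.inl i :: L₃) (by simp at hL ⊢; omega) hch.tail
        by_cases hyS : y ∈ S <;> simp [List.filterMap_cons, hyS] <;> omega

end Q

section R
open scoped Classical
variable [DecidableEq Y] (G : ConvexBip n Y) (C : Finset ℕ)

def crossP (G : ConvexBip n Y) (C : Finset ℕ) (y : Y) : Prop :=
  ∃ c ∈ C, ∃ a b : Fin n, G.adj a y ∧ G.adj b y ∧ a.val ≤ c ∧ c < b.val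

noncomputable def gY (G : ConvexBip n Y) (C : Finset ℕ) : (Fin n ⊕ Y) → Option Y := fun v =>
  match v with
  | Sum.inr y => if crossP G C y then some y else none
  | Sum.inl _ => none

def gX (C : Finset ℕ) : (Fin n ⊕ Y) → Option ℕ := fun v => match v with
  | Sum.inl i => some ((C.filter (· < i.val)).card)
  | Sum.inr _ => none

@[simp] lemma gY_inl (i : Fin n) : gY G C (Sum.inl i) = none := rfl
@[simp] lemma gY_inr (y : Y) :
    gY G C (Sum.inr y) = if crossP G C y then some y else none := by
  simp [gY]
@[simp] lemma gX_inl (i : Fin n) :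
    gX (n := n) (Y := Y) C (Sum.inl i) = some ((C.filter (· < i.val)).card) := rfl
@[simp] lemma gX_inr (y : Y) : gX (n := n) (Y := Y) C (Sum.inr y) = none := rfl

lemma mem_of_gY {v : Fin n ⊕ Y} {y : Y} (h : gY G C v = some y) :
    v = Sum.inr y ∧ crossP G C y := by
  match v with
  | Sum.inl i => simp at h
  | Sum.inr y' =>
    simp only [gY_inr] at h
    split at h
    · cases h; exact ⟨rfl, by assumption⟩
    · simp at h

lemma lemR :
    ∀ (L : List (Fin n ⊕ Y)), L.Chain' G.toGraph.Adj → L.Nodup →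
      (L.filterMap (gX C)).toFinset.card ≤ (L.filterMap (gY G C)).toFinset.card + 1 := by
  suffices H : ∀ (N : ℕ) (L : List (Fin n ⊕ Y)), L.length ≤ N → L.Chain' G.toGraph.Adj →
      L.Nodup →
      (L.filterMap (gX C)).toFinset.card ≤ (L.filterMap (gY G C)).toFinset.card + 1 from
    fun L => H L.length L le_rfl
  intro N
  induction N with
  | zero =>
    intro L hL _ _
    rw [List.length_eq_zero_iff.1 (Nat.le_zero.1 hL)]
    simp
  | succ N IHN =>
    intro L hL hch hnd
    match L with
    | [] => simp
    | [Sum.inl a] => simp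
    | [Sum.inr y] => by_cases hc : crossP G C y <;> simp [hc, List.filterMap_cons]
    | Sum.inl a :: Sum.inl a' :: L'' =>
        exact absurd (List.isChain_cons_cons.1 hch).1
          (by intro h; rcases adj_of_inl h with ⟨y, hy, _⟩; simp at hy)
    | Sum.inr y :: L' =>
        have IH' := IHN L' (by simp at hL ⊢; omega) hch.tail hnd.of_cons
        refine le_trans ?_ (le_trans IH' ?_)
        · apply Finset.card_le_card
          simp [List.filterMap_cons]
        · gcongr
          by_cases hc : crossP G C y <;>
            simp [List.filterMap_cons, hc, List.toFinset_cons, Finset.subset_insert]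
    | Sum.inl a :: Sum.inr y :: L'' =>
        have hadj : G.adj a y := by
          rcases adj_of_inl (List.isChain_cons_cons.1 hch).1 with ⟨y', hy', ha⟩
          cases hy'; exact ha
        have hch' : (Sum.inr y :: L'').Chain' G.toGraph.Adj := (List.isChain_cons_cons.1 hch).2
        have IH'' := IHN L'' (by simp at hL ⊢; omega) hch'.tail (hnd.of_cons.of_cons)
        set vA : ℕ := (C.filter (· < a.val)).card with hvA
        have hXeq : ((Sum.inl a :: Sum.inr y :: L'').filterMap (gX C)).toFinset
            = insert vA (L''.filterMap (gX C)).toFinset := by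
          simp [List.filterMap_cons, hvA]
        have hYsub : (L''.filterMap (gY G C)).toFinset ⊆
            (((Sum.inl a :: Sum.inr y :: L'')).filterMap (gY G C)).toFinset := by
          by_cases hc : crossP G C y <;>
            simp [List.filterMap_cons, hc, List.toFinset_cons, Finset.subset_insert]
        by_cases hmem : vA ∈ (L''.filterMap (gX C)).toFinset
        · rw [hXeq, Finset.insert_eq_self.2 hmem]
          exact le_trans IH'' (Nat.add_le_add_right (Finset.card_le_card hYsub) 1)
        · rcases hL2 : L'' with _ | ⟨v, L₃⟩
          · simp [hXeq, List.filterMap_cons]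
          · subst hL2
            rcases adj_of_inr (List.isChain_cons_cons.1 hch').1 with ⟨a₁, hv, hadj1⟩
            subst hv
            have hne : vA ≠ (C.filter (· < a₁.val)).card := by
              intro h; apply hmem
              simp [List.filterMap_cons, ← h]
            have hcross : crossP G C y := by
              rcases Nat.lt_or_ge a.val a₁.val with hlt | hge
              · have hss : C.filter (· < a.val) ⊆ C.filter (· < a₁.val) := by
                  intro c hc; simp only [Finset.mem_filter] at hc ⊢; exact ⟨hc.1, by omega⟩
                have : C.filter (· < a.val) ≠ C.filter (· < a₁.val) := by
                  intro h; exact hne (by rw [hvA, h])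
                obtain ⟨c, hc1, hc2⟩ := Finset.exists_of_ssubset (hss.ssubset_of_ne this)
                simp only [Finset.mem_filter] at hc1 hc2
                have hc3 : ¬ c < a.val := fun h => hc2 ⟨hc1.1, h⟩
                exact ⟨c, hc1.1, a, a₁, hadj, hadj1, by omega, hc1.2⟩
              · have hss : C.filter (· < a₁.val) ⊆ C.filter (· < a.val) := by
                  intro c hc; simp only [Finset.mem_filter] at hc ⊢; exact ⟨hc.1, by omega⟩
                have : C.filter (· < a₁.val) ≠ C.filter (· < a.val) := by
                  intro h; exact hne (by rw [hvA, ← h])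
                obtain ⟨c, hc1, hc2⟩ := Finset.exists_of_ssubset (hss.ssubset_of_ne this)
                simp only [Finset.mem_filter] at hc1 hc2
                have hc3 : ¬ c < a₁.val := fun h => hc2 ⟨hc1.1, h⟩
                exact ⟨c, hc1.1, a₁, a, hadj1, hadj, by omega, hc1.2⟩
            have hynotin : y ∉ ((Sum.inl a₁ :: L₃).filterMap (gY G C)).toFinset := by
              intro hmem'
              simp only [List.mem_toFinset, List.mem_filterMap] at hmem'
              obtain ⟨v, hvmem, hvy⟩ := hmem'
              obtain ⟨rfl, _⟩ := mem_of_gY G C hvy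
              exact (hnd.of_cons).notMem hvmem
            have hYeq : (((Sum.inl a :: Sum.inr y :: Sum.inl a₁ :: L₃)).filterMap
                (gY G C)).toFinset
                = insert y ((Sum.inl a₁ :: L₃).filterMap (gY G C)).toFinset := by
              simp [List.filterMap_cons, hcross, List.toFinset_cons]
            rw [hXeq, hYeq, Finset.card_insert_of_notMem hmem,
              Finset.card_insert_of_notMem hynotin]
            omega

lemma ivt (C : Finset ℕ) : ∀ (m v : ℕ), v ≤ (C.filter (· < m)).card →
    ∃ i ≤ m, (C.filter (· < i)).card = v := by
  intro m
  induction m with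
  | zero =>
    intro v hv
    refine ⟨0, le_rfl, ?_⟩
    have : C.filter (· < 0) = ∅ := by
      apply Finset.filter_false_of_mem; intro x _; omega
    simp [this] at hv ⊢
    omega
  | succ m IH =>
    intro v hv
    rcases Nat.lt_or_ge ((C.filter (· < m)).card) v with hlt | hge
    · refine ⟨m + 1, le_rfl, ?_⟩
      have hstep : (C.filter (· < m + 1)).card ≤ (C.filter (· < m)).card + 1 := by
        have : C.filter (· < m + 1) ⊆ insert m (C.filter (· < m)) := by
          intro c hc
          simp only [Finset.mem_filter] at hc
          rcases Nat.lt_or_ge c m with h | h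
          · exact Finset.mem_insert_of_mem (Finset.mem_filter.2 ⟨hc.1, h⟩)
          · have : c = m := by omega
            simp [this]
        calc (C.filter (· < m + 1)).card ≤ _ := Finset.card_le_card this
          _ ≤ _ := Finset.card_insert_le _ _
      omega
    · obtain ⟨i, hi, hiv⟩ := IH v hge
      exact ⟨i, by omega, hiv⟩

lemma cross_card [Fintype Y] (G : ConvexBip n Y) (hn : 0 < n) (L : List (Fin n ⊕ Y))
    (hmem : ∀ v, v ∈ L) (hch : L.Chain' G.toGraph.Adj) (hnd : L.Nodup)
    (C : Finset ℕ) (hC : ∀ c ∈ C, c + 1 < n) :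
    C.card ≤ {y : Y | crossP G C y}.ncard := by
  set TX := (L.filterMap (gX C)).toFinset with hTX
  set TY := (L.filterMap (gY G C)).toFinset with hTY
  have hYsub : (↑TY : Set Y) ⊆ {y : Y | crossP G C y} := by
    intro y hy
    simp only [hTY, List.coe_toFinset, Set.mem_setOf_eq, List.mem_filterMap] at hy
    obtain ⟨v, _, hvy⟩ := hy
    exact (mem_of_gY G C hvy).2
  have hTYcard : TY.card ≤ {y : Y | crossP G C y}.ncard := by
    rw [← Set.ncard_coe_finset]
    exact Set.ncard_le_ncard hYsub (Set.toFinite _)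
  have hfull : (C.filter (· < n - 1)).card = C.card := by
    congr 1
    apply Finset.filter_true_of_mem
    intro c hc
    have := hC c hc
    omega
  have hrange : Finset.range (C.card + 1) ⊆ TX := by
    intro v hv
    rw [Finset.mem_range] at hv
    obtain ⟨i, hi, hiv⟩ := ivt C (n - 1) v (by omega)
    have hin : i < n := by omega
    have : Sum.inl (⟨i, hin⟩ : Fin n) ∈ L := hmem _
    simp only [hTX, List.mem_toFinset, List.mem_filterMap]
    exact ⟨Sum.inl ⟨i, hin⟩, this, by simp [hiv]⟩
  have h1 : C.card + 1 ≤ TX.card := by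
    simpa using Finset.card_le_card hrange
  have h2 : TX.card ≤ TY.card + 1 := lemR G C L hch hnd
  omega

end R

lemma NIn_card_le [Fintype Y] [DecidableEq Y] (G : ConvexBip n Y) (L : List (Fin n ⊕ Y))
    (hmem : ∀ v, v ∈ L) (hch : L.Chain' G.toGraph.Adj) (hnd : L.Nodup)
    (p q r : Fin n) (hpq : p ≤ q) (hr : r < p ∨ q < r) :
    (G.NIn p q).ncard ≤ q.val - p.val + 1 := by
  classical
  set Sfin := Finset.univ.filter (fun y => y ∈ G.NIn p q) with hSfin
  have hset : G.NIn p q = ↑Sfin := by ext y; simp [hSfin]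
  set X' := Finset.Icc p q with hX'
  have hS : ∀ y ∈ Sfin, ∀ i, G.adj i y → i ∈ X' := by
    intro y hy i hi
    simp only [hSfin, Finset.mem_filter] at hy
    obtain ⟨h1, h2⟩ := hy.2 i hi
    rw [hX', Finset.mem_Icc]
    exact ⟨h1, h2⟩
  obtain ⟨L1, L2, hL⟩ := List.append_of_mem (hmem (Sum.inl r))
  have hrX : r ∉ X' := by
    rw [hX', Finset.mem_Icc]
    rintro ⟨h1, h2⟩
    rcases hr with h | h
    · exact absurd h1 (not_le.2 h)
    · exact absurd h2 (not_le.2 h)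
  have hch2 : (Sum.inl r :: L2).Chain' G.toGraph.Adj :=
    (hL ▸ hch).suffix ⟨L1, rfl⟩
  have hchpre : (L1 ++ [Sum.inl r]).Chain' G.toGraph.Adj :=
    (hL ▸ hch).prefix ⟨L2, by simp⟩
  have hch1 : ((Sum.inl r :: L1.reverse)).Chain' G.toGraph.Adj := by
    have h' : (L1 ++ [Sum.inl r]).Chain' (flip G.toGraph.Adj) :=
      hchpre.imp (fun a b hab => hab.symm)
    have := List.isChain_reverse.2 h'
    simp at this; exact this
  have Q2 := lemQ G Sfin X' hS (Sum.inl r :: L2) hch2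
  have Q1 := lemQ G Sfin X' hS (Sum.inl r :: L1.reverse) hch1
  simp only [List.filterMap_cons, fS_inl, fX_inl, if_neg hrX, ind_inl,
    List.filterMap_reverse, List.length_reverse, Nat.add_zero] at Q1 Q2
  have hSlen : Sfin.card ≤ (L.filterMap (fS Sfin)).length := by
    have hsub : Sfin ⊆ (L.filterMap (fS Sfin)).toFinset := by
      intro y hy
      simp only [List.mem_toFinset, List.mem_filterMap]
      exact ⟨Sum.inr y, hmem _, by simp [hy]⟩
    calc Sfin.card ≤ _ := Finset.card_le_card hsub
      _ ≤ _ := List.toFinset_card_le _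
  have hXlen : (L.filterMap (fX X')).length ≤ X'.card := by
    have hndX : (L.filterMap (fX X')).Nodup := by
      refine hnd.filterMap ?_
      intro a a' b hb hb'
      rw [(mem_of_fX hb).1, (mem_of_fX hb').1]
    rw [← List.toFinset_card_of_nodup hndX]
    apply Finset.card_le_card
    intro i hi
    simp only [List.mem_toFinset, List.mem_filterMap] at hi
    obtain ⟨v, _, hv⟩ := hi
    exact (mem_of_fX hv).2
  have hsplitS : (L.filterMap (fS Sfin)).length
      = (L1.filterMap (fS Sfin)).length + (L2.filterMap (fS Sfin)).length := by
    rw [hL]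
    simp [List.filterMap_append, List.filterMap_cons]
  have hsplitX : (L.filterMap (fX X')).length
      = (L1.filterMap (fX X')).length + (L2.filterMap (fX X')).length := by
    rw [hL]
    simp [List.filterMap_append, List.filterMap_cons, if_neg hrX]
  have hXcard : X'.card = q.val + 1 - p.val := Fin.card_Icc p q
  have hple : p.val ≤ q.val := hpq
  rw [hset, Set.ncard_coe_finset]
  omega

end ConvexBip
end Aux

/-- if a connected convex bipartite graph has a Hamiltonian path then it
satisfies Property B. -/
theorem stmt_6 {n : ℕ} {Y : Type*} [Fintype Y] [DecidableEq Y]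
    (G : ConvexBip n Y) (hconn : G.toGraph.Connected)
    (hham : ConvexBip.HasHamPath G.toGraph) :
    G.PropertyB := by
  classical
  obtain ⟨u, v, P, hP⟩ := hham
  set L := P.support with hLdef
  have hmem : ∀ w, w ∈ L := fun w => hP.mem_support w
  have hnd : L.Nodup := hP.isPath.support_nodup
  have hch : L.Chain' G.toGraph.Adj := P.isChain_adj_support
  have hlenL : L.length = n + Fintype.card Y := by
    have h1 : L.toFinset = Finset.univ := by
      apply Finset.eq_univ_of_forall
      intro w; simp [hmem w]
    have := List.toFinset_card_of_nodup hnd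
    rw [h1] at this
    simp only [Finset.card_univ, Fintype.card_sum, Fintype.card_fin] at this
    omega
  constructor
  · -- Part 1: interval upper bound
    intro p q hpq hcases
    have : ∃ r : Fin n, r < p ∨ q < r := by
      rcases hcases with ⟨h1, h2⟩ | ⟨h1, h2⟩ | ⟨h1, h2⟩
      · exact ⟨⟨n - 1, by omega⟩, Or.inr (by simpa [Fin.lt_def] using h2)⟩
      · exact ⟨⟨0, by omega⟩, Or.inl (by simpa [Fin.lt_def] using h1)⟩
      · exact ⟨⟨0, by omega⟩, Or.inl (by simpa [Fin.lt_def] using h1)⟩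
    obtain ⟨r, hr⟩ := this
    exact ConvexBip.NIn_card_le G L hmem hch hnd p q r hpq.le hr
  refine ⟨?_, ?_, ?_⟩
  · -- Part 2: global upper bound
    intro hn
    have hYcard : Fintype.card Y ≤ n + 1 := by
      have Q := ConvexBip.lemQ G Finset.univ Finset.univ
        (fun y _ i _ => Finset.mem_univ i) L hch
      have hSlen : (Finset.univ : Finset Y).card ≤ (L.filterMap (ConvexBip.fS Finset.univ)).length := by
        have hsub : (Finset.univ : Finset Y) ⊆ (L.filterMap (ConvexBip.fS Finset.univ)).toFinset := by
          intro y _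
          simp only [List.mem_toFinset, List.mem_filterMap]
          exact ⟨Sum.inr y, hmem _, by simp⟩
        calc _ ≤ _ := Finset.card_le_card hsub
          _ ≤ _ := List.toFinset_card_le _
      have hXlen : (L.filterMap (ConvexBip.fX (Finset.univ : Finset (Fin n)))).length
          ≤ (Finset.univ : Finset (Fin n)).card := by
        have hndX : (L.filterMap (ConvexBip.fX (Finset.univ : Finset (Fin n)))).Nodup := by
          refine hnd.filterMap ?_
          intro a a' b hb hb'
          rw [(ConvexBip.mem_of_fX hb).1, (ConvexBip.mem_of_fX hb').1]
        rw [← List.toFinset_card_of_nodup hndX]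
        exact Finset.card_le_card (fun i _ => Finset.mem_univ i)
      have hind : ConvexBip.ind L ≤ 1 := by
        match L with
        | [] => simp
        | Sum.inl a :: L' => simp
        | Sum.inr y :: L' => simp
      simp only [Finset.card_univ, Fintype.card_fin] at hSlen hXlen
      omega
    calc (G.NIn ⟨0, hn⟩ ⟨n - 1, by omega⟩).ncard ≤ (Set.univ : Set Y).ncard :=
          Set.ncard_le_ncard (Set.subset_univ _) Set.finite_univ
      _ = Fintype.card Y := by rw [Set.ncard_univ, Nat.card_eq_fintype_card]
      _ ≤ n + 1 := hYcard
  · -- Part 3: lower bound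
    intro k p q hk1 hk2 hpq hord
    have hn2 : 2 ≤ n := by omega
    set C : Finset ℕ := Finset.univ.biUnion (fun i => Finset.Ico (p i).val (q i).val) with hC
    have hCcard : C.card = ∑ i, ((q i).val - (p i).val) := by
      rw [hC, Finset.card_biUnion]
      · apply Finset.sum_congr rfl
        intro i _
        exact Nat.card_Ico _ _
      · intro i _ i' _ hne
        apply Finset.disjoint_left.2
        intro c hc hc'
        simp only [Finset.mem_Ico] at hc hc'
        rcases lt_or_gt_of_ne hne with h | h
        · have := hord i i' h
          have : (q i).val ≤ (p i').val := this
          omega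
        · have := hord i' i h
          have : (q i').val ≤ (p i).val := this
          omega
    have hCbound : ∀ c ∈ C, c + 1 < n := by
      intro c hc
      simp only [hC, Finset.mem_biUnion, Finset.mem_Ico] at hc
      obtain ⟨i, _, _, h2⟩ := hc
      have := (q i).isLt
      omega
    have hcross := ConvexBip.cross_card G (by omega) L hmem hch hnd C hCbound
    have hsub : {y : Y | ConvexBip.crossP G C y} ⊆ ⋃ i, G.NIn' (p i) (q i) := by
      intro y hy
      obtain ⟨c, hcC, a, b, hay, hby, hac, hcb⟩ := hy
      simp only [hC, Finset.mem_biUnion, Finset.mem_Ico] at hcC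
      obtain ⟨i, _, hpc, hcq⟩ := hcC
      refine Set.mem_iUnion.2 ⟨i, ?_⟩
      have hcn : c < n := by have := (q i).isLt; omega
      have hc1n : c + 1 < n := by have := (q i).isLt; omega
      have hadjc : G.adj ⟨c, hcn⟩ y := by
        apply G.convex y a ⟨c, hcn⟩ b
        · exact Fin.le_def.2 hac
        · exact Fin.le_def.2 (le_of_lt hcb)
        · exact hay
        · exact hby
      have hadjc1 : G.adj ⟨c + 1, hc1n⟩ y := by
        apply G.convex y a ⟨c + 1, hc1n⟩ b
        · exact Fin.le_def.2 (by simp; omega)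
        · exact Fin.le_def.2 (by simp; omega)
        · exact hay
        · exact hby
      show 2 ≤ _
      have h2lt : 1 < {j : Fin n | G.adj j y ∧ p i ≤ j ∧ j ≤ q i}.ncard := by
        rw [Set.one_lt_ncard (Set.toFinite _)]
        refine ⟨⟨c, hcn⟩, ⟨hadjc, ?_, ?_⟩, ⟨c + 1, hc1n⟩, ⟨hadjc1, ?_, ?_⟩, ?_⟩
        · exact Fin.le_def.2 (by simpa using hpc)
        · exact Fin.le_def.2 (by simp; omega)
        · exact Fin.le_def.2 (by simp; omega)
        · exact Fin.le_def.2 (by simpa using hcq)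
        · intro h
          have := congrArg Fin.val h
          simp at this
      omega
    calc (∑ i, ((q i).val - (p i).val)) = C.card := hCcard.symm
      _ ≤ {y : Y | ConvexBip.crossP G C y}.ncard := hcross
      _ ≤ (⋃ i, G.NIn' (p i) (q i)).ncard := Set.ncard_le_ncard hsub (Set.toFinite _)
  · -- Part 4: pendant vertices
    letI : BEq (Fin n ⊕ Y) := instBEqOfDecidableEq
    let pos : (Fin n ⊕ Y) → ℕ := fun w => @List.idxOf _ instBEqOfDecidableEq w L
    have hNL : ∀ w : Fin n ⊕ Y, pos w < L.length :=
      fun w => List.idxOf_lt_length_iff.2 (hmem w)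
    have hget : ∀ w : Fin n ⊕ Y, L[pos w]'(hNL w) = w :=
      fun w => List.getElem_idxOf (hNL w)
    have hchain : ∀ (i : ℕ) (h : i + 1 < L.length),
        G.toGraph.Adj (L[i]'(by omega)) (L[i+1]'h) := by
      have hc := List.isChain_iff_getElem.1 hch
      intro i h
      simpa using hc i (by omega)
    have key4 : ∀ y : Y, G.degY y = 1 →
        pos (Sum.inr y) = 0 ∨ pos (Sum.inr y) = L.length - 1 := by
      intro y hdeg
      by_contra hcon
      push_neg at hcon
      obtain ⟨h0, hlast⟩ := hcon
      set t := pos (Sum.inr y) with hts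
      have ht : t < L.length := hNL _
      have hgt : L[t]'ht = Sum.inr y := hget _
      have ht0 : 0 < t := Nat.pos_of_ne_zero h0
      have ht1 : t + 1 < L.length := by omega
      have h1 : G.toGraph.Adj (L[t-1]'(by omega)) (L[t-1+1]'(by omega)) :=
        hchain (t-1) (by omega)
      have e : t - 1 + 1 = t := by omega
      simp only [e] at h1
      rw [hgt] at h1
      have h2 : G.toGraph.Adj (L[t]'ht) (L[t+1]'ht1) := hchain t ht1
      rw [hgt] at h2
      obtain ⟨i₁, hv1, hadj1⟩ := ConvexBip.adj_of_inr h1.symm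
      obtain ⟨i₂, hv2, hadj2⟩ := ConvexBip.adj_of_inr h2
      have hne12 : i₁ ≠ i₂ := by
        intro h
        have : (L[t-1]'(by omega)) = (L[t+1]'ht1) := by rw [hv1, hv2, h]
        have := (hnd.getElem_inj_iff).1 this
        omega
      have : 1 < {i : Fin n | G.adj i y}.ncard := by
        rw [Set.one_lt_ncard (Set.toFinite _)]
        exact ⟨i₁, hadj1, i₂, hadj2, hne12⟩
      rw [show {i : Fin n | G.adj i y}.ncard = G.degY y from rfl, hdeg] at this
      omega
    constructor
    · -- at most two pendant Y vertices
      have hinj : Set.InjOn (fun y : Y => pos (Sum.inr y))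
          {y : Y | G.degY y = 1} := by
        intro y1 h1 y2 h2 h
        have e1 := hget (Sum.inr y1)
        have e2 := hget (Sum.inr y2)
        simp only at h
        simp only [h] at e1
        rw [e1] at e2
        exact Sum.inr.inj e2
      calc {y : Y | G.degY y = 1}.ncard
          ≤ ({0, L.length - 1} : Set ℕ).ncard := by
            apply Set.ncard_le_ncard_of_injOn (fun y => pos (Sum.inr y))
            · intro y hy
              rcases key4 y hy with h | h <;> simp [h]
            · exact hinj
        _ ≤ 2 := by
            apply le_trans (Set.ncard_insert_le _ _)
            simp
    · -- no common support of two pendant Y vertices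
      intro hn i y y' hne hd hd' hadj hadj'
      have main : ∀ (z z' : Y), z ≠ z' → G.degY z = 1 → G.degY z' = 1 →
          G.adj i z → G.adj i z' → pos (Sum.inr z) = 0 →
          pos (Sum.inr z') = L.length - 1 → False := by
        intro z z' hzne hdz hdz' haz haz' h0 hN
        have hcardY : 2 ≤ Fintype.card Y := Fintype.one_lt_card_iff_nontrivial.2 ⟨⟨z, z', hzne⟩⟩
        have hlen4 : 4 ≤ L.length := by omega
        have hg0 : L[0]'(by omega) = Sum.inr z := by
          have := hget (Sum.inr z); simp only [h0] at this; exact this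
        have hgN : L[L.length - 1]'(by omega) = Sum.inr z' := by
          have := hget (Sum.inr z'); simp only [hN] at this; exact this
        have hone : ∀ (w : Y), G.degY w = 1 → G.adj i w → ∀ j, G.adj j w → j = i := by
          intro w hw haw j hjw
          obtain ⟨a, ha⟩ := Set.ncard_eq_one.1 hw
          have hj : j ∈ {i : Fin n | G.adj i w} := hjw
          have hi : i ∈ {i : Fin n | G.adj i w} := haw
          rw [ha] at hj hi
          simp at hj hi
          rw [hj, hi]
        have hA0 : G.toGraph.Adj (L[0]'(by omega)) (L[1]'(by omega)) := hchain 0 (by omega)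
        rw [hg0] at hA0
        obtain ⟨j, hj1, hjadj⟩ := ConvexBip.adj_of_inr hA0
        have hji : j = i := hone z hdz haz j hjadj
        have hAN : G.toGraph.Adj (L[L.length - 2]'(by omega)) (L[L.length - 2 + 1]'(by omega)) :=
          hchain (L.length - 2) (by omega)
        have e2 : L.length - 2 + 1 = L.length - 1 := by omega
        simp only [e2] at hAN
        rw [hgN] at hAN
        obtain ⟨j', hj'1, hj'adj⟩ := ConvexBip.adj_of_inr hAN.symm
        have hj'i : j' = i := hone z' hdz' haz' j' hj'adj
        have heq : (L[1]'(by omega)) = (L[L.length - 2]'(by omega)) := by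
          rw [hj1, hj'1, hji, hj'i]
        have := (hnd.getElem_inj_iff).1 heq
        omega
      have hdiff : pos (Sum.inr y) ≠ pos (Sum.inr y') := by
        intro h
        have e1 := hget (Sum.inr y)
        have e2 := hget (Sum.inr y')
        simp only [h] at e1
        rw [e1] at e2
        exact hne (Sum.inr.inj e2)
      have hlenpos : 0 < L.length := by omega
      rcases key4 y hd with h1 | h1 <;> rcases key4 y' hd' with h2 | h2
      · exact hdiff (by rw [h1, h2])
      · exact main y y' hne hd hd' hadj hadj' h1 h2
      · exact main y' y hne.symm hd' hd hadj' hadj h2 h1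
      · exact hdiff (by rw [h1, h2])
end

section
/- Every monotone convex bipartite graph has a Hamiltonian path. -/
open Finset SimpleGraph

section ListWalk
variable {V : Type*}

lemma exists_walk_of_chain' [DecidableEq V] (H : SimpleGraph V) :
    ∀ (l : List V) (a c : V) (h : l ≠ []), l.head h = a → l.getLast h = c →
    l.Chain' H.Adj → ∃ p : H.Walk a c, p.support = l := by
  intro l
  induction l with
  | nil => intro a c h; exact absurd rfl h
  | cons x l ih =>
    intro a c h ha hc hch
    cases l with
    | nil =>
      simp at ha hc; subst ha; subst hc
      exact ⟨Walk.nil, rfl⟩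
    | cons b t =>
      simp at ha; subst ha
      have hadj : H.Adj x b := hch.rel_head
      obtain ⟨p, hp⟩ := ih b c (by simp) rfl
        (by rw [← hc]; simp [List.getLast_cons]) hch.tail
      exact ⟨Walk.cons hadj p, by simp [Walk.support_cons, hp]⟩

lemma hasHamPath_of_list [DecidableEq V] (H : SimpleGraph V) (l : List V) (hne : l ≠ [])
    (hch : l.Chain' H.Adj) (hnd : l.Nodup) (hcov : ∀ v, v ∈ l) :
    ∃ (u v : V) (p : H.Walk u v), p.IsHamiltonian := by
  obtain ⟨p, hp⟩ := exists_walk_of_chain' H l (l.head hne) (l.getLast hne) hne rfl rfl hch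
  exact ⟨_, _, p, fun v => by rw [hp]; exact List.count_eq_one_of_mem hnd (hcov v)⟩

/-- generic alternating list -/
def clist (x g : ℕ → V) : ℕ → ℕ → List V
  | i, 0 => [x i]
  | i, k+1 => x i :: g i :: clist x g (i+1) k

lemma clist_ne_nil (x g : ℕ → V) (i k : ℕ) : clist x g i k ≠ [] := by
  cases k <;> simp [clist]

lemma clist_head (x g : ℕ → V) (i k : ℕ) (h : _ ≠ []) : (clist x g i k).head h = x i := by
  cases k <;> simp [clist]

lemma clist_getLast (x g : ℕ → V) : ∀ i k (h : _ ≠ []), (clist x g i k).getLast h = x (i + k) := by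
  intro i k
  induction k generalizing i with
  | zero => intro h; simp [clist]
  | succ k ih =>
    intro h
    have := ih (i+1) (clist_ne_nil x g (i+1) k)
    simp only [clist]
    rw [List.getLast_cons (by simp [clist_ne_nil]), List.getLast_cons (clist_ne_nil x g (i+1) k)]
    rw [this]; ring_nf

lemma clist_mem (x g : ℕ → V) : ∀ i k (v : V), v ∈ clist x g i k ↔
    (∃ j, i ≤ j ∧ j ≤ i + k ∧ v = x j) ∨ (∃ j, i ≤ j ∧ j < i + k ∧ v = g j) := by
  intro i k
  induction k generalizing i with
  | zero =>
    intro v; simp [clist]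
    constructor
    · rintro rfl; exact Or.inl ⟨i, le_refl _, le_refl _, rfl⟩
    · rintro (⟨j, h1, h2, rfl⟩ | ⟨j, h1, h2, rfl⟩) <;> [skip; omega]
      have : j = i := by omega
      rw [this]
  | succ k ih =>
    intro v
    simp only [clist, List.mem_cons, ih (i+1)]
    constructor
    · rintro (rfl | rfl | ⟨j, h1, h2, rfl⟩ | ⟨j, h1, h2, rfl⟩)
      · exact Or.inl ⟨i, le_refl _, by omega, rfl⟩
      · exact Or.inr ⟨i, le_refl _, by omega, rfl⟩
      · exact Or.inl ⟨j, by omega, by omega, rfl⟩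
      · exact Or.inr ⟨j, by omega, by omega, rfl⟩
    · rintro (⟨j, h1, h2, rfl⟩ | ⟨j, h1, h2, rfl⟩)
      · rcases eq_or_lt_of_le h1 with rfl | hlt
        · exact Or.inl rfl
        · exact Or.inr (Or.inr (Or.inl ⟨j, by omega, by omega, rfl⟩))
      · rcases eq_or_lt_of_le h1 with rfl | hlt
        · exact Or.inr (Or.inl rfl)
        · exact Or.inr (Or.inr (Or.inr ⟨j, by omega, by omega, rfl⟩))

lemma clist_head? (x g : ℕ → V) (i k : ℕ) : (clist x g i k).head? = some (x i) := by
  cases k <;> simp [clist]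

lemma clist_getLast? {V : Type*} (x g : ℕ → V) (i k : ℕ) :
    (clist x g i k).getLast? = some (x (i+k)) := by
  rw [List.getLast?_eq_getLast (clist_ne_nil _ _ _ _), clist_getLast]

lemma clist_chain' (H : SimpleGraph V) (x g : ℕ → V) : ∀ i k,
    (∀ j, i ≤ j → j < i + k → H.Adj (x j) (g j) ∧ H.Adj (g j) (x (j+1))) →
    (clist x g i k).Chain' H.Adj := by
  intro i k
  induction k generalizing i with
  | zero => intro _; simp only [clist]; exact List.isChain_singleton _
  | succ k ih =>
    intro hadj
    simp only [clist]
    refine List.isChain_cons_cons.mpr ?_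
    refine ⟨(hadj i (le_refl _) (by omega)).1, ?_⟩
    · rw [List.isChain_cons]
      refine ⟨?_, ih (i+1) (fun j h1 h2 => hadj j (by omega) (by omega))⟩
      intro y hy
      rw [clist_head? x g (i+1) k] at hy
      cases hy
      exact (hadj i (le_refl _) (by omega)).2

end ListWalk

section ND
variable {V : Type*}
lemma clist_nodup (x g : ℕ → V) : ∀ i k,
    (∀ j j', i ≤ j → j ≤ i+k → i ≤ j' → j' ≤ i+k → x j = x j' → j = j') →
    (∀ j j', i ≤ j → j < i+k → i ≤ j' → j' < i+k → g j = g j' → j = j') →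
    (∀ j j', i ≤ j → j ≤ i+k → i ≤ j' → j' < i+k → x j ≠ g j') →
    (clist x g i k).Nodup := by
  intro i k
  induction k generalizing i with
  | zero => intro _ _ _; simp [clist]
  | succ k ih =>
    intro hx hg hxg
    simp only [clist, List.nodup_cons]
    refine ⟨?_, ?_, ih (i+1) (fun j j' a b c d e => hx j j' (by omega) (by omega) (by omega)
      (by omega) e) (fun j j' a b c d e => hg j j' (by omega) (by omega) (by omega) (by omega) e)
      (fun j j' a b c d => hxg j j' (by omega) (by omega) (by omega) (by omega))⟩
    · simp only [List.mem_cons, clist_mem]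
      rintro (h | ⟨j, h1, h2, h3⟩ | ⟨j, h1, h2, h3⟩)
      · exact hxg i i (le_refl _) (by omega) (le_refl _) (by omega) h
      · have := hx i j (le_refl _) (by omega) (by omega) (by omega) h3; omega
      · exact hxg i j (le_refl _) (by omega) (by omega) (by omega) h3
    · rw [clist_mem]
      rintro (⟨j, h1, h2, h3⟩ | ⟨j, h1, h2, h3⟩)
      · exact hxg j i (by omega) (by omega) (le_refl _) (by omega) h3.symm
      · have := hg i j (le_refl _) (by omega) (by omega) (by omega) h3; omega
end ND
set_option linter.unusedSectionVars false

noncomputable section Aux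
open scoped Classical
namespace ConvexBip
open Sum

variable {n : ℕ} {Y : Type*} [Fintype Y] [DecidableEq Y]

/-- Finset of neighbors of `y`. -/
def NbrF (G : ConvexBip n Y) (y : Y) : Finset (Fin n) := univ.filter (fun i => G.adj i y)

/-- ℕ-level adjacency. -/
def aN (G : ConvexBip n Y) (i : ℕ) (y : Y) : Prop := ∃ h : i < n, G.adj ⟨i, h⟩ y

/-- Finset version of `NIn` with ℕ endpoints. -/
def NInF (G : ConvexBip n Y) (a b : ℕ) : Finset Y :=
  univ.filter (fun y => ∀ i ∈ G.NbrF y, a ≤ i.val ∧ i.val ≤ b)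

variable (G : ConvexBip n Y)

lemma mem_NbrF {i : Fin n} {y : Y} : i ∈ G.NbrF y ↔ G.adj i y := by simp [NbrF]

lemma mem_NInF {a b : ℕ} {y : Y} :
    y ∈ G.NInF a b ↔ ∀ i : Fin n, G.adj i y → a ≤ i.val ∧ i.val ≤ b := by
  simp [NInF, mem_NbrF]

lemma NIn_eq_NInF (p q : Fin n) : G.NIn p q = ↑(G.NInF p.val q.val) := by
  ext y
  rw [Finset.mem_coe, mem_NInF]
  constructor
  · intro h i hi
    have := h i hi
    rw [Fin.le_def, Fin.le_def] at this
    exact this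
  · intro h i hi
    have := h i hi
    rw [Fin.le_def, Fin.le_def]
    exact this

lemma ncard_NIn (p q : Fin n) : (G.NIn p q).ncard = (G.NInF p.val q.val).card := by
  rw [NIn_eq_NInF, Set.ncard_coe_finset]

lemma degY_eq (y : Y) : G.degY y = (G.NbrF y).card := by
  rw [degY, show {i : Fin n | G.adj i y} = ↑(G.NbrF y) by ext i; simp [mem_NbrF],
    Set.ncard_coe_finset]

/-- membership in `NIn'` for a unit interval. -/
lemma mem_NIn'_pair {p q : Fin n} (hpq : q.val = p.val + 1) {y : Y} :
    y ∈ G.NIn' p q ↔ G.adj p y ∧ G.adj q y := by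
  have hsub : {i : Fin n | G.adj i y ∧ p ≤ i ∧ i ≤ q} ⊆ {p, q} := by
    rintro i ⟨_, h1, h2⟩
    rw [Fin.le_def] at h1 h2
    have : i.val = p.val ∨ i.val = q.val := by omega
    rcases this with h | h
    · exact Or.inl (Fin.ext h)
    · exact Or.inr (Fin.ext h)
  constructor
  · intro h
    have hfin : {i : Fin n | G.adj i y ∧ p ≤ i ∧ i ≤ q}.Finite := Set.toFinite _
    obtain ⟨a, b, ha, hb, hab⟩ := (Set.one_lt_ncard_iff hfin).mp (by
      simp only [NIn', Set.mem_setOf_eq] at h; omega)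
    have hpa := hsub ha; have hpb := hsub hb
    rcases hpa with rfl | rfl <;> rcases hpb with rfl | rfl
    · exact absurd rfl hab
    · exact ⟨ha.1, hb.1⟩
    · exact ⟨hb.1, ha.1⟩
    · exact absurd rfl hab
  · rintro ⟨h1, h2⟩
    have hne : p ≠ q := by intro h; rw [h] at hpq; omega
    simp only [NIn', Set.mem_setOf_eq]
    apply (Set.one_lt_ncard_iff (Set.toFinite _)).mpr
    refine ⟨p, q, ⟨h1, le_refl _, by rw [Fin.le_def]; omega⟩,
      ⟨h2, by rw [Fin.le_def]; omega, le_refl _⟩, hne⟩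

lemma adj_inl_inr {i : Fin n} {y : Y} : G.toGraph.Adj (inl i) (inr y) ↔ G.adj i y := by
  constructor
  · rintro (⟨i', y', h1, h2, h3⟩ | ⟨i', y', h1, _, _⟩)
    · cases h1; cases h2; exact h3
    · exact absurd h1 (by simp)
  · intro h; exact Or.inl ⟨i, y, rfl, rfl, h⟩

lemma adj_inr_inl {i : Fin n} {y : Y} : G.toGraph.Adj (inr y) (inl i) ↔ G.adj i y := by
  rw [G.toGraph.adj_comm, adj_inl_inr]

/-- In the bipartite graph, neighbors of `inr y` are of the form `inl i`. -/
lemma exists_nbr_of_adj {y : Y} {w : Fin n ⊕ Y} (h : G.toGraph.Adj (inr y) w) :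
    ∃ i : Fin n, G.adj i y := by
  rcases h with ⟨i, y', h1, _, _⟩ | ⟨i, y', h1, h2, h3⟩
  · exact absurd h1 (by simp)
  · cases h1; exact ⟨i, h3⟩

/-- Every `y` has a neighbor, provided the graph is connected. -/
lemma NbrF_nonempty (hconn : G.toGraph.Connected) (hn : 0 < n) (y : Y) :
    (G.NbrF y).Nonempty := by
  obtain ⟨w⟩ := hconn.preconnected (inr y) (inl ⟨0, hn⟩)
  cases w with
  | cons h _ =>
    obtain ⟨i, hi⟩ := G.exists_nbr_of_adj h
    exact ⟨i, G.mem_NbrF.mpr hi⟩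

/-- Convexity: the neighborhood is the interval between min and max. -/
lemma mem_NbrF_iff_between (y : Y) (hne : (G.NbrF y).Nonempty) (i : Fin n) :
    i ∈ G.NbrF y ↔ (G.NbrF y).min' hne ≤ i ∧ i ≤ (G.NbrF y).max' hne := by
  constructor
  · intro h; exact ⟨Finset.min'_le _ _ h, Finset.le_max' _ _ h⟩
  · rintro ⟨h1, h2⟩
    have hmin := Finset.min'_mem _ hne
    have hmax := Finset.max'_mem _ hne
    rw [mem_NbrF] at *
    exact G.convex y _ i _ h1 h2 hmin hmax

end ConvexBip
end Aux
noncomputable section Aux2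
open scoped Classical
namespace ConvexBip
open Sum

variable {n : ℕ} {Y : Type*} [Fintype Y] [DecidableEq Y] (G : ConvexBip n Y)

lemma B1F (hB : G.PropertyB) {a b : ℕ} (hab : a < b) (hb : b < n)
    (hcond : (a = 0 ∧ b < n-1) ∨ (0 < a ∧ b = n-1) ∨ (0 < a ∧ b < n-1)) :
    (G.NInF a b).card ≤ b - a + 1 := by
  have := hB.1 ⟨a, by omega⟩ ⟨b, hb⟩ (by rw [Fin.lt_def]; exact hab) hcond
  rwa [ncard_NIn] at this

lemma NInF_zero_last_eq_univ (hn : 1 ≤ n) : G.NInF 0 (n-1) = univ := by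
  ext y
  simp only [mem_univ, iff_true, mem_NInF]
  intro i _
  exact ⟨Nat.zero_le _, by omega⟩

lemma cardY_le (hB : G.PropertyB) (hn : 1 ≤ n) : Fintype.card Y ≤ n + 1 := by
  have := hB.2.1 (by omega)
  rw [ncard_NIn] at this
  simpa [NInF_zero_last_eq_univ G hn] using this

lemma deg_one_of_mem_point (hconn : G.toGraph.Connected) {a : ℕ} (ha : a < n) {y : Y}
    (hy : y ∈ G.NInF a a) : G.degY y = 1 ∧ G.adj ⟨a, ha⟩ y := by
  have hne := G.NbrF_nonempty hconn (by omega) y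
  have hsub : G.NbrF y = {⟨a, ha⟩} := by
    apply Finset.eq_singleton_iff_nonempty_unique_mem.mpr
    refine ⟨hne, ?_⟩
    intro i hi
    have := (G.mem_NInF.mp hy) i (G.mem_NbrF.mp hi)
    exact Fin.ext (by simp only [Fin.val_mk]; omega)
  refine ⟨by rw [degY_eq, hsub]; simp, ?_⟩
  have := Finset.mem_singleton_self (⟨a, ha⟩ : Fin n)
  rw [← hsub, mem_NbrF] at this
  exact this

lemma NInF_point_le_one (hB : G.PropertyB) (hconn : G.toGraph.Connected) (hn : 2 ≤ n)
    {a : ℕ} (ha : a < n) : (G.NInF a a).card ≤ 1 := by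
  by_contra h
  obtain ⟨y, hy, y', hy', hne⟩ := Finset.one_lt_card.mp (show 1 < (G.NInF a a).card by omega)
  obtain ⟨hd, hadj⟩ := G.deg_one_of_mem_point hconn ha hy
  obtain ⟨hd', hadj'⟩ := G.deg_one_of_mem_point hconn ha hy'
  exact hB.2.2.2.2 hn ⟨a, ha⟩ y y' hne hd hd' hadj hadj'

lemma NInF_mid_point_empty (hmono : G.IsMonotone) (hconn : G.toGraph.Connected)
    {a : ℕ} (h0 : 0 < a) (h1 : a < n - 1) : (G.NInF a a) = ∅ := by
  rw [Finset.eq_empty_iff_forall_notMem]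
  intro y hy
  obtain ⟨hd, hadj⟩ := G.deg_one_of_mem_point hconn (by omega) hy
  exact hmono.2.1 ⟨y, ⟨a, by omega⟩, hd, hadj, h0, h1⟩

/-- consequence of no-maximal-interval: interior tight intervals don't exist. -/
lemma no_mid_tight (hmono : G.IsMonotone) {a b : ℕ} (h0 : 0 < a) (hab : a < b)
    (hb : b < n - 1) : (G.NInF a b).card ≤ b - a := by
  by_contra h
  push_neg at h
  have hB := hmono.1
  have hle : (G.NInF a b).card = b - a + 1 := by
    have := G.B1F hB hab (by omega) (Or.inr (Or.inr ⟨h0, hb⟩))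
    omega
  set S : Finset (ℕ × ℕ) := ((Finset.range n) ×ˢ (Finset.range n)).filter
    (fun z => 0 < z.1 ∧ z.1 ≤ a ∧ b ≤ z.2 ∧ z.2 < n - 1 ∧
      (G.NInF z.1 z.2).card = z.2 - z.1 + 1) with hS
  have hmem : (a, b) ∈ S := by
    simp only [hS, Finset.mem_filter, Finset.mem_product, Finset.mem_range]
    exact ⟨⟨by omega, by omega⟩, h0, le_refl _, le_refl _, hb, hle⟩
  obtain ⟨z, hz, hzmax⟩ := S.exists_max_image (fun z => z.2 - z.1) ⟨_, hmem⟩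
  simp only [hS, Finset.mem_filter, Finset.mem_product, Finset.mem_range] at hz
  obtain ⟨⟨hz1, hz2⟩, hz3, hz4, hz5, hz6, hz7⟩ := hz
  apply hmono.2.2
  refine ⟨⟨z.1, hz1⟩, ⟨z.2, hz2⟩, hz3, by simp [Fin.lt_def]; omega, hz6, ?_, ?_⟩
  · rw [ncard_NIn]; exact hz7
  · rintro ⟨p', q', hp'0, hq', hp'le, hqle, hstrict, htight⟩
    have hmem' : (p'.val, q'.val) ∈ S := by
      simp only [hS, Finset.mem_filter, Finset.mem_product, Finset.mem_range]
      rw [ncard_NIn] at htight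
      have h1 : p'.val ≤ z.1 := hp'le
      have h2 : z.2 ≤ q'.val := hqle
      exact ⟨⟨p'.2, q'.2⟩, hp'0, by omega, by omega, hq', htight⟩
    have hmax := hzmax _ hmem'
    simp only at hmax
    have h1 : p'.val ≤ z.1 := hp'le
    have h2 : z.2 ≤ q'.val := hqle
    have h3 : p'.val < z.1 ∨ z.2 < q'.val := by
      rcases hstrict with h | h
      · exact Or.inl h
      · exact Or.inr h
    omega

/-- The master counting bound. -/
lemma NInF_card_le (hmono : G.IsMonotone) (hconn : G.toGraph.Connected) (hn : 2 ≤ n)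
    {a b : ℕ} (hab : a ≤ b) (hb : b ≤ n - 1) :
    (G.NInF a b).card ≤ (b - a) + (if a = 0 then 1 else 0) + (if b = n-1 then 1 else 0) := by
  have hB := hmono.1
  rcases eq_or_lt_of_le hab with rfl | hlt
  · -- point case
    by_cases hmid : 0 < a ∧ a < n - 1
    · rw [G.NInF_mid_point_empty hmono hconn hmid.1 hmid.2]
      simp
    · have h01 := G.NInF_point_le_one hB hconn hn (show a < n by omega)
      have ha : a = 0 ∨ a = n - 1 := by omega
      rcases ha with rfl | rfl <;> split_ifs <;> omega
  · by_cases ha0 : a = 0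
    · subst ha0
      by_cases hbl : b = n - 1
      · subst hbl
        rw [NInF_zero_last_eq_univ G (by omega)]
        have := G.cardY_le hB (by omega)
        simpa using by omega
      · have := G.B1F hB hlt (by omega) (Or.inl ⟨rfl, by omega⟩)
        simp [hbl]; omega
    · by_cases hbl : b = n - 1
      · subst hbl
        have := G.B1F hB hlt (by omega) (Or.inr (Or.inl ⟨by omega, rfl⟩))
        simp [ha0]; omega
      · have := G.no_mid_tight hmono (by omega) hlt (by omega)
        simp [ha0, hbl]; omega

end ConvexBip
end Aux2
noncomputable section Aux3
open scoped Classical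
namespace ConvexBip
open Sum

variable {n : ℕ} {Y : Type*} [Fintype Y] [DecidableEq Y] (G : ConvexBip n Y)

/-- `y` has two consecutive neighbors at gap `g`. -/
def gadj (g : ℕ) (y : Y) : Prop := G.aN g y ∧ G.aN (g+1) y

section Zones
variable (hconn : G.toGraph.Connected) (hn : 0 < n)

def lyF (y : Y) : ℕ := ((G.NbrF y).min' (G.NbrF_nonempty hconn hn y)).val
def ryF (y : Y) : ℕ := ((G.NbrF y).max' (G.NbrF_nonempty hconn hn y)).val

lemma ly_le_ry (y : Y) : G.lyF hconn hn y ≤ G.ryF hconn hn y :=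
  Fin.le_def.mp (Finset.min'_le _ _ (Finset.max'_mem _ _))

lemma ry_lt (y : Y) : G.ryF hconn hn y < n := ((G.NbrF y).max' _).2

lemma aN_iff (y : Y) (i : ℕ) :
    G.aN i y ↔ G.lyF hconn hn y ≤ i ∧ i ≤ G.ryF hconn hn y := by
  constructor
  · rintro ⟨h, ha⟩
    have := (G.mem_NbrF_iff_between y (G.NbrF_nonempty hconn hn y) ⟨i, h⟩).mp
      (G.mem_NbrF.mpr ha)
    exact ⟨Fin.le_def.mp this.1, Fin.le_def.mp this.2⟩
  · rintro ⟨h1, h2⟩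
    have hi : i < n := lt_of_le_of_lt h2 (G.ry_lt hconn hn y)
    refine ⟨hi, G.mem_NbrF.mp ?_⟩
    exact (G.mem_NbrF_iff_between y _ ⟨i, hi⟩).mpr ⟨Fin.le_def.mpr h1, Fin.le_def.mpr h2⟩

variable (A : Finset ℕ)

def zlF (y : Y) : ℕ :=
  ((Finset.range (G.lyF hconn hn y + 1)).filter
    (fun a => Disjoint (Finset.Ico a (G.lyF hconn hn y)) A)).min'
    ⟨G.lyF hconn hn y, by simp⟩

def zrF (y : Y) : ℕ :=
  ((Finset.Icc (G.ryF hconn hn y) (n-1)).filter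
    (fun b => Disjoint (Finset.Ico (G.ryF hconn hn y) b) A)).max'
    ⟨G.ryF hconn hn y, by
      simp only [Finset.mem_filter, Finset.mem_Icc, le_refl, true_and]
      constructor
      · have := G.ry_lt hconn hn y; omega
      · simp⟩

lemma zl_spec (y : Y) : G.zlF hconn hn A y ≤ G.lyF hconn hn y ∧
    Disjoint (Finset.Ico (G.zlF hconn hn A y) (G.lyF hconn hn y)) A := by
  have h : G.zlF hconn hn A y ∈ (Finset.range (G.lyF hconn hn y + 1)).filter
      (fun a => Disjoint (Finset.Ico a (G.lyF hconn hn y)) A) := Finset.min'_mem _ _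
  rw [Finset.mem_filter, Finset.mem_range] at h
  exact ⟨by omega, h.2⟩

lemma zl_min (y : Y) {a : ℕ} (ha : a ≤ G.lyF hconn hn y)
    (hd : Disjoint (Finset.Ico a (G.lyF hconn hn y)) A) : G.zlF hconn hn A y ≤ a :=
  Finset.min'_le _ _ (by rw [Finset.mem_filter, Finset.mem_range]; exact ⟨by omega, hd⟩)

lemma zr_spec (y : Y) : G.ryF hconn hn y ≤ G.zrF hconn hn A y ∧ G.zrF hconn hn A y ≤ n - 1 ∧
    Disjoint (Finset.Ico (G.ryF hconn hn y) (G.zrF hconn hn A y)) A := by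
  have h : G.zrF hconn hn A y ∈ (Finset.Icc (G.ryF hconn hn y) (n-1)).filter
      (fun b => Disjoint (Finset.Ico (G.ryF hconn hn y) b) A) := Finset.max'_mem _ _
  rw [Finset.mem_filter, Finset.mem_Icc] at h
  exact ⟨h.1.1, h.1.2, h.2⟩

lemma zr_max (y : Y) {b : ℕ} (hb1 : G.ryF hconn hn y ≤ b) (hb2 : b ≤ n - 1)
    (hd : Disjoint (Finset.Ico (G.ryF hconn hn y) b) A) : b ≤ G.zrF hconn hn A y :=
  Finset.le_max' _ _ (by rw [Finset.mem_filter, Finset.mem_Icc]; exact ⟨⟨hb1, hb2⟩, hd⟩)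

/-- For `y` avoiding all gaps of `A`, the whole zone is `A`-free. -/
lemma zone_free (y : Y) (hy : ∀ g ∈ A, ¬ G.gadj g y) :
    Disjoint (Finset.Ico (G.zlF hconn hn A y) (G.zrF hconn hn A y)) A := by
  have hzl := G.zl_spec hconn hn A y
  have hzr := G.zr_spec hconn hn A y
  have hlr := G.ly_le_ry hconn hn y
  have hmid : Disjoint (Finset.Ico (G.lyF hconn hn y) (G.ryF hconn hn y)) A := by
    rw [Finset.disjoint_left]
    intro g hg hgA
    rw [Finset.mem_Ico] at hg
    refine hy g hgA ⟨?_, ?_⟩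
    · exact (G.aN_iff hconn hn y g).mpr ⟨hg.1, by omega⟩
    · exact (G.aN_iff hconn hn y (g+1)).mpr ⟨by omega, by omega⟩
  rw [Finset.disjoint_left]
  intro g hg hgA
  rw [Finset.mem_Ico] at hg
  by_cases h1 : g < G.lyF hconn hn y
  · exact Finset.disjoint_left.mp hzl.2 (Finset.mem_Ico.mpr ⟨by omega, h1⟩) hgA
  by_cases h2 : g < G.ryF hconn hn y
  · exact Finset.disjoint_left.mp hmid (Finset.mem_Ico.mpr ⟨by omega, h2⟩) hgA
  · exact Finset.disjoint_left.mp hzr.2.2 (Finset.mem_Ico.mpr ⟨by omega, hg.2⟩) hgA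

lemma zl_zero_or (y : Y) : G.zlF hconn hn A y = 0 ∨ (G.zlF hconn hn A y - 1) ∈ A := by
  by_contra h
  push_neg at h
  obtain ⟨h1, h2⟩ := h
  have hzl := G.zl_spec hconn hn A y
  have : G.zlF hconn hn A y ≤ G.zlF hconn hn A y - 1 := by
    apply G.zl_min hconn hn A y (by omega)
    rw [Finset.disjoint_left]
    intro g hg hgA
    rw [Finset.mem_Ico] at hg
    rcases eq_or_lt_of_le hg.1 with heq | hlt
    · exact h2 (heq ▸ hgA)
    · exact Finset.disjoint_left.mp hzl.2 (Finset.mem_Ico.mpr ⟨by omega, hg.2⟩) hgA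
  omega

lemma zr_last_or (y : Y) : G.zrF hconn hn A y = n - 1 ∨ G.zrF hconn hn A y ∈ A := by
  by_contra h
  push_neg at h
  obtain ⟨h1, h2⟩ := h
  have hzr := G.zr_spec hconn hn A y
  have : G.zrF hconn hn A y + 1 ≤ G.zrF hconn hn A y := by
    apply G.zr_max hconn hn A y (by omega) (by omega)
    rw [Finset.disjoint_left]
    intro g hg hgA
    rw [Finset.mem_Ico] at hg
    rcases eq_or_lt_of_le (Nat.lt_succ_iff.mp hg.2) with heq | hlt
    · exact h2 (heq ▸ hgA)
    · exact Finset.disjoint_left.mp hzr.2.2 (Finset.mem_Ico.mpr ⟨hg.1, hlt⟩) hgA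
  omega

/-- Two overlapping zones coincide. -/
lemma zone_eq {y y' : Y} (hy : ∀ g ∈ A, ¬ G.gadj g y) (hy' : ∀ g ∈ A, ¬ G.gadj g y')
    {g : ℕ} (hg : g ∈ Finset.Ico (G.zlF hconn hn A y) (G.zrF hconn hn A y))
    (hg' : g ∈ Finset.Ico (G.zlF hconn hn A y') (G.zrF hconn hn A y')) :
    G.zlF hconn hn A y = G.zlF hconn hn A y' ∧
    G.zrF hconn hn A y = G.zrF hconn hn A y' := by
  rw [Finset.mem_Ico] at hg hg'
  have key_l : ∀ u u' : Y, (∀ g ∈ A, ¬ G.gadj g u) → (∀ g ∈ A, ¬ G.gadj g u') →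
      G.zlF hconn hn A u ≤ g → g < G.zrF hconn hn A u →
      G.zlF hconn hn A u' ≤ g → g < G.zrF hconn hn A u' →
      G.zlF hconn hn A u ≤ G.zlF hconn hn A u' := by
    intro u u' hu hu' h1 h2 h1' h2'
    rcases le_or_gt (G.zlF hconn hn A u') (G.lyF hconn hn u) with hc | hc
    · -- apply zl_min for u at a := zl u'
      apply G.zl_min hconn hn A u hc
      rw [Finset.disjoint_left]
      intro h hh hhA
      rw [Finset.mem_Ico] at hh
      by_cases hcase : h < G.zrF hconn hn A u'
      · exact Finset.disjoint_left.mp (G.zone_free hconn hn A u' hu')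
          (Finset.mem_Ico.mpr ⟨hh.1, hcase⟩) hhA
      · refine Finset.disjoint_left.mp (G.zone_free hconn hn A u hu)
          (Finset.mem_Ico.mpr ⟨?_, ?_⟩) hhA
        · omega
        · have f1 := G.ly_le_ry hconn hn u
          have f2 := (G.zr_spec hconn hn A u).1
          omega
    · have := (G.zl_spec hconn hn A u).1; omega
  have key_r : ∀ u u' : Y, (∀ g ∈ A, ¬ G.gadj g u) → (∀ g ∈ A, ¬ G.gadj g u') →
      G.zlF hconn hn A u ≤ g → g < G.zrF hconn hn A u →
      G.zlF hconn hn A u' ≤ g → g < G.zrF hconn hn A u' →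
      G.zrF hconn hn A u' ≤ G.zrF hconn hn A u := by
    intro u u' hu hu' h1 h2 h1' h2'
    rcases le_or_gt (G.ryF hconn hn u) (G.zrF hconn hn A u') with hc | hc
    · apply G.zr_max hconn hn A u hc (G.zr_spec hconn hn A u').2.1
      rw [Finset.disjoint_left]
      intro h hh hhA
      rw [Finset.mem_Ico] at hh
      by_cases hcase : G.zlF hconn hn A u' ≤ h
      · exact Finset.disjoint_left.mp (G.zone_free hconn hn A u' hu')
          (Finset.mem_Ico.mpr ⟨hcase, hh.2⟩) hhA
      · refine Finset.disjoint_left.mp (G.zone_free hconn hn A u hu)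
          (Finset.mem_Ico.mpr ⟨?_, ?_⟩) hhA
        · have f1 := (G.zl_spec hconn hn A u).1
          have f2 := G.ly_le_ry hconn hn u
          omega
        · omega
    · have := (G.zr_spec hconn hn A u).1; omega
  exact ⟨le_antisymm (key_l y y' hy hy' hg.1 hg.2 hg'.1 hg'.2)
      (key_l y' y hy' hy hg'.1 hg'.2 hg.1 hg.2),
    le_antisymm (key_r y' y hy' hy hg'.1 hg'.2 hg.1 hg.2)
      (key_r y y' hy hy' hg.1 hg.2 hg'.1 hg'.2)⟩

end Zones
end ConvexBip
end Aux3
noncomputable section Aux4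
open scoped Classical
namespace ConvexBip
open Sum

variable {n : ℕ} {Y : Type*} [Fintype Y] [DecidableEq Y] (G : ConvexBip n Y)

section Zones2
variable (hconn : G.toGraph.Connected) (hn : 0 < n) (A : Finset ℕ)

lemma zone_zero_unique (hn2 : 2 ≤ n) {y y' : Y}
    (hy : ∀ g ∈ A, ¬ G.gadj g y) (hy' : ∀ g ∈ A, ¬ G.gadj g y')
    (h : G.zlF hconn hn A y = 0) (h' : G.zlF hconn hn A y' = 0) :
    G.zrF hconn hn A y = G.zrF hconn hn A y' := by
  have hzeroA : ∀ u : Y, (∀ g ∈ A, ¬ G.gadj g u) → G.zrF hconn hn A u = 0 → 0 ∈ A := by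
    intro u hu h0
    rcases G.zr_last_or hconn hn A u with he | he
    · omega
    · rwa [h0] at he
  have hfree : ∀ u : Y, (∀ g ∈ A, ¬ G.gadj g u) → 0 < G.zrF hconn hn A u →
      G.zlF hconn hn A u = 0 → 0 ∉ A := by
    intro u hu hpos hz h0A
    exact Finset.disjoint_left.mp (G.zone_free hconn hn A u hu)
      (Finset.mem_Ico.mpr ⟨by omega, hpos⟩) h0A
  rcases Nat.eq_zero_or_pos (G.zrF hconn hn A y) with h0 | h0
  · rcases Nat.eq_zero_or_pos (G.zrF hconn hn A y') with h0' | h0'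
    · omega
    · exact absurd (hzeroA y hy h0) (hfree y' hy' h0' h')
  · rcases Nat.eq_zero_or_pos (G.zrF hconn hn A y') with h0' | h0'
    · exact absurd (hzeroA y' hy' h0') (hfree y hy h0 h)
    · exact (G.zone_eq hconn hn A hy hy' (Finset.mem_Ico.mpr ⟨by omega, h0⟩)
        (Finset.mem_Ico.mpr ⟨by omega, h0'⟩)).2

lemma zone_last_unique (hn2 : 2 ≤ n) {y y' : Y}
    (hy : ∀ g ∈ A, ¬ G.gadj g y) (hy' : ∀ g ∈ A, ¬ G.gadj g y')
    (h : G.zrF hconn hn A y = n-1) (h' : G.zrF hconn hn A y' = n-1) :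
    G.zlF hconn hn A y = G.zlF hconn hn A y' := by
  have hbig : ∀ u : Y, (∀ g ∈ A, ¬ G.gadj g u) → G.zrF hconn hn A u = n-1 →
      n-1 ≤ G.zlF hconn hn A u → (n-2) ∈ A := by
    intro u hu hr hl
    rcases G.zl_zero_or hconn hn A u with he | he
    · omega
    · have h1 := (G.zl_spec hconn hn A u).1
      have h2 := G.ly_le_ry hconn hn u
      have h3 := (G.zr_spec hconn hn A u).1
      have heq : G.zlF hconn hn A u = n - 1 := by omega
      rwa [heq] at he
  have hfree : ∀ u : Y, (∀ g ∈ A, ¬ G.gadj g u) → G.zrF hconn hn A u = n-1 →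
      G.zlF hconn hn A u ≤ n-2 → (n-2) ∉ A := by
    intro u hu hr hl h0A
    exact Finset.disjoint_left.mp (G.zone_free hconn hn A u hu)
      (Finset.mem_Ico.mpr ⟨hl, by omega⟩) h0A
  rcases le_or_gt (G.zlF hconn hn A y) (n-2) with h0 | h0
  · rcases le_or_gt (G.zlF hconn hn A y') (n-2) with h0' | h0'
    · exact (G.zone_eq hconn hn A hy hy' (Finset.mem_Ico.mpr ⟨h0, by omega⟩)
        (Finset.mem_Ico.mpr ⟨h0', by omega⟩)).1
    · exact absurd (hbig y' hy' h' (by omega)) (hfree y hy h h0)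
  · rcases le_or_gt (G.zlF hconn hn A y') (n-2) with h0' | h0'
    · exact absurd (hbig y hy h (by omega)) (hfree y' hy' h' h0')
    · have f1 := (G.zl_spec hconn hn A y).1
      have f2 := G.ly_le_ry hconn hn y
      have f3 := (G.zr_spec hconn hn A y).1
      have g1 := (G.zl_spec hconn hn A y').1
      have g2 := G.ly_le_ry hconn hn y'
      have g3 := (G.zr_spec hconn hn A y').1
      omega

end Zones2

set_option maxHeartbeats 1000000 in
/-- The key counting lemma. -/
lemma KL (hmono : G.IsMonotone) (hconn : G.toGraph.Connected) (hn : 2 ≤ n)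
    (A : Finset ℕ) (hA : A ⊆ Finset.range (n-1)) (eL eR : Bool) :
    (univ.filter (fun y : Y => (∀ g ∈ A, ¬ G.gadj g y) ∧ (eL = true → ¬ G.aN 0 y) ∧
      (eR = true → ¬ G.aN (n-1) y))).card + A.card
      ≤ (n-1) + (1 - eL.toNat) + (1 - eR.toNat) := by
  have hn0 : 0 < n := by omega
  have hLnat : eL.toNat ≤ 1 := Bool.toNat_le eL
  have hRnat : eR.toNat ≤ 1 := Bool.toNat_le eR
  set C := univ.filter (fun y : Y => (∀ g ∈ A, ¬ G.gadj g y) ∧ (eL = true → ¬ G.aN 0 y) ∧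
      (eR = true → ¬ G.aN (n-1) y)) with hC
  have hCy : ∀ y ∈ C, (∀ g ∈ A, ¬ G.gadj g y) ∧ (eL = true → ¬ G.aN 0 y) ∧
      (eR = true → ¬ G.aN (n-1) y) := by
    intro y hy; rw [hC, Finset.mem_filter] at hy; exact hy.2
  set zf : Y → ℕ × ℕ := fun y => (G.zlF hconn hn0 A y, G.zrF hconn hn0 A y) with hzf
  set T := C.image zf with hT
  have hfib : C.card = ∑ z ∈ T, (C.filter (fun y => zf y = z)).card :=
    Finset.card_eq_sum_card_fiberwise (fun y hy => Finset.mem_image_of_mem zf hy)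
  have hzone : ∀ z ∈ T, (C.filter (fun y => zf y = z)).card ≤
      (z.2 - z.1) + ((if z.1 = 0 then 1 - eL.toNat else 0) +
        (if z.2 = n-1 then 1 - eR.toNat else 0)) := by
    intro z hz
    obtain ⟨y₀, hy₀C, hy₀z⟩ := Finset.mem_image.mp hz
    have hz1 : z.1 = G.zlF hconn hn0 A y₀ := by rw [← hy₀z]
    have hz2 : z.2 = G.zrF hconn hn0 A y₀ := by rw [← hy₀z]
    have f1 := (G.zl_spec hconn hn0 A y₀).1
    have f2 := G.ly_le_ry hconn hn0 y₀
    have f3 := (G.zr_spec hconn hn0 A y₀).1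
    have f4 := (G.zr_spec hconn hn0 A y₀).2.1
    have haly : (if z.1 = 0 then eL.toNat else z.1) ≤ G.lyF hconn hn0 y₀ := by
      split_ifs with h
      · rcases Bool.eq_false_or_eq_true eL with hb | hb
        · by_contra hcon
          have hly0 : G.lyF hconn hn0 y₀ = 0 := by simp [hb] at hcon; omega
          exact (hCy y₀ hy₀C).2.1 hb ((G.aN_iff hconn hn0 y₀ 0).mpr (by omega))
        · simp [hb]
      · omega
    have hryb : G.ryF hconn hn0 y₀ ≤ (if z.2 = n-1 then n-1-eR.toNat else z.2) := by
      split_ifs with h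
      · rcases Bool.eq_false_or_eq_true eR with hb | hb
        · have hlast : G.ryF hconn hn0 y₀ ≠ n-1 := by
            intro hcon
            exact (hCy y₀ hy₀C).2.2 hb ((G.aN_iff hconn hn0 y₀ (n-1)).mpr (by omega))
          simp [hb]
          omega
        · simp [hb]; omega
      · omega
    have hab : (if z.1 = 0 then eL.toNat else z.1) ≤ (if z.2 = n-1 then n-1-eR.toNat else z.2) :=
      haly.trans (f2.trans hryb)
    have hbn : (if z.2 = n-1 then n-1-eR.toNat else z.2) ≤ n - 1 := by
      split_ifs <;> omega
    have hsub : (C.filter (fun y => zf y = z)) ⊆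
        G.NInF (if z.1 = 0 then eL.toNat else z.1) (if z.2 = n-1 then n-1-eR.toNat else z.2) := by
      intro y hy
      rw [Finset.mem_filter] at hy
      obtain ⟨hyC, hyz⟩ := hy
      have hy1 : G.zlF hconn hn0 A y = z.1 := by rw [← hyz]
      have hy2 : G.zrF hconn hn0 A y = z.2 := by rw [← hyz]
      rw [mem_NInF]
      intro i hi
      have haN : G.aN i.val y := ⟨i.2, by rw [Fin.eta]; exact hi⟩
      have hiv := (G.aN_iff hconn hn0 y i.val).mp haN
      have g1 := (G.zl_spec hconn hn0 A y).1
      have g3 := (G.zr_spec hconn hn0 A y).1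
      have g4 := (G.zr_spec hconn hn0 A y).2.1
      constructor
      · split_ifs with h
        · rcases Bool.eq_false_or_eq_true eL with hb | hb
          · by_contra hcon
            have : i.val = 0 := by simp [hb] at hcon; omega
            exact (hCy y hyC).2.1 hb (this ▸ haN)
          · simp [hb]
        · omega
      · split_ifs with h
        · rcases Bool.eq_false_or_eq_true eR with hb | hb
          · have : i.val ≠ n-1 := by
              intro hcon
              exact (hCy y hyC).2.2 hb (hcon ▸ haN)
            simp [hb]
            omega
          · simp [hb]; have := i.2; omega
        · omega
    have hcard := Finset.card_le_card hsub
    have hU := G.NInF_card_le hmono hconn hn hab hbn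
    have hz12 : z.1 ≤ z.2 := by omega
    split_ifs at hU hcard ⊢ <;> omega
  have hstep : C.card ≤ (∑ z ∈ T, (z.2 - z.1)) +
      ((∑ z ∈ T, (if z.1 = 0 then 1 - eL.toNat else 0)) +
       (∑ z ∈ T, (if z.2 = n-1 then 1 - eR.toNat else 0))) := by
    rw [hfib, ← Finset.sum_add_distrib, ← Finset.sum_add_distrib]
    exact Finset.sum_le_sum hzone
  have hsum1 : (∑ z ∈ T, (z.2 - z.1)) ≤ (n-1) - A.card := by
    have hrw : ∀ z ∈ T, z.2 - z.1 = (Finset.Ico z.1 z.2).card := by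
      intro z _; rw [Nat.card_Ico]
    rw [Finset.sum_congr rfl hrw]
    have hdisj : ∀ z ∈ T, ∀ z' ∈ T, z ≠ z' →
        Disjoint (Finset.Ico z.1 z.2) (Finset.Ico z'.1 z'.2) := by
      intro z hz z' hz' hne
      obtain ⟨y, hyC, hyz⟩ := Finset.mem_image.mp hz
      obtain ⟨y', hy'C, hy'z⟩ := Finset.mem_image.mp hz'
      rw [Finset.disjoint_left]
      intro g hg hg'
      apply hne
      have := G.zone_eq hconn hn0 A (hCy y hyC).1 (hCy y' hy'C).1
        (by rw [← hyz] at hg; exact hg) (by rw [← hy'z] at hg'; exact hg')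
      rw [← hyz, ← hy'z]
      exact Prod.ext this.1 this.2
    rw [← Finset.card_biUnion hdisj]
    have hsub2 : T.biUnion (fun z => Finset.Ico z.1 z.2) ⊆ Finset.range (n-1) \ A := by
      intro g hg
      obtain ⟨z, hz, hgz⟩ := Finset.mem_biUnion.mp hg
      obtain ⟨y, hyC, hyz⟩ := Finset.mem_image.mp hz
      rw [← hyz] at hgz
      rw [Finset.mem_sdiff, Finset.mem_range]
      have hgz' : G.zlF hconn hn0 A y ≤ g ∧ g < G.zrF hconn hn0 A y := Finset.mem_Ico.mp hgz
      constructor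
      · have := (G.zr_spec hconn hn0 A y).2.1
        omega
      · exact fun hgA => Finset.disjoint_left.mp
          (G.zone_free hconn hn0 A y (hCy y hyC).1) hgz hgA
    calc (T.biUnion (fun z => Finset.Ico z.1 z.2)).card
        ≤ (Finset.range (n-1) \ A).card := Finset.card_le_card hsub2
      _ = (n-1) - A.card := by rw [Finset.card_sdiff_of_subset hA, Finset.card_range]
  have hsum2 : (∑ z ∈ T, (if z.1 = 0 then 1 - eL.toNat else 0)) ≤ 1 - eL.toNat := by
    rw [← Finset.sum_filter, Finset.sum_const, smul_eq_mul]
    have hone : (T.filter (fun z => z.1 = 0)).card ≤ 1 := by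
      apply Finset.card_le_one.mpr
      intro z hz z' hz'
      rw [Finset.mem_filter] at hz hz'
      obtain ⟨y, hyC, hyz⟩ := Finset.mem_image.mp hz.1
      obtain ⟨y', hy'C, hy'z⟩ := Finset.mem_image.mp hz'.1
      rw [← hyz] at hz
      rw [← hy'z] at hz'
      have := G.zone_zero_unique hconn hn0 A hn (hCy y hyC).1 (hCy y' hy'C).1 hz.2 hz'.2
      rw [← hyz, ← hy'z]
      exact Prod.ext (by rw [hz.2, hz'.2]) this
    calc (T.filter (fun z => z.1 = 0)).card * (1 - eL.toNat)
        ≤ 1 * (1 - eL.toNat) := Nat.mul_le_mul_right _ hone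
      _ = 1 - eL.toNat := one_mul _
  have hsum3 : (∑ z ∈ T, (if z.2 = n-1 then 1 - eR.toNat else 0)) ≤ 1 - eR.toNat := by
    rw [← Finset.sum_filter, Finset.sum_const, smul_eq_mul]
    have hone : (T.filter (fun z => z.2 = n-1)).card ≤ 1 := by
      apply Finset.card_le_one.mpr
      intro z hz z' hz'
      rw [Finset.mem_filter] at hz hz'
      obtain ⟨y, hyC, hyz⟩ := Finset.mem_image.mp hz.1
      obtain ⟨y', hy'C, hy'z⟩ := Finset.mem_image.mp hz'.1
      rw [← hyz] at hz
      rw [← hy'z] at hz'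
      have := G.zone_last_unique hconn hn0 A hn (hCy y hyC).1 (hCy y' hy'C).1 hz.2 hz'.2
      rw [← hyz, ← hy'z]
      exact Prod.ext this (by rw [hz.2, hz'.2])
    calc (T.filter (fun z => z.2 = n-1)).card * (1 - eR.toNat)
        ≤ 1 * (1 - eR.toNat) := Nat.mul_le_mul_right _ hone
      _ = 1 - eR.toNat := one_mul _
  have hAcard : A.card ≤ n - 1 := by
    have := Finset.card_le_card hA
    rwa [Finset.card_range] at this
  omega

end ConvexBip
end Aux4
noncomputable section Aux5
open scoped Classical
namespace ConvexBip
open Sum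

lemma not_mem_biUnion_sum {α β γ : Type*} [DecidableEq γ] (s : Finset (α ⊕ β))
    (t : α ⊕ β → Finset γ) (y : γ) : y ∉ s.biUnion t ↔
    (∀ a ∈ s.toLeft, y ∉ t (Sum.inl a)) ∧ (∀ b ∈ s.toRight, y ∉ t (Sum.inr b)) := by
  constructor
  · intro h
    constructor
    · intro a ha hy
      exact h (Finset.mem_biUnion.mpr ⟨inl a, Finset.mem_toLeft.mp ha, hy⟩)
    · intro b hb hy
      exact h (Finset.mem_biUnion.mpr ⟨inr b, Finset.mem_toRight.mp hb, hy⟩)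
  · rintro ⟨h1, h2⟩ hy
    obtain ⟨x, hx, hyx⟩ := Finset.mem_biUnion.mp hy
    rcases x with a | b
    · exact h1 a (Finset.mem_toLeft.mpr hx) hyx
    · exact h2 b (Finset.mem_toRight.mpr hx) hyx

variable {n : ℕ} {Y : Type*} [Fintype Y] [DecidableEq Y] (G : ConvexBip n Y)

/-- `y ∈ NIn'` of a unit interval given by a gap. -/
lemma gadj_iff_NIn' (hn : 2 ≤ n) (g : Fin (n-1)) (y : Y) :
    G.gadj g.val y ↔ y ∈ G.NIn' ⟨g.val, by omega⟩ ⟨g.val + 1, by have := g.2; omega⟩ := by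
  rw [G.mem_NIn'_pair (by simp)]
  constructor
  · rintro ⟨⟨h1, ha1⟩, ⟨h2, ha2⟩⟩
    exact ⟨ha1, ha2⟩
  · rintro ⟨ha1, ha2⟩
    exact ⟨⟨by have := g.2; omega, ha1⟩, ⟨by have := g.2; omega, ha2⟩⟩

/-- Hall's condition for the gaps, from Property B (2). -/
lemma hall_gaps (hB : G.PropertyB) (hn : 2 ≤ n) (A : Finset (Fin (n-1))) :
    A.card ≤ (A.biUnion (fun g => univ.filter (fun y => G.gadj g.val y))).card := by
  rcases A.eq_empty_or_nonempty with rfl | hA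
  · simp
  set k := A.card with hk
  have hk1 : 1 ≤ k := Finset.card_pos.mpr hA
  have hkn : k ≤ n - 1 := by
    have := Finset.card_le_univ A
    simpa using this
  set e := A.orderIsoOfFin hk.symm with he
  set p : Fin k → Fin n := fun i => ⟨(e i).val.val, by have := (e i).val.2; omega⟩ with hp
  set q : Fin k → Fin n := fun i => ⟨(e i).val.val + 1, by have := (e i).val.2; omega⟩ with hq
  have hB2 := hB.2.2.1 k p q hk1 hkn
    (fun i => by rw [Fin.lt_def]; simp [hp, hq])
    (fun i i' hii => by
      rw [Fin.le_def]
      have h1 : e i < e i' := e.strictMono hii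
      have hv : (e i).val < (e i').val := h1
      have hvv : (e i).val.val < (e i').val.val := hv
      simp only [hp, hq]
      omega)
  have hone : ∀ i ∈ (univ : Finset (Fin k)), ((q i).val - (p i).val) = 1 := by
    intro i _; simp [hp, hq]
  rw [Finset.sum_congr rfl hone, Finset.sum_const, smul_eq_mul, mul_one,
    Finset.card_univ, Fintype.card_fin] at hB2
  have hset : (⋃ i, G.NIn' (p i) (q i)) =
      ↑(A.biUnion (fun g => univ.filter (fun y => G.gadj g.val y))) := by
    ext y
    constructor
    · intro hy
      rw [Set.mem_iUnion] at hy
      obtain ⟨i, hi⟩ := hy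
      apply Finset.mem_coe.mpr
      exact Finset.mem_biUnion.mpr ⟨(e i).val, (e i).2, Finset.mem_filter.mpr
        ⟨Finset.mem_univ _, (G.gadj_iff_NIn' hn (e i).val y).mpr hi⟩⟩
    · intro hy
      obtain ⟨g, hgA, hg⟩ := Finset.mem_biUnion.mp (Finset.mem_coe.mp hy)
      rw [Set.mem_iUnion]
      refine ⟨e.symm ⟨g, hgA⟩, ?_⟩
      have happ : e (e.symm ⟨g, hgA⟩) = ⟨g, hgA⟩ := e.apply_symm_apply _
      have h2 := (G.gadj_iff_NIn' hn g y).mp (Finset.mem_filter.mp hg).2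
      have hpe : p (e.symm ⟨g, hgA⟩) = ⟨g.val, by have := g.2; omega⟩ := by
        simp [hp, happ]
      have hqe : q (e.symm ⟨g, hgA⟩) = ⟨g.val + 1, by have := g.2; omega⟩ := by
        simp [hq, happ]
      rw [hpe, hqe]
      exact h2
  rw [hset, Set.ncard_coe_finset] at hB2
  exact hB2

/-- lower bound on `|Y|`. -/
lemma cardY_ge (hB : G.PropertyB) (hn : 2 ≤ n) : n - 1 ≤ Fintype.card Y := by
  have := G.hall_gaps hB hn univ
  simp only [Finset.card_univ, Fintype.card_fin] at this
  exact this.trans (Finset.card_le_univ _)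

/-- the target sets for the Hall matching. -/
def hallT (d : ℕ) : (Fin (n-1) ⊕ Fin d) → Finset Y :=
  Sum.elim (fun g => univ.filter (fun y => G.gadj g.val y))
    (fun j => if d = 1 then univ.filter (fun y => G.aN 0 y ∨ G.aN (n-1) y)
      else if j.val = 0 then univ.filter (fun y => G.aN 0 y)
      else univ.filter (fun y => G.aN (n-1) y))

lemma U_lower (hmono : G.IsMonotone) (hconn : G.toGraph.Connected) (hn : 2 ≤ n)
    (A : Finset (Fin (n-1))) (eL eR : Bool) (U : Finset Y)
    (hU : ∀ y : Y, y ∉ U ↔ ((∀ g ∈ A, ¬ G.gadj g.val y) ∧ (eL = true → ¬ G.aN 0 y) ∧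
      (eR = true → ¬ G.aN (n-1) y))) :
    Fintype.card Y + A.card ≤ U.card + ((n-1) + (1 - eL.toNat) + (1 - eR.toNat)) := by
  set A' := A.image Fin.val with hA'
  have hA'sub : A' ⊆ Finset.range (n-1) := by
    intro x hx
    rw [hA', Finset.mem_image] at hx
    obtain ⟨g, _, rfl⟩ := hx
    exact Finset.mem_range.mpr g.2
  have hcardA : A'.card = A.card := Finset.card_image_of_injective _ Fin.val_injective
  have hKL := G.KL hmono hconn hn A' hA'sub eL eR
  have hCeq : univ.filter (fun y : Y => (∀ g ∈ A', ¬ G.gadj g y) ∧ (eL = true → ¬ G.aN 0 y) ∧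
      (eR = true → ¬ G.aN (n-1) y)) = univ \ U := by
    ext y
    rw [Finset.mem_filter, Finset.mem_sdiff]
    constructor
    · rintro ⟨_, h1, h2, h3⟩
      refine ⟨Finset.mem_univ _, (hU y).mpr ⟨?_, h2, h3⟩⟩
      intro g hg
      exact h1 g.val (by rw [hA', Finset.mem_image]; exact ⟨g, hg, rfl⟩)
    · rintro ⟨_, hy⟩
      obtain ⟨h1, h2, h3⟩ := (hU y).mp hy
      refine ⟨Finset.mem_univ _, ?_, h2, h3⟩
      intro g hg
      rw [hA', Finset.mem_image] at hg
      obtain ⟨g', hg', rfl⟩ := hg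
      exact h1 g' hg'
  rw [hCeq, hcardA] at hKL
  have hsd : (univ \ U).card = Fintype.card Y - U.card := by
    rw [Finset.card_sdiff_of_subset (Finset.subset_univ _), Finset.card_univ]
  have hUle : U.card ≤ Fintype.card Y := Finset.card_le_univ _
  omega

end ConvexBip
end Aux5
noncomputable section Aux6
open scoped Classical
namespace ConvexBip
open Sum

variable {n : ℕ} {Y : Type*} [Fintype Y] [DecidableEq Y] (G : ConvexBip n Y)

lemma hallT_inl (d : ℕ) (g : Fin (n-1)) (y : Y) :
    y ∈ G.hallT d (inl g) ↔ G.gadj g.val y := by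
  simp [hallT]

lemma hall_gap_subset (d : ℕ) (s : Finset (Fin (n-1) ⊕ Fin d)) :
    s.toLeft.biUnion (fun g => univ.filter (fun y => G.gadj g.val y)) ⊆
      s.biUnion (G.hallT d) := by
  apply Finset.biUnion_subset.mpr
  intro g hg y hy
  exact Finset.mem_biUnion.mpr ⟨inl g, Finset.mem_toLeft.mp hg, by
    rw [hallT_inl]
    exact (Finset.mem_filter.mp hy).2⟩

lemma hall_aux_empty (hB : G.PropertyB) (hn : 2 ≤ n) (d : ℕ)
    (s : Finset (Fin (n-1) ⊕ Fin d)) (h0 : s.toRight = ∅) :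
    s.card ≤ (s.biUnion (G.hallT d)).card := by
  have h1 := (G.hall_gaps hB hn s.toLeft).trans
    (Finset.card_le_card (G.hall_gap_subset d s))
  have h2 : s.toLeft.card + s.toRight.card = s.card := Finset.card_toLeft_add_card_toRight
  rw [h0] at h2
  simp at h2
  omega

lemma hall_aux (hmono : G.IsMonotone) (hconn : G.toGraph.Connected) (hn : 2 ≤ n)
    (d : ℕ) (hd : Fintype.card Y = n-1+d) (s : Finset (Fin (n-1) ⊕ Fin d)) (eL eR : Bool)
    (hiff : ∀ y : Y, (∀ b ∈ s.toRight, y ∉ G.hallT d (inr b)) ↔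
      ((eL = true → ¬ G.aN 0 y) ∧ (eR = true → ¬ G.aN (n-1) y)))
    (hcard : s.toRight.card + 2 ≤ d + eL.toNat + eR.toNat) :
    s.card ≤ (s.biUnion (G.hallT d)).card := by
  have hU := G.U_lower hmono hconn hn s.toLeft eL eR (s.biUnion (G.hallT d)) ?_
  · have h2 : s.toLeft.card + s.toRight.card = s.card := Finset.card_toLeft_add_card_toRight
    have hLnat : eL.toNat ≤ 1 := Bool.toNat_le eL
    have hRnat : eR.toNat ≤ 1 := Bool.toNat_le eR
    omega
  · intro y
    rw [not_mem_biUnion_sum]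
    constructor
    · rintro ⟨h1, h2⟩
      refine ⟨?_, (hiff y).mp h2⟩
      intro g hg hgadj
      exact h1 g hg (by rw [hallT_inl]; exact hgadj)
    · rintro ⟨h1, h2⟩
      refine ⟨?_, (hiff y).mpr h2⟩
      intro g hg hy
      exact h1 g hg ((G.hallT_inl d g y).mp hy)

lemma hall_cond (hmono : G.IsMonotone) (hconn : G.toGraph.Connected) (hn : 2 ≤ n)
    (d : ℕ) (hd : Fintype.card Y = n-1+d) (hd2 : d ≤ 2) :
    ∀ s : Finset (Fin (n-1) ⊕ Fin d), s.card ≤ (s.biUnion (G.hallT d)).card := by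
  have hB := hmono.1
  intro s
  interval_cases d
  · exact G.hall_aux_empty hB hn 0 s (Finset.eq_empty_of_forall_notMem (fun j _ => j.elim0))
  · have hsub : s.toRight ⊆ {0} := fun x _ => Finset.mem_singleton.mpr (Fin.eq_zero x)
    rcases Finset.subset_singleton_iff.mp hsub with h0 | h0
    · exact G.hall_aux_empty hB hn 1 s h0
    · apply G.hall_aux hmono hconn hn 1 hd s true true
      · intro y
        rw [h0]
        simp [hallT]
      · rw [h0]
        simp
  · have hcases : ∀ E : Finset (Fin 2), E = ∅ ∨ E = {0} ∨ E = {1} ∨ E = {0, 1} := by decide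
    rcases hcases s.toRight with h0 | h0 | h0 | h0
    · exact G.hall_aux_empty hB hn 2 s h0
    · apply G.hall_aux hmono hconn hn 2 hd s true false
      · intro y
        rw [h0]
        simp [hallT]
      · rw [h0]; simp
    · apply G.hall_aux hmono hconn hn 2 hd s false true
      · intro y
        rw [h0]
        simp [hallT]
      · rw [h0]; simp
    · apply G.hall_aux hmono hconn hn 2 hd s true true
      · intro y
        rw [h0]
        simp [hallT]
      · rw [h0]
        simp

/-- The matching. -/
lemma exists_matching (hmono : G.IsMonotone) (hconn : G.toGraph.Connected) (hn : 2 ≤ n)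
    (d : ℕ) (hd : Fintype.card Y = n-1+d) (hd2 : d ≤ 2) :
    ∃ f : (Fin (n-1) ⊕ Fin d) → Y, Function.Bijective f ∧ ∀ x, f x ∈ G.hallT d x := by
  obtain ⟨f, hinj, hmem⟩ := (Finset.all_card_le_biUnion_card_iff_exists_injective
    (G.hallT d)).mp (G.hall_cond hmono hconn hn d hd hd2)
  refine ⟨f, (Fintype.bijective_iff_injective_and_card f).mpr ⟨hinj, ?_⟩, hmem⟩
  simp only [Fintype.card_sum, Fintype.card_fin]
  omega

end ConvexBip
end Aux6
noncomputable section Aux7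
open scoped Classical
namespace ConvexBip
open Sum

variable {n : ℕ} {Y : Type*} [Fintype Y] [DecidableEq Y]

lemma main0 (G : ConvexBip 0 Y) (hconn : G.toGraph.Connected) :
    ∃ (u v : Fin 0 ⊕ Y) (p : G.toGraph.Walk u v), p.IsHamiltonian := by
  have hno : ∀ a b : Fin 0 ⊕ Y, ¬ G.toGraph.Adj a b := by
    rintro a b (⟨i, y, _, _, _⟩ | ⟨i, y, _, _, _⟩) <;> exact i.elim0
  have hne : Nonempty (Fin 0 ⊕ Y) := hconn.nonempty
  obtain ⟨v⟩ := hne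
  have heq : ∀ u : Fin 0 ⊕ Y, u = v := by
    intro u
    obtain ⟨w⟩ := hconn.preconnected u v
    cases w with
    | nil => rfl
    | cons h _ => exact absurd h (hno _ _)
  refine ⟨v, v, Walk.nil, ?_⟩
  intro a
  rw [heq a]
  simp [Walk.support_nil]

lemma main1 (G : ConvexBip 1 Y) (hconn : G.toGraph.Connected) (hB : G.PropertyB) :
    ∃ (u v : Fin 1 ⊕ Y) (p : G.toGraph.Walk u v), p.IsHamiltonian := by
  have hadj : ∀ y : Y, G.adj 0 y := by
    intro y
    obtain ⟨i, hi⟩ := G.NbrF_nonempty hconn one_pos y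
    have : i = 0 := Subsingleton.elim _ _
    rw [← this]
    exact G.mem_NbrF.mp hi
  have hdeg : ∀ y : Y, G.degY y = 1 := by
    intro y
    rw [degY_eq]
    refine le_antisymm ?_ (Finset.card_pos.mpr ⟨0, G.mem_NbrF.mpr (hadj y)⟩)
    have := Finset.card_le_univ (G.NbrF y)
    simpa using this
  have hcard2 : Fintype.card Y ≤ 2 := by
    have h1 := hB.2.2.2.1
    have h2 : {y : Y | G.degY y = 1} = Set.univ := by
      ext y; simp [hdeg]
    rw [h2, Set.ncard_univ, Nat.card_eq_fintype_card] at h1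
    exact h1
  rcases Nat.lt_or_ge (Fintype.card Y) 1 with h0 | h0
  · -- Y empty
    have : Fintype.card Y = 0 := by omega
    have hYe : IsEmpty Y := Fintype.card_eq_zero_iff.mp this
    apply hasHamPath_of_list G.toGraph [inl 0] (by simp) (List.isChain_singleton _) (by simp)
    rintro (i | y)
    · simp [Subsingleton.elim i 0]
    · exact hYe.elim y
  rcases Nat.lt_or_ge (Fintype.card Y) 2 with h1 | h1
  · -- one y
    have : Fintype.card Y = 1 := by omega
    obtain ⟨y, hy⟩ := Fintype.card_eq_one_iff.mp this
    apply hasHamPath_of_list G.toGraph [inl 0, inr y] (by simp)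
      (by
        refine List.isChain_cons_cons.mpr ⟨?_, List.isChain_singleton _⟩
        exact G.adj_inl_inr.mpr (hadj y))
      (by simp)
    rintro (i | y')
    · simp [Subsingleton.elim i 0]
    · simp [hy y']
  · have hc2 : Nat.card Y = 2 := by rw [Nat.card_eq_fintype_card]; omega
    obtain ⟨y, z, hyz, huniv⟩ := Nat.card_eq_two_iff.mp hc2
    apply hasHamPath_of_list G.toGraph [inr y, inl 0, inr z] (by simp)
      (by
        refine List.isChain_cons_cons.mpr ⟨G.adj_inr_inl.mpr (hadj y), ?_⟩
        refine List.isChain_cons_cons.mpr ⟨G.adj_inl_inr.mpr (hadj z), List.isChain_singleton _⟩)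
      (by simp [hyz])
    rintro (i | y')
    · simp [Subsingleton.elim i 0]
    · have hmem2 : y' ∈ ({y, z} : Set Y) := by rw [huniv]; trivial
      rcases hmem2 with rfl | h
      · simp
      · rw [Set.mem_singleton_iff] at h
        subst h
        simp

lemma main_ge2 (G : ConvexBip n Y) (hmono : G.IsMonotone) (hconn : G.toGraph.Connected)
    (hn : 2 ≤ n) :
    ∃ (u v : Fin n ⊕ Y) (p : G.toGraph.Walk u v), p.IsHamiltonian := by
  have hB := hmono.1
  have hub := G.cardY_le hB (by omega)
  have hlb := G.cardY_ge hB hn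
  obtain ⟨d, hd, hd2⟩ : ∃ d, Fintype.card Y = n-1+d ∧ d ≤ 2 :=
    ⟨Fintype.card Y - (n-1), by omega, by omega⟩
  obtain ⟨f, hbij, hmem⟩ := G.exists_matching hmono hconn hn d hd hd2
  set xv : ℕ → (Fin n ⊕ Y) := fun j => Sum.inl ⟨min j (n-1), by omega⟩ with hxv
  set gv : ℕ → (Fin n ⊕ Y) := fun j => Sum.inr (f (Sum.inl ⟨min j (n-2), by omega⟩)) with hgv
  have hxvj : ∀ j, j ≤ n-1 → ∀ (h : j < n), xv j = inl ⟨j, h⟩ := by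
    intro j hj h
    simp [hxv, Nat.min_eq_left hj]
  have hgvj : ∀ j, j < n-1 → ∀ (h : j < n-1), gv j = inr (f (inl ⟨j, h⟩)) := by
    intro j hj h
    simp [hgv, Nat.min_eq_left (by omega : j ≤ n-2)]
  have hg : ∀ j (hj : j < n-1), G.gadj j (f (inl ⟨j, hj⟩)) := by
    intro j hj
    exact (G.hallT_inl d ⟨j, hj⟩ (f (inl ⟨j, hj⟩))).mp (hmem (inl ⟨j, hj⟩))
  have hchain : (clist xv gv 0 (n-1)).Chain' G.toGraph.Adj := by
    apply clist_chain'
    intro j h0 hj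
    rw [Nat.zero_add] at hj
    rw [hxvj j (by omega) (by omega), hgvj j hj hj, hxvj (j+1) (by omega) (by omega)]
    obtain ⟨⟨ha1, ha2⟩, ⟨hb1, hb2⟩⟩ := hg j hj
    exact ⟨G.adj_inl_inr.mpr ha2, G.adj_inr_inl.mpr hb2⟩
  have hmemc := clist_mem xv gv 0 (n-1)
  have hnodup : (clist xv gv 0 (n-1)).Nodup := by
    apply clist_nodup
    · intro j j' h1 h2 h3 h4 he
      rw [Nat.zero_add] at h2 h4
      rw [hxvj j h2 (by omega), hxvj j' h4 (by omega)] at he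
      simpa using he
    · intro j j' h1 h2 h3 h4 he
      rw [Nat.zero_add] at h2 h4
      rw [hgvj j h2 h2, hgvj j' h4 h4] at he
      simp only [inr.injEq] at he
      have := hbij.1 he
      simpa using this
    · intro j j' h1 h2 h3 h4
      rw [Nat.zero_add] at h2 h4
      rw [hxvj j h2 (by omega), hgvj j' h4 h4]
      simp
  have hne : clist xv gv 0 (n-1) ≠ [] := clist_ne_nil _ _ _ _
  have hxin : ∀ i : Fin n, inl i ∈ clist xv gv 0 (n-1) := by
    intro i
    rw [hmemc]
    exact Or.inl ⟨i.val, by omega, by omega, by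
      rw [hxvj i.val (by have := i.2; omega) i.2]⟩
  have hgin : ∀ g : Fin (n-1), inr (f (inl g)) ∈ clist xv gv 0 (n-1) := by
    intro g
    rw [hmemc]
    refine Or.inr ⟨g.val, by omega, by have := g.2; omega, ?_⟩
    rw [hgvj g.val (g.2) g.2]
  have hnotin : ∀ j : Fin d, (inr (f (inr j)) : Fin n ⊕ Y) ∉ clist xv gv 0 (n-1) := by
    intro j hin
    rw [hmemc] at hin
    rcases hin with ⟨j', _, hj', he⟩ | ⟨j', _, hj', he⟩
    · rw [hxvj j' (by omega) (by omega)] at he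
      simp at he
    · rw [Nat.zero_add] at hj'
      rw [hgvj j' hj' hj'] at he
      simp only [inr.injEq] at he
      have := hbij.1 he
      simp at this
  have hcover : ∀ v : Fin n ⊕ Y, v ∈ clist xv gv 0 (n-1) ∨
      ∃ j : Fin d, v = inr (f (inr j)) := by
    rintro (i | y)
    · exact Or.inl (hxin i)
    · obtain ⟨x, rfl⟩ := hbij.2 y
      rcases x with g | j
      · exact Or.inl (hgin g)
      · exact Or.inr ⟨j, rfl⟩
  -- case on d
  have hd012 : d = 0 ∨ d = 1 ∨ d = 2 := by omega
  rcases hd012 with rfl | rfl | rfl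
  · -- no extra vertices
    apply hasHamPath_of_list G.toGraph (clist xv gv 0 (n-1)) hne hchain hnodup
    intro v
    rcases hcover v with h | ⟨j, _⟩
    · exact h
    · exact j.elim0
  · -- one extra vertex
    have h0 := hmem (inr 0)
    simp [hallT] at h0
    rcases h0 with h0 | h0
    · -- attach in front
      obtain ⟨hlt, hadj⟩ := h0
      apply hasHamPath_of_list G.toGraph (inr (f (inr 0)) :: clist xv gv 0 (n-1)) (by simp)
      · refine List.isChain_cons.mpr ⟨?_, hchain⟩
        intro z hz
        rw [clist_head? xv gv] at hz
        cases hz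
        rw [hxvj 0 (by omega) (by omega)]
        exact G.adj_inr_inl.mpr hadj
      · exact List.nodup_cons.mpr ⟨hnotin 0, hnodup⟩
      · intro v
        rcases hcover v with h | ⟨j, rfl⟩
        · exact List.mem_cons_of_mem _ h
        · have : j = 0 := Subsingleton.elim _ _
          rw [this]
          exact List.mem_cons_self
    · -- attach at the back
      obtain ⟨hlt, hadj⟩ := h0
      apply hasHamPath_of_list G.toGraph (clist xv gv 0 (n-1) ++ [inr (f (inr 0))])
        (by simp [hne])
      · refine List.isChain_append.mpr ?_
        refine ⟨hchain, by simp, ?_⟩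
        intro x hx z hz
        simp only [List.head?_cons, Option.mem_some_iff] at hz
        rw [clist_getLast? xv gv, Option.mem_some_iff] at hx
        subst hx; subst hz
        rw [Nat.zero_add, hxvj (n-1) (le_refl _) (by omega)]
        exact G.adj_inl_inr.mpr hadj
      · rw [List.nodup_append]
        exact ⟨hnodup, by simp, by
          intro x hx b hb hxb
          simp only [List.mem_singleton] at hb
          subst hb; subst hxb
          exact hnotin 0 hx⟩
      · intro v
        rcases hcover v with h | ⟨j, rfl⟩
        · exact List.mem_append_left _ h
        · have : j = 0 := Subsingleton.elim _ _
          rw [this]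
          exact List.mem_append_right _ (by simp)
  · -- two extra vertices
    have h0 := hmem (inr 0)
    have h1 := hmem (inr 1)
    norm_num [hallT] at h0 h1
    obtain ⟨hlt0, hadj0⟩ := h0
    obtain ⟨hlt1, hadj1⟩ := h1
    have hne01 : (f (inr 0) : Y) ≠ f (inr 1) := by
      intro h
      have := hbij.1 h
      simp at this
    apply hasHamPath_of_list G.toGraph
      (inr (f (inr 0)) :: (clist xv gv 0 (n-1) ++ [inr (f (inr 1))])) (by simp)
    · refine List.isChain_cons.mpr ⟨?_, ?_⟩
      · intro z hz
        rw [List.head?_append_of_ne_nil _ hne, clist_head? xv gv] at hz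
        cases hz
        rw [hxvj 0 (by omega) (by omega)]
        exact G.adj_inr_inl.mpr hadj0
      · refine List.isChain_append.mpr ?_
        refine ⟨hchain, by simp, ?_⟩
        intro x hx z hz
        simp only [List.head?_cons, Option.mem_some_iff] at hz
        rw [clist_getLast? xv gv, Option.mem_some_iff] at hx
        subst hx; subst hz
        rw [Nat.zero_add, hxvj (n-1) (le_refl _) (by omega)]
        exact G.adj_inl_inr.mpr hadj1
    · rw [List.nodup_cons, List.nodup_append]
      refine ⟨?_, hnodup, by simp, ?_⟩
      · intro hin
        rcases List.mem_append.mp hin with h | h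
        · exact hnotin 0 h
        · simp only [List.mem_singleton, inr.injEq] at h
          exact hne01 h
      · intro x hx b hb hxb
        simp only [List.mem_singleton] at hb
        subst hb; subst hxb
        exact hnotin 1 hx
    · intro v
      rcases hcover v with h | ⟨j, rfl⟩
      · exact List.mem_cons_of_mem _ (List.mem_append_left _ h)
      · have : j = 0 ∨ j = 1 := by omega
        rcases this with rfl | rfl
        · exact List.mem_cons_self
        · exact List.mem_cons_of_mem _ (List.mem_append_right _ (by simp))

end ConvexBip
end Aux7
/-- every monotone convex bipartite graph has a Hamiltonian path. -/
theorem stmt_8 {n : ℕ} {Y : Type*} [Fintype Y] [DecidableEq Y]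
    (G : ConvexBip n Y) (hconn : G.toGraph.Connected) (hmono : G.IsMonotone) :
    ConvexBip.HasHamPath G.toGraph := by
  rcases Nat.lt_or_ge n 2 with h | h
  · have h01 : n = 0 ∨ n = 1 := by omega
    rcases h01 with rfl | rfl
    · exact G.main0 hconn
    · exact G.main1 hconn hmono.1
  · exact G.main_ge2 hmono hconn h
end

section
/- Let G be a monotone convex bipartite graph with parts X = (x_1,...,x_n) and Y, and let y be a neighbor of x_n whose leftmost neighbor index left(y) is maximum among neighbors of x_n. Let z be a pendant (degree-1) vertex of Y adjacent to x_n if one exists. Then the subgraph G' induced on V(G) \ {x_n, y, z} (or V(G) \ {x_n, y} if z does not exist) is again a monotone convex bipartite graph. -/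
open Finset SimpleGraph

/-- The convex bipartite graph obtained from `G` by deleting the last `X`-vertex `x_n`
and a set `D` of `Y`-vertices. -/
def ConvexBip.delete {n : ℕ} {Y : Type*} (G : ConvexBip n Y) (D : Set Y) :
    ConvexBip (n - 1) {w : Y // w ∉ D} where
  adj i w := G.adj (Fin.castLE (Nat.sub_le n 1) i) w.val
  convex := fun y i₁ i₂ i₃ h12 h23 h1 h3 =>
    G.convex y.val _ _ _ (Fin.mk_le_mk.mpr (Fin.le_def.mp h12))
      (Fin.mk_le_mk.mpr (Fin.le_def.mp h23)) h1 h3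

/-! ### Auxiliary lemmas for Statement 9 -/

lemma ConvexBip.exists_nbr {n : ℕ} {Y : Type*} (G : ConvexBip n Y) (hn : 0 < n)
    (hconn : G.toGraph.Connected) (w : Y) : ∃ i, G.adj i w := by
  obtain ⟨p⟩ := hconn.preconnected (Sum.inr w) (Sum.inl ⟨0, hn⟩)
  cases p with
  | cons h p =>
    rcases h with ⟨i, y, hy, _, _⟩ | ⟨i, y, hy, _, hadj⟩
    · exact absurd hy (by simp)
    · exact ⟨i, by cases hy; exact hadj⟩

lemma ncard_castLE {m n : ℕ} (h : m ≤ n) (S : Set (Fin n)) (hS : ∀ j ∈ S, j.val < m) :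
    S.ncard = {i : Fin m | (Fin.castLE h i) ∈ S}.ncard := by
  have himg : Fin.castLE h '' {i : Fin m | Fin.castLE h i ∈ S} = S := by
    apply Set.Subset.antisymm
    · rintro j ⟨i, hi, rfl⟩; exact hi
    · intro j hj
      refine ⟨⟨j.val, hS j hj⟩, ?_, Fin.ext rfl⟩
      show Fin.castLE h ⟨j.val, _⟩ ∈ S
      convert hj using 2
      exact Fin.ext (by simp)
  rw [← Set.ncard_image_of_injective _ (Fin.castLE_injective h), himg]

set_option maxHeartbeats 1600000 in
theorem stmt9_aux {n : ℕ} {Y : Type*} [Fintype Y] [DecidableEq Y]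
    (G : ConvexBip n Y) (hn : 0 < n)
    (hconn : G.toGraph.Connected) (hmono : G.IsMonotone)
    (y₀ : Y) (hy₀ : G.adj ⟨n - 1, by omega⟩ y₀)
    (hmax : ∀ y : Y, G.adj ⟨n - 1, by omega⟩ y →
        ∀ i : Fin n, G.adj i y₀ → ∃ i' : Fin n, G.adj i' y ∧ i' ≤ i)
    (D : Set Y)
    (hD : ∀ w : Y, w ∈ D ↔ (w = y₀ ∨ (G.degY w = 1 ∧ G.adj ⟨n - 1, by omega⟩ w))) :
    (G.delete D).IsMonotone := by
  classical
  obtain ⟨⟨gB1, gB2, gB3, gB4a, gB4b⟩, gP, gM⟩ := hmono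
  have hcle : n - 1 ≤ n := Nat.sub_le n 1
  have hnbr : ∀ w : Y, ∃ i, G.adj i w := G.exists_nbr hn hconn
  -- neighbours of a vertex, in `ℕ` form
  have hnbrv : ∀ w : Y, ∃ jv : ℕ, ∃ hj : jv < n, G.adj ⟨jv, hj⟩ w := by
    intro w; obtain ⟨i, hi⟩ := hnbr w; exact ⟨i.val, i.isLt, hi⟩
  have hY' : ∀ w : Y, w ∉ D → w ≠ y₀ ∧ ¬(G.degY w = 1 ∧ G.adj ⟨n - 1, by omega⟩ w) := by
    intro w hw
    rw [hD] at hw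
    exact not_or.mp hw
  -- convexity in `ℕ` form
  have hcx : ∀ (w : Y) (a b c : ℕ) (ha : a < n) (hb : b < n) (hc : c < n), a ≤ b → b ≤ c →
      G.adj ⟨a, ha⟩ w → G.adj ⟨c, hc⟩ w → G.adj ⟨b, hb⟩ w := by
    intro w a b c ha hb hc h1 h2 hi hj
    exact G.convex w ⟨a, ha⟩ ⟨b, hb⟩ ⟨c, hc⟩ (by simpa [Fin.le_def] using h1)
      (by simpa [Fin.le_def] using h2) hi hj
  have himgcard : ∀ S : Set {w : Y // w ∉ D}, S.ncard = (Subtype.val '' S).ncard :=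
    fun S => (Set.ncard_image_of_injective S Subtype.val_injective).symm
  -- membership in NIn of the deleted graph, in `ℕ` form
  have hmemN : ∀ (p q : Fin (n-1)) (w : Y) (hw : w ∉ D),
      (⟨w, hw⟩ : {w : Y // w ∉ D}) ∈ (G.delete D).NIn p q →
      ∀ (jv : ℕ) (hjn : jv < n), jv < n - 1 → G.adj ⟨jv, hjn⟩ w →
        p.val ≤ jv ∧ jv ≤ q.val := by
    intro p q w hw hmem jv hjn hj hadj
    have h := hmem ⟨jv, hj⟩ hadj
    exact ⟨Fin.le_def.mp h.1, Fin.le_def.mp h.2⟩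
  have hmemN' : ∀ (p q : Fin (n-1)) (w : Y) (hw : w ∉ D),
      (∀ (jv : ℕ) (hjn : jv < n), jv < n - 1 → G.adj ⟨jv, hjn⟩ w →
        p.val ≤ jv ∧ jv ≤ q.val) →
      (⟨w, hw⟩ : {w : Y // w ∉ D}) ∈ (G.delete D).NIn p q := by
    intro p q w hw h i hadj
    have := h i.val (lt_of_lt_of_le i.isLt hcle) i.isLt hadj
    exact ⟨Fin.le_def.mpr this.1, Fin.le_def.mpr this.2⟩
  -- membership in NIn of G, in `ℕ` form
  have hmemG : ∀ (a b : ℕ) (ha : a < n) (hb : b < n) (w : Y),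
      (∀ (jv : ℕ) (hjn : jv < n), G.adj ⟨jv, hjn⟩ w → a ≤ jv ∧ jv ≤ b) →
      w ∈ G.NIn ⟨a, ha⟩ ⟨b, hb⟩ := by
    intro a b ha hb w h j hadj
    have := h j.val j.isLt hadj
    exact ⟨Fin.le_def.mpr this.1, Fin.le_def.mpr this.2⟩
  have hmemG' : ∀ (a b : ℕ) (ha : a < n) (hb : b < n) (w : Y),
      w ∈ G.NIn ⟨a, ha⟩ ⟨b, hb⟩ →
      ∀ (jv : ℕ) (hjn : jv < n), G.adj ⟨jv, hjn⟩ w → a ≤ jv ∧ jv ≤ b := by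
    intro a b ha hb w h jv hjn hadj
    have := h ⟨jv, hjn⟩ hadj
    exact ⟨Fin.le_def.mp this.1, Fin.le_def.mp this.2⟩
  -- degree transfer
  have hdeg : ∀ (w : Y) (hw : w ∉ D),
      (G.delete D).degY ⟨w, hw⟩ = {j : Fin n | G.adj j w ∧ j.val < n - 1}.ncard := by
    intro w hw
    rw [ncard_castLE hcle _ (fun j hj => hj.2)]
    show {i : Fin (n-1) | G.adj (Fin.castLE hcle i) w}.ncard = _
    congr 1
    ext i
    simp [i.isLt]
  -- NIn' transfer
  have hNto : ∀ (p q : Fin (n-1)) (w : Y) (hw : w ∉ D),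
      w ∈ G.NIn' (Fin.castLE hcle p) (Fin.castLE hcle q) →
      (⟨w, hw⟩ : {w : Y // w ∉ D}) ∈ (G.delete D).NIn' p q := by
    intro p q w hw hmem
    show 2 ≤ _
    have heq := ncard_castLE hcle
      {j : Fin n | G.adj j w ∧ Fin.castLE hcle p ≤ j ∧ j ≤ Fin.castLE hcle q}
      (fun j hj => lt_of_le_of_lt (Fin.le_def.mp hj.2.2) (by simpa using q.isLt))
    refine le_trans hmem (le_of_eq ?_)
    rw [heq]
    congr 1
  -- forward transfer of NIn for intervals ending at most at n-3
  have hsubA : ∀ a b : Fin (n-1), b.val < n - 1 - 1 →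
      Subtype.val '' ((G.delete D).NIn a b) ⊆
        G.NIn ⟨a.val, by omega⟩ ⟨b.val, by omega⟩ := by
    intro a b hb
    have han := a.isLt; have hbn := b.isLt
    rintro w ⟨⟨w, hwD⟩, hmem, rfl⟩
    have hnot : ¬ G.adj ⟨n - 1, by omega⟩ w := by
      intro htopadj
      by_cases hlow : ∃ (jv : ℕ) (hj : jv < n), jv < n - 1 ∧ G.adj ⟨jv, hj⟩ w
      · obtain ⟨jv, hjn, hjlt, hadj⟩ := hlow
        have hbd := hmemN a b w hwD hmem jv hjn hjlt hadj
        have hadj2 : G.adj ⟨b.val + 1, by omega⟩ w :=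
          hcx w jv (b.val + 1) (n - 1) hjn (by omega) (by omega) (by omega) (by omega) hadj htopadj
        have := hmemN a b w hwD hmem (b.val + 1) (by omega) (by omega) hadj2
        omega
      · push_neg at hlow
        have hdeg1 : G.degY w = 1 := by
          have hset : {i : Fin n | G.adj i w} = {⟨n - 1, by omega⟩} := by
            ext i
            simp only [Set.mem_setOf_eq, Set.mem_singleton_iff]
            constructor
            · intro hi
              by_contra hne
              have hne' : i.val ≠ n - 1 := fun h => hne (Fin.ext h)
              exact hlow i.val i.isLt (by have := i.isLt; omega) hi
            · rintro rfl; exact htopadj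
          rw [ConvexBip.degY, hset, Set.ncard_singleton]
        exact (hY' w hwD).2 ⟨hdeg1, htopadj⟩
    apply hmemG
    intro jv hjn hadj
    have hjlt : jv < n - 1 := by
      rcases Nat.lt_or_ge jv (n - 1) with h | h
      · exact h
      · exfalso
        have : jv = n - 1 := by omega
        subst this
        exact hnot hadj
    exact hmemN a b w hwD hmem jv hjn hjlt hadj
  -- reverse transfer
  have hsubA' : ∀ a b : Fin (n-1), b.val < n - 1 - 1 →
      G.NIn ⟨a.val, by omega⟩ ⟨b.val, by omega⟩ ⊆
        Subtype.val '' ((G.delete D).NIn a b) := by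
    intro a b hb w hw
    have hup := hmemG' _ _ _ _ w hw
    have hwD : w ∉ D := by
      rw [hD]; push_neg
      constructor
      · rintro rfl
        have := (hup (n - 1) (by omega) hy₀).2
        omega
      · intro _ htop
        have := (hup (n - 1) (by omega) htop).2
        omega
    refine ⟨⟨w, hwD⟩, hmemN' a b w hwD ?_, rfl⟩
    intro jv hjn hjlt hadj
    exact hup jv hjn hadj
  -- characterization of pendant vertices of the deleted graph
  have hchar : 3 ≤ n → ∀ (w : Y) (hwD : w ∉ D), (G.delete D).degY ⟨w, hwD⟩ = 1 →
      ∀ i : Fin (n-1), G.adj (Fin.castLE hcle i) w →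
      (G.degY w = 1 ∧ G.adj ⟨0, by omega⟩ w ∧ i.val = 0) ∨
      (G.adj ⟨n - 1, by omega⟩ w ∧ (∀ j : Fin n, G.adj j w → n - 2 ≤ j.val) ∧
        i.val = n - 2) := by
    intro hn3 w hwD hdeg1 i hadj
    rw [hdeg w hwD] at hdeg1
    obtain ⟨j, hj⟩ := Set.ncard_eq_one.mp hdeg1
    have hjmem : G.adj j w ∧ j.val < n - 1 := by
      have : j ∈ ({j} : Set (Fin n)) := rfl
      rw [← hj] at this
      exact this
    have huniq : ∀ (jv : ℕ) (hjn : jv < n), G.adj ⟨jv, hjn⟩ w → jv < n - 1 → jv = j.val := by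
      intro jv hjn h1 h2
      have : (⟨jv, hjn⟩ : Fin n) ∈ {j : Fin n | G.adj j w ∧ j.val < n - 1} := ⟨h1, h2⟩
      rw [hj] at this
      exact congrArg Fin.val this
    have hij : i.val = j.val :=
      huniq i.val (by omega) hadj (by have := i.isLt; omega)
    by_cases htop : G.adj ⟨n - 1, by omega⟩ w
    · right
      have hj2 : j.val = n - 2 := by
        by_contra hne
        have hjlt : j.val < n - 2 := by have := hjmem.2; omega
        have hadj2 : G.adj ⟨n - 2, by omega⟩ w :=
          hcx w j.val (n - 2) (n - 1) (by omega) (by omega) (by omega) (by omega) (by omega)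
            hjmem.1 htop
        have := huniq (n - 2) (by omega) hadj2 (by omega)
        omega
      refine ⟨htop, ?_, by omega⟩
      intro j' hj'
      by_cases h : j'.val < n - 1
      · have := huniq j'.val j'.isLt hj' h; omega
      · have := j'.isLt; omega
    · left
      have hdset : {i : Fin n | G.adj i w} = {j} := by
        ext j'
        simp only [Set.mem_setOf_eq, Set.mem_singleton_iff]
        constructor
        · intro h
          by_cases hlt : j'.val < n - 1
          · exact Fin.ext (huniq j'.val j'.isLt h hlt)
          · exfalso
            have hj'e : j' = ⟨n - 1, by omega⟩ := Fin.ext (show j'.val = n - 1 by have := j'.isLt; omega)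
            exact htop (hj'e ▸ h)
        · rintro rfl; exact hjmem.1
      have hdegw : G.degY w = 1 := by rw [ConvexBip.degY, hdset, Set.ncard_singleton]
      have hj0 : j.val = 0 := by
        by_contra h0
        exact gP ⟨w, j, hdegw, hjmem.1, by omega, hjmem.2⟩
      have hje : j = ⟨0, by omega⟩ := Fin.ext hj0
      exact ⟨hdegw, hje ▸ hjmem.1, by omega⟩
  -- three `Y`-vertices cannot concentrate on the top two `X`-vertices
  have h3elt : 3 ≤ n → ∀ w₁ w₂ : Y, w₁ ≠ w₂ → w₁ ≠ y₀ → w₂ ≠ y₀ →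
      (∀ j, G.adj j w₁ → n - 2 ≤ j.val) → G.adj ⟨n - 1, by omega⟩ w₁ →
      (∀ j, G.adj j w₂ → n - 2 ≤ j.val) → G.adj ⟨n - 1, by omega⟩ w₂ → False := by
    intro hn3 w₁ w₂ hne h1y h2y ha1 ht1 ha2 ht2
    have hy0up : ∀ j, G.adj j y₀ → n - 2 ≤ j.val := by
      intro j hj
      obtain ⟨i', hi', hle⟩ := hmax w₁ ht1 j hj
      have := ha1 i' hi'
      have := Fin.le_def.mp hle
      omega
    have hmem : ∀ w : Y, (∀ j, G.adj j w → n - 2 ≤ j.val) →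
        w ∈ G.NIn ⟨n - 2, by omega⟩ ⟨n - 1, by omega⟩ := by
      intro w h
      apply hmemG
      intro jv hjn hadj
      exact ⟨h ⟨jv, hjn⟩ hadj, by omega⟩
    have hsub : ({w₁, w₂, y₀} : Set Y) ⊆ G.NIn ⟨n - 2, by omega⟩ ⟨n - 1, by omega⟩ := by
      rintro w (rfl | rfl | rfl)
      · exact hmem _ ha1
      · exact hmem _ ha2
      · exact hmem _ hy0up
    have h3 : ({w₁, w₂, y₀} : Set Y).ncard = 3 :=
      Set.ncard_eq_three.mpr ⟨w₁, w₂, y₀, hne, h1y, h2y, rfl⟩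
    have hb := gB1 ⟨n - 2, by omega⟩ ⟨n - 1, by omega⟩ (Fin.lt_def.mpr (by simp; omega))
      (Or.inr (Or.inl ⟨by simp; omega, by simp⟩))
    have := Set.ncard_le_ncard hsub (Set.toFinite _)
    simp only [Fin.val_mk] at hb
    omega
  refine ⟨⟨?_, ?_, ?_, ?_, ?_⟩, ?_, ?_⟩
  · -- B1
    intro p q hpq htype
    have hplt := p.isLt
    have hqlt := q.isLt
    have hpqv := Fin.lt_def.mp hpq
    rw [himgcard]
    rcases Nat.lt_or_ge q.val (n - 1 - 1) with hqc | hqc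
    · -- interval well below the top
      have hb := gB1 ⟨p.val, by omega⟩ ⟨q.val, by omega⟩ (Fin.lt_def.mpr (by simpa using hpqv))
        (by
          rcases Nat.eq_zero_or_pos p.val with h | h
          · exact Or.inl ⟨by simpa using h, by simpa using (show q.val < n - 1 by omega)⟩
          · exact Or.inr (Or.inr ⟨by simpa using h, by simpa using (show q.val < n - 1 by omega)⟩))
      have := Set.ncard_le_ncard (hsubA p q hqc) (Set.toFinite _)
      simp only [Fin.val_mk] at hb
      omega
    · -- q is the last index of the deleted graph
      have hq2 : q.val = n - 1 - 1 := by omega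
      have hp0 : 0 < p.val := by rcases htype with ⟨h1, h2⟩ | ⟨h1, h2⟩ | ⟨h1, h2⟩ <;> omega
      have hn3 : 3 ≤ n := by omega
      by_cases hlowy : ∃ (jv : ℕ) (hj : jv < n), G.adj ⟨jv, hj⟩ y₀ ∧ jv < p.val
      · obtain ⟨j₀, hj₀n, hj₀adj, hj₀lt⟩ := hlowy
        have hsub : Subtype.val '' ((G.delete D).NIn p q) ⊆
            G.NIn ⟨p.val, by omega⟩ ⟨n - 2, by omega⟩ := by
          rintro w ⟨⟨w, hwD⟩, hmem, rfl⟩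
          have hnot : ¬ G.adj ⟨n - 1, by omega⟩ w := by
            intro htopadj
            obtain ⟨i', hi'adj, hi'le⟩ := hmax w htopadj ⟨j₀, hj₀n⟩ hj₀adj
            have hlei : i'.val ≤ j₀ := Fin.le_def.mp hi'le
            have := hmemN p q w hwD hmem i'.val i'.isLt (by omega) hi'adj
            omega
          apply hmemG
          intro jv hjn hadj
          have hjlt : jv < n - 1 := by
            rcases Nat.lt_or_ge jv (n - 1) with h | h
            · exact h
            · exfalso
              have : jv = n - 1 := by omega
              subst this
              exact hnot hadj
          have := hmemN p q w hwD hmem jv hjn hjlt hadj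
          omega
        have hb := gB1 ⟨p.val, by omega⟩ ⟨n - 2, by omega⟩ (Fin.lt_def.mpr (by simp; omega))
          (Or.inr (Or.inr ⟨by simp; omega, by simp; omega⟩))
        have := Set.ncard_le_ncard hsub (Set.toFinite _)
        simp only [Fin.val_mk] at hb
        omega
      · push_neg at hlowy
        have hlowy' : ∀ (jv : ℕ) (hj : jv < n), G.adj ⟨jv, hj⟩ y₀ → p.val ≤ jv := by
          intro jv hj hadj
          exact hlowy jv hj hadj
        have hy₀mem : y₀ ∈ G.NIn ⟨p.val, by omega⟩ ⟨n - 1, by omega⟩ := by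
          apply hmemG
          intro jv hjn hadj
          exact ⟨hlowy' jv hjn hadj, by omega⟩
        have hsub : Subtype.val '' ((G.delete D).NIn p q) ⊆
            (G.NIn ⟨p.val, by omega⟩ ⟨n - 1, by omega⟩) \ {y₀} := by
          rintro w ⟨⟨w, hwD⟩, hmem, rfl⟩
          refine ⟨?_, by simpa using (hY' w hwD).1⟩
          apply hmemG
          intro jv hjn hadj
          by_cases hjlt : jv < n - 1
          · have := hmemN p q w hwD hmem jv hjn hjlt hadj
            omega
          · omega
        have hdiff := Set.ncard_diff_singleton_of_mem hy₀mem
        have hb := gB1 ⟨p.val, by omega⟩ ⟨n - 1, by omega⟩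
          (Fin.lt_def.mpr (show p.val < n - 1 by omega))
          (Or.inr (Or.inl ⟨show 0 < p.val by omega, rfl⟩))
        have h1 := Set.ncard_le_ncard hsub (Set.toFinite _)
        simp only [Fin.val_mk] at hb hdiff
        omega
  · -- B2
    intro hm
    rw [himgcard]
    have hy₀mem : y₀ ∈ G.NIn ⟨0, hn⟩ ⟨n - 1, by omega⟩ := by
      apply hmemG
      intro jv hjn hadj
      omega
    have hsub : Subtype.val '' ((G.delete D).NIn ⟨0, hm⟩ ⟨n - 1 - 1, by omega⟩) ⊆
        (G.NIn ⟨0, hn⟩ ⟨n - 1, by omega⟩) \ {y₀} := by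
      rintro w ⟨⟨w, hwD⟩, _, rfl⟩
      refine ⟨?_, by simpa using (hY' w hwD).1⟩
      apply hmemG
      intro jv hjn hadj
      omega
    have hdiff := Set.ncard_diff_singleton_of_mem hy₀mem
    have hb := gB2 hn
    have h1 := Set.ncard_le_ncard hsub (Set.toFinite _)
    omega
  · -- B3
    intro k p q hk1 hk2 hpq hchain
    have hn3 : 3 ≤ n := by omega
    rw [himgcard]
    by_cases hy : ∃ j : Fin k, y₀ ∈ G.NIn' (Fin.castLE hcle (p j)) (Fin.castLE hcle (q j))
    · -- y₀ lies in one of the lifted sets: extend the family with the top interval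
      obtain ⟨j₀, hj₀⟩ := hy
      have hj₀' : 2 ≤ {j : Fin n | G.adj j y₀ ∧ Fin.castLE hcle (p j₀) ≤ j ∧
          j ≤ Fin.castLE hcle (q j₀)}.ncard := hj₀
      obtain ⟨A, hA, B, hB, hAB⟩ := (Set.one_lt_ncard (Set.toFinite _)).mp
        (lt_of_lt_of_le Nat.one_lt_two hj₀')
      have hmin : ∃ (av : ℕ) (ha : av < n), G.adj ⟨av, ha⟩ y₀ ∧ (p j₀).val ≤ av ∧
          av < (q j₀).val := by
        have hA1 : (p j₀).val ≤ A.val := Fin.le_def.mp hA.2.1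
        have hA2 : A.val ≤ (q j₀).val := Fin.le_def.mp hA.2.2
        have hB1 : (p j₀).val ≤ B.val := Fin.le_def.mp hB.2.1
        have hB2 : B.val ≤ (q j₀).val := Fin.le_def.mp hB.2.2
        have hABv : A.val ≠ B.val := fun h => hAB (Fin.ext h)
        rcases Nat.lt_or_ge A.val B.val with h | h
        · exact ⟨A.val, A.isLt, hA.1, hA1, by omega⟩
        · exact ⟨B.val, B.isLt, hB.1, hB1, by omega⟩
      obtain ⟨av, han, haadj, hap, haq⟩ := hmin
      set Pf : Fin (k+1) → Fin n :=
        Fin.snoc (fun i => Fin.castLE hcle (p i)) ⟨n - 2, by omega⟩ with hPf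
      set Qf : Fin (k+1) → Fin n :=
        Fin.snoc (fun i => Fin.castLE hcle (q i)) ⟨n - 1, by omega⟩ with hQf
      have hPQlt : ∀ i : Fin (k+1), Pf i < Qf i := by
        refine Fin.lastCases ?_ ?_
        · simp only [hPf, hQf, Fin.snoc_last]
          exact Fin.lt_def.mpr (show n - 2 < n - 1 by omega)
        · intro j
          simp only [hPf, hQf, Fin.snoc_castSucc]
          exact Fin.lt_def.mpr (by simpa using Fin.lt_def.mp (hpq j))
      have hPQchain : ∀ i i' : Fin (k+1), i < i' → Qf i ≤ Pf i' := by
        intro i i' hii'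
        rcases Fin.eq_castSucc_or_eq_last i with ⟨j, rfl⟩ | rfl
        · rcases Fin.eq_castSucc_or_eq_last i' with ⟨j', rfl⟩ | rfl
          · simp only [hPf, hQf, Fin.snoc_castSucc]
            have hjj : j < j' := by
              have hv := Fin.lt_def.mp hii'
              exact Fin.lt_def.mpr (by simpa using hv)
            exact Fin.le_def.mpr (by simpa using Fin.le_def.mp (hchain j j' hjj))
          · simp only [hPf, hQf, Fin.snoc_castSucc, Fin.snoc_last]
            exact Fin.le_def.mpr
              (by simpa using (show (q j).val ≤ n - 2 from by have := (q j).isLt; omega))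
        · exfalso
          have hv := Fin.lt_def.mp hii'
          have hv2 := i'.isLt
          simp only [Fin.val_last] at hv
          omega
      have hPQ := gB3 (k+1) Pf Qf (by omega) (by omega) hPQlt hPQchain
      have hge : (∑ i : Fin k, ((q i).val - (p i).val)) + 1 ≤
          (⋃ i, G.NIn' (Pf i) (Qf i)).ncard := by
        refine le_trans (le_of_eq ?_) hPQ
        rw [Fin.sum_univ_castSucc]
        congr 1
        · apply Finset.sum_congr rfl
          intro j _
          simp only [hPf, hQf, Fin.snoc_castSucc, Fin.coe_castLE]
        · simp only [hPf, hQf, Fin.snoc_last]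
          show 1 = (n - 1) - (n - 2)
          omega
      have hy₀U : y₀ ∈ ⋃ i, G.NIn' (Pf i) (Qf i) := by
        refine Set.mem_iUnion.mpr ⟨Fin.castSucc j₀, ?_⟩
        simp only [hPf, hQf, Fin.snoc_castSucc]
        exact hj₀
      have hsub : (⋃ i, G.NIn' (Pf i) (Qf i)) \ {y₀} ⊆
          Subtype.val '' (⋃ i, (G.delete D).NIn' (p i) (q i)) := by
        rintro w ⟨hw, hwne⟩
        simp only [Set.mem_singleton_iff] at hwne
        obtain ⟨i, hwi⟩ := Set.mem_iUnion.mp hw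
        have hdw : 2 ≤ G.degY w :=
          le_trans hwi (Set.ncard_le_ncard (fun j hj => hj.1) (Set.toFinite _))
        have hwD : w ∉ D := by
          rw [hD]
          rintro (rfl | ⟨h1, _⟩)
          · exact hwne rfl
          · omega
        rcases Fin.eq_castSucc_or_eq_last i with ⟨j, rfl⟩ | rfl
        · simp only [hPf, hQf, Fin.snoc_castSucc] at hwi
          exact ⟨⟨w, hwD⟩, Set.mem_iUnion.mpr ⟨j, hNto (p j) (q j) w hwD hwi⟩, rfl⟩
        · simp only [hPf, hQf, Fin.snoc_last] at hwi
          have htw : G.adj ⟨n - 1, by omega⟩ w := by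
            by_contra hnot
            have hsb : {j : Fin n | G.adj j w ∧ (⟨n - 2, by omega⟩ : Fin n) ≤ j ∧
                j ≤ (⟨n - 1, by omega⟩ : Fin n)} ⊆ ({⟨n - 2, by omega⟩} : Set (Fin n)) := by
              rintro j ⟨hja, hj1, hj2⟩
              have h1 : n - 2 ≤ j.val := Fin.le_def.mp hj1
              have h2 : j.val ≤ n - 1 := Fin.le_def.mp hj2
              rcases (show j.val = n - 2 ∨ j.val = n - 1 by omega) with h | h
              · exact Fin.ext h
              · exact absurd hja (by
                  have hje : j = ⟨n - 1, by omega⟩ := Fin.ext h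
                  rw [hje]; exact hnot)
            have hfin := le_trans hwi (Set.ncard_le_ncard hsb (Set.toFinite _))
            rw [Set.ncard_singleton] at hfin
            omega
          obtain ⟨i', hi'adj, hi'le⟩ := hmax w htw ⟨av, han⟩ haadj
          have hi'v : i'.val ≤ av := Fin.le_def.mp hi'le
          have hqj := (q j₀).isLt
          have hpj := (p j₀).isLt
          have hb1 : G.adj ⟨max i'.val (p j₀).val, by omega⟩ w :=
            hcx w i'.val (max i'.val (p j₀).val) (n - 1) i'.isLt (by omega) (by omega)
              (le_max_left _ _) (by omega) hi'adj htw
          have hb2 : G.adj ⟨(q j₀).val, by omega⟩ w :=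
            hcx w i'.val ((q j₀).val) (n - 1) i'.isLt (by omega) (by omega) (by omega)
              (by omega) hi'adj htw
          have hpair : ({⟨max i'.val (p j₀).val, by omega⟩, ⟨(q j₀).val, by omega⟩} :
              Set (Fin (n-1))) ⊆
              {j : Fin (n-1) | (G.delete D).adj j ⟨w, hwD⟩ ∧ p j₀ ≤ j ∧ j ≤ q j₀} := by
            rintro j (rfl | rfl)
            · exact ⟨hb1, Fin.le_def.mpr (show (p j₀).val ≤ max i'.val (p j₀).val from
                le_max_right _ _), Fin.le_def.mpr (show max i'.val (p j₀).val ≤ (q j₀).val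
                by omega)⟩
            · exact ⟨hb2, Fin.le_def.mpr (show (p j₀).val ≤ (q j₀).val from
                le_of_lt (Fin.lt_def.mp (hpq j₀))), Fin.le_def.mpr (le_refl _)⟩
          have hne2 : (⟨max i'.val (p j₀).val, by omega⟩ : Fin (n-1)) ≠
              (⟨(q j₀).val, by omega⟩ : Fin (n-1)) := by
            intro h
            have h' : max i'.val (p j₀).val = (q j₀).val := congrArg Fin.val h
            omega
          have h2m : (⟨w, hwD⟩ : {w : Y // w ∉ D}) ∈ (G.delete D).NIn' (p j₀) (q j₀) := by
            show 2 ≤ _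
            exact le_trans (le_of_eq (Set.ncard_pair hne2).symm)
              (Set.ncard_le_ncard hpair (Set.toFinite _))
          exact ⟨⟨w, hwD⟩, Set.mem_iUnion.mpr ⟨j₀, h2m⟩, rfl⟩
      have hdiff := Set.ncard_diff_singleton_of_mem hy₀U
      have hcard := Set.ncard_le_ncard hsub (Set.toFinite _)
      omega
    · -- y₀ is in none of the lifted sets
      push_neg at hy
      have hsub : (⋃ i, G.NIn' (Fin.castLE hcle (p i)) (Fin.castLE hcle (q i))) ⊆
          Subtype.val '' (⋃ i, (G.delete D).NIn' (p i) (q i)) := by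
        intro w hw
        obtain ⟨i, hwi⟩ := Set.mem_iUnion.mp hw
        have hdw : 2 ≤ G.degY w :=
          le_trans hwi (Set.ncard_le_ncard (fun j hj => hj.1) (Set.toFinite _))
        have hwD : w ∉ D := by
          rw [hD]
          rintro (rfl | ⟨h1, _⟩)
          · exact hy i hwi
          · omega
        exact ⟨⟨w, hwD⟩, Set.mem_iUnion.mpr ⟨i, hNto (p i) (q i) w hwD hwi⟩, rfl⟩
      refine le_trans ?_ (le_trans (Set.ncard_le_ncard hsub (Set.toFinite _)) le_rfl)
      have hg := gB3 k (fun i => Fin.castLE hcle (p i)) (fun i => Fin.castLE hcle (q i)) hk1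
        (by omega)
        (fun i => Fin.lt_def.mpr (by simpa using Fin.lt_def.mp (hpq i)))
        (fun i i' h => Fin.le_def.mpr (by simpa using Fin.le_def.mp (hchain i i' h)))
      simpa using hg
  · -- B4a: at most two pendant vertices
    rcases Nat.lt_or_ge n 3 with hn2 | hn3
    · -- n ≤ 2 : at most two Y-vertices survive at all
      rw [himgcard]
      have hy₀mem : y₀ ∈ G.NIn ⟨0, hn⟩ ⟨n - 1, by omega⟩ := by
        apply hmemG; intro jv hjn hadj; omega
      have hsub : Subtype.val '' {w' : {w : Y // w ∉ D} | (G.delete D).degY w' = 1} ⊆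
          (G.NIn ⟨0, hn⟩ ⟨n - 1, by omega⟩) \ {y₀} := by
        rintro w ⟨⟨w, hwD⟩, _, rfl⟩
        refine ⟨?_, by simpa using (hY' w hwD).1⟩
        apply hmemG; intro jv hjn hadj; omega
      have hdiff := Set.ncard_diff_singleton_of_mem hy₀mem
      have hb := gB2 hn
      have h1 := Set.ncard_le_ncard hsub (Set.toFinite _)
      omega
    · rw [himgcard]
      have hsub : Subtype.val '' {w' : {w : Y // w ∉ D} | (G.delete D).degY w' = 1} ⊆
          {w : Y | G.degY w = 1 ∧ G.adj ⟨0, by omega⟩ w} ∪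
          {w : Y | w ≠ y₀ ∧ (∀ j : Fin n, G.adj j w → n - 2 ≤ j.val) ∧
            G.adj ⟨n - 1, by omega⟩ w} := by
        rintro w ⟨⟨w, hwD⟩, hmem, rfl⟩
        simp only [Set.mem_setOf_eq] at hmem
        have hex : ∃ i : Fin (n-1), G.adj (Fin.castLE hcle i) w := by
          by_contra hno
          push_neg at hno
          have hzero : (G.delete D).degY ⟨w, hwD⟩ = 0 := by
            show ({i : Fin (n-1) | G.adj (Fin.castLE hcle i) w}).ncard = 0
            rw [show {i : Fin (n-1) | G.adj (Fin.castLE hcle i) w} = ∅ from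
              Set.eq_empty_iff_forall_notMem.mpr (fun i => hno i)]
            exact Set.ncard_empty _
          omega
        obtain ⟨i, hadj⟩ := hex
        rcases hchar hn3 w hwD hmem i hadj with ⟨h1, h2, _⟩ | ⟨h1, h2, _⟩
        · exact Or.inl ⟨h1, h2⟩
        · exact Or.inr ⟨(hY' w hwD).1, h2, h1⟩
      refine le_trans (Set.ncard_le_ncard hsub (Set.toFinite _))
        (le_trans (Set.ncard_union_le _ _) ?_)
      have hA : {w : Y | G.degY w = 1 ∧ G.adj ⟨0, by omega⟩ w}.ncard ≤ 1 := by
        rw [Set.ncard_le_one (Set.toFinite _)]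
        intro a ha b hb
        by_contra hab
        exact gB4b (by omega) ⟨0, by omega⟩ a b hab ha.1 hb.1 ha.2 hb.2
      have hB : {w : Y | w ≠ y₀ ∧ (∀ j : Fin n, G.adj j w → n - 2 ≤ j.val) ∧
          G.adj ⟨n - 1, by omega⟩ w}.ncard ≤ 1 := by
        rw [Set.ncard_le_one (Set.toFinite _)]
        intro a ha b hb
        by_contra hab
        exact h3elt hn3 a b hab ha.1 hb.1 ha.2.1 ha.2.2 hb.2.1 hb.2.2
      omega
  · -- B4b: no two pendant vertices share a neighbour
    intro hm2 i w₁ w₂ hne h1 h2 hadj1 hadj2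
    have hn3 : 3 ≤ n := by omega
    have hne' : w₁.val ≠ w₂.val := fun h => hne (Subtype.ext h)
    rcases hchar hn3 w₁.val w₁.prop h1 i hadj1 with ⟨a1, a2, a3⟩ | ⟨b1, b2, b3⟩ <;>
      rcases hchar hn3 w₂.val w₂.prop h2 i hadj2 with ⟨c1, c2, c3⟩ | ⟨d1, d2, d3⟩
    · exact gB4b (by omega) ⟨0, by omega⟩ w₁.val w₂.val hne' a1 c1 a2 c2
    · omega
    · omega
    · exact h3elt hn3 w₁.val w₂.val hne' (hY' w₁.val w₁.prop).1 (hY' w₂.val w₂.prop).1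
        b2 b1 d2 d1
  · -- no pendant vertex at an interior index
    rintro ⟨w', k, hdeg1, hadjk, hk0, hklt⟩
    have hn3 : 3 ≤ n := by have := k.isLt; omega
    rcases hchar hn3 w'.val w'.prop hdeg1 k hadjk with ⟨_, _, h⟩ | ⟨_, _, h⟩ <;> omega
  · -- no maximal interval strictly inside
    rintro ⟨p, q, hp0, hpq, hqlt, hcard, hnoext⟩
    have hplt := p.isLt
    have hql := q.isLt
    have hpqv := Fin.lt_def.mp hpq
    have hn3 : 3 ≤ n := by omega
    have htrans : ∀ a b : Fin (n-1), b.val < n - 1 - 1 →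
        Subtype.val '' ((G.delete D).NIn a b) = G.NIn ⟨a.val, by omega⟩ ⟨b.val, by omega⟩ :=
      fun a b hb => Set.Subset.antisymm (hsubA a b hb) (hsubA' a b hb)
    rw [himgcard, htrans p q hqlt] at hcard
    have haux : ∀ r : ℕ, ∀ p₂ : Fin n, p₂.val ≤ r → 0 < p₂.val → p₂.val < n - 2 →
        (G.NIn p₂ ⟨n - 2, by omega⟩).ncard = (n - 2) - p₂.val + 1 → False := by
      intro r
      induction r with
      | zero => intro p₂ h1 h2 _ _; omega
      | succ r ih =>
        intro p₂ hle h0 hlt hcard2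
        have hnm : ¬ G.IsMaximalInt p₂ ⟨n - 2, by omega⟩ := by
          intro hmx
          exact gM ⟨p₂, ⟨n - 2, by omega⟩, h0, Fin.lt_def.mpr (show p₂.val < n - 2 from hlt),
            show n - 2 < n - 1 by omega, hmx⟩
        have hext : ∃ p' q' : Fin n, 0 < p'.val ∧ q'.val < n - 1 ∧ p' ≤ p₂ ∧
            (⟨n - 2, by omega⟩ : Fin n) ≤ q' ∧
            (p' < p₂ ∨ (⟨n - 2, by omega⟩ : Fin n) < q') ∧
            (G.NIn p' q').ncard = q'.val - p'.val + 1 := by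
          by_contra hno
          exact hnm ⟨hcard2, hno⟩
        obtain ⟨p₃, q₃, h3a, h3b, h3c, h3d, h3e, h3f⟩ := hext
        have hdq : n - 2 ≤ q₃.val := Fin.le_def.mp h3d
        have hq₃ : q₃.val = n - 2 := by omega
        have hp₃ : p₃.val < p₂.val := by
          rcases h3e with h | h
          · exact Fin.lt_def.mp h
          · exfalso
            have hx : n - 2 < q₃.val := Fin.lt_def.mp h
            omega
        refine ih p₃ (by omega) h3a (by omega) ?_
        have hq₃e : q₃ = ⟨n - 2, by omega⟩ := Fin.ext hq₃
        rw [hq₃e] at h3f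
        exact h3f
    have hnm : ¬ G.IsMaximalInt ⟨p.val, by omega⟩ ⟨q.val, by omega⟩ := by
      intro hmx
      exact gM ⟨⟨p.val, by omega⟩, ⟨q.val, by omega⟩, show 0 < p.val from hp0,
        Fin.lt_def.mpr (show p.val < q.val from hpqv), show q.val < n - 1 by omega, hmx⟩
    have hext : ∃ p₁ q₁ : Fin n, 0 < p₁.val ∧ q₁.val < n - 1 ∧
        p₁ ≤ ⟨p.val, by omega⟩ ∧ (⟨q.val, by omega⟩ : Fin n) ≤ q₁ ∧
        (p₁ < ⟨p.val, by omega⟩ ∨ (⟨q.val, by omega⟩ : Fin n) < q₁) ∧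
        (G.NIn p₁ q₁).ncard = q₁.val - p₁.val + 1 := by
      by_contra hno
      exact hnm ⟨hcard, hno⟩
    obtain ⟨p₁, q₁, ha, hb, hc, hd, he, hf⟩ := hext
    have hcv : p₁.val ≤ p.val := Fin.le_def.mp hc
    have hdv : q.val ≤ q₁.val := Fin.le_def.mp hd
    rcases Nat.lt_or_ge q₁.val (n - 2) with hq1 | hq1
    · have hofin : ((G.delete D).NIn ⟨p₁.val, by omega⟩ ⟨q₁.val, by omega⟩).ncard
          = q₁.val - p₁.val + 1 := by
        rw [himgcard, htrans ⟨p₁.val, by omega⟩ ⟨q₁.val, by omega⟩ (show q₁.val < n - 1 - 1 by omega)]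
        exact hf
      have hstrict : (⟨p₁.val, by omega⟩ : Fin (n-1)) < p ∨ q < (⟨q₁.val, by omega⟩ : Fin (n-1)) := by
        rcases he with h | h
        · exact Or.inl (Fin.lt_def.mpr (show p₁.val < p.val from Fin.lt_def.mp h))
        · exact Or.inr (Fin.lt_def.mpr (show q.val < q₁.val from Fin.lt_def.mp h))
      exact hnoext ⟨⟨p₁.val, by omega⟩, ⟨q₁.val, by omega⟩, ha,
        show q₁.val < n - 1 - 1 by omega,
        Fin.le_def.mpr (show p₁.val ≤ p.val from hcv),
        Fin.le_def.mpr (show q.val ≤ q₁.val from hdv), hstrict, hofin⟩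
    · have hq₁e : q₁ = ⟨n - 2, by omega⟩ := Fin.ext (show q₁.val = n - 2 by omega)
      refine haux p₁.val p₁ le_rfl ha (by omega) ?_
      rw [hq₁e] at hf
      exact hf

/-- if `G` is monotone, `y₀` is a neighbor of `x_n` with maximum `left(y₀)`
among neighbors of `x_n`, and we delete `x_n`, `y₀`, and any pendant `Y`-vertex adjacent
to `x_n`, then the resulting graph is again monotone. -/
theorem stmt_9 {n : ℕ} {Y : Type*} [Fintype Y] [DecidableEq Y]
    (G : ConvexBip n Y) (hn : 0 < n)
    (hconn : G.toGraph.Connected) (hmono : G.IsMonotone)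
    (y₀ : Y) (hy₀ : G.adj ⟨n - 1, by omega⟩ y₀)
    -- `left(y₀)` is maximum among neighbors of `x_n`: every neighbor `y` of `x_n` has
    -- a neighbor with index at most any neighbor index of `y₀`
    (hmax : ∀ y : Y, G.adj ⟨n - 1, by omega⟩ y →
        ∀ i : Fin n, G.adj i y₀ → ∃ i' : Fin n, G.adj i' y ∧ i' ≤ i) :
    (G.delete {w : Y | w = y₀ ∨ (G.degY w = 1 ∧ G.adj ⟨n - 1, by omega⟩ w)}).IsMonotone := by
  exact stmt9_aux G hn hconn hmono y₀ hy₀ hmax _ (fun w => Iff.rfl)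
end
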